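/- arXiv:1205.0190 — 8 statements merged into one kernel-verified Lean document; each statement's English description precedes it below -/
import Mathlib

section
/- Let G=(V,E) be a finite graph on vertices {1,...,r}. Define Δ_G(n_1,...,n_r) = Π_{(k,l)∈E} δ(n_k·n_l), where δ(0)=1 and δ(n)=0 for n ≥ 1, and let T_G(x_1,...,x_r) = Σ_{n ∈ ℕ_0^r} Δ_G(n) x^n for |x_j| < 1. Then (1-x_1)(1-x_2)···(1-x_r)·T_G(x) = Σ_{U⊆E} (-1)^{|U|} Π_{j ∈ ver(U)} x_j. -/
open scoped BigOperators

set_option maxHeartbeats 1000000 in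
/-- Product of summable families over a pi type `Fin r → ℕ`. -/
lemma pi_hasSum_prod : ∀ (r : ℕ) (f : Fin r → ℕ → ℂ),
    (∀ i, Summable fun n => ‖f i n‖) →
    (Summable fun n : Fin r → ℕ => ‖∏ i, f i (n i)‖) ∧
    HasSum (fun n : Fin r → ℕ => ∏ i, f i (n i)) (∏ i, ∑' n, f i n) := by
  intro r
  induction r with
  | zero =>
      intro f _
      constructor
      · simp only [Finset.univ_eq_empty, Finset.prod_empty]; exact .of_finite
      · simp only [Finset.univ_eq_empty, Finset.prod_empty]
        have : HasSum (fun _ : Fin 0 → ℕ => (1:ℂ)) (∑ n : Fin 0 → ℕ, 1) := hasSum_fintype _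
        simpa using this
  | succ r ih =>
      intro f hf
      obtain ⟨ihs, ihh⟩ := ih (fun i => f i.succ) (fun i => hf i.succ)
      set e := Fin.consEquiv (fun _ : Fin (r + 1) => ℕ) with he
      obtain ⟨G, hG⟩ : ∃ G : (Fin r → ℕ) → ℂ, G = fun m => ∏ i : Fin r, f i.succ (m i) :=
        ⟨_, rfl⟩
      have key : ∀ p : ℕ × (Fin r → ℕ),
          (∏ i, f i (e p i)) = f 0 p.1 * G p.2 := by
        intro p
        have hep : (e p : Fin (r + 1) → ℕ) = Fin.cons p.1 p.2 := rfl
        rw [Fin.prod_univ_succ, hep, Fin.cons_zero, hG]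
        simp only [Fin.cons_succ]
      have ihs' : Summable fun m : Fin r → ℕ => ‖G m‖ := by rw [hG]; exact ihs
      have ihh' : HasSum G (∏ i : Fin r, ∑' n, f i.succ n) := by rw [hG]; exact ihh
      have hsn : Summable fun p : ℕ × (Fin r → ℕ) => ‖f 0 p.1 * G p.2‖ :=
        Summable.mul_norm (hf 0) ihs'
      have hs2 : Summable fun p : ℕ × (Fin r → ℕ) => f 0 p.1 * G p.2 := hsn.of_norm
      have hh : HasSum (fun p : ℕ × (Fin r → ℕ) => f 0 p.1 * G p.2)
          ((∑' n, f 0 n) * ∏ i : Fin r, ∑' n, f i.succ n) :=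
        HasSum.mul (hf 0).of_norm.hasSum ihh' hs2
      constructor
      · rw [← e.summable_iff]
        refine hsn.congr fun p => ?_
        simp only [Function.comp_apply, key p]
      · rw [← e.hasSum_iff, Fin.prod_univ_succ]
        have hfun : ((fun n : Fin (r + 1) → ℕ => ∏ i, f i (n i)) ∘ e)
            = fun p : ℕ × (Fin r → ℕ) => f 0 p.1 * G p.2 := funext fun p => key p
        rw [hfun]
        exact hh

lemma geom_norm_summable {z : ℂ} (hz : ‖z‖ < 1) (S : Prop) [Decidable S] :
    Summable fun n : ℕ => ‖if S ∧ n = 0 then 0 else z ^ n‖ := by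
  refine Summable.of_nonneg_of_le (fun n => norm_nonneg _) (fun n => ?_)
    (summable_geometric_of_lt_one (norm_nonneg z) hz)
  by_cases h : S ∧ n = 0 <;> simp [h, norm_pow]

lemma geom_tsum_mul {z : ℂ} (hz : ‖z‖ < 1) (S : Prop) [Decidable S] :
    (1 - z) * ∑' n : ℕ, (if S ∧ n = 0 then 0 else z ^ n) = if S then z else 1 := by
  have hne : (1 : ℂ) - z ≠ 0 := by
    intro h
    have : z = 1 := by linear_combination -h
    simp [this] at hz
  by_cases hS : S
  · have h1 : HasSum (fun n : ℕ => (if S ∧ n = 0 then 0 else z ^ n))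
        ((1 - z)⁻¹ - 1) := by
      have hg : HasSum (fun n : ℕ => z ^ n) (1 - z)⁻¹ := hasSum_geometric_of_norm_lt_one hz
      have hd : HasSum (fun n : ℕ => if n = 0 then (1 : ℂ) else 0) 1 := hasSum_ite_eq 0 1
      refine (hg.sub hd).congr_fun fun n => ?_
      by_cases h : n = 0 <;> simp [h, hS]
    rw [h1.tsum_eq, if_pos hS, mul_sub, mul_inv_cancel₀ hne]
    ring
  · have h1 : HasSum (fun n : ℕ => (if S ∧ n = 0 then 0 else z ^ n)) (1 - z)⁻¹ := by
      refine (hasSum_geometric_of_norm_lt_one hz).congr_fun fun n => ?_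
      simp [hS]
    rw [h1.tsum_eq, if_neg hS, mul_inv_cancel₀ hne]

/-- The vertex set of a subset `U` of edges: all vertices adjacent to some edge of `U`. -/
def verSet {r : ℕ} (U : Finset (Fin r × Fin r)) : Finset (Fin r) :=
  U.biUnion (fun e => {e.1, e.2})

/-- Lemma (prop4): with `Δ_G(n) = ∏_{(k,l) ∈ E} δ(n_k n_l)` and
`T_G(x) = ∑_{n ∈ ℕ₀^r} Δ_G(n) xⁿ` for `|x_j| < 1`, one has
`(1-x_1)⋯(1-x_r) T_G(x) = ∑_{U ⊆ E} (-1)^{|U|} ∏_{j ∈ ver U} x_j`. -/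
theorem graph_power_series_identity
    (r : ℕ) (E : Finset (Fin r × Fin r)) (x : Fin r → ℂ)
    (hx : ∀ j, ‖x j‖ < 1) :
    (∏ j, (1 - x j)) *
      (∑' n : Fin r → ℕ,
        if ∀ e ∈ E, n e.1 * n e.2 = 0 then ∏ j, x j ^ n j else 0)
    = ∑ U ∈ E.powerset, (-1 : ℂ) ^ U.card * ∏ j ∈ verSet U, x j := by
  classical
  -- the family of summands attached to a subset of vertices
  set F : Finset (Fin r) → Fin r → ℕ → ℂ :=
    fun S j n => if j ∈ S ∧ n = 0 then 0 else x j ^ n with hF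
  have hFsum : ∀ (S : Finset (Fin r)) (j : Fin r), Summable fun n => ‖F S j n‖ :=
    fun S j => geom_norm_summable (hx j) (j ∈ S)
  -- pointwise inclusion-exclusion identity
  have hpoint : ∀ n : Fin r → ℕ,
      (if ∀ e ∈ E, n e.1 * n e.2 = 0 then ∏ j, x j ^ n j else 0)
      = ∑ U ∈ E.powerset, (-1 : ℂ) ^ U.card * ∏ j, F (verSet U) j (n j) := by
    intro n
    have hprodF : ∀ U : Finset (Fin r × Fin r),
        (∏ j, F (verSet U) j (n j))
        = (if ∀ j ∈ verSet U, n j ≠ 0 then (1 : ℂ) else 0) * ∏ j, x j ^ n j := by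
      intro U
      by_cases h : ∀ j ∈ verSet U, n j ≠ 0
      · rw [if_pos h, one_mul]
        refine Finset.prod_congr rfl fun j _ => ?_
        have : ¬(j ∈ verSet U ∧ n j = 0) := by
          rintro ⟨hj, hnj⟩; exact h j hj hnj
        simp [hF, this]
      · rw [if_neg h, zero_mul]
        push_neg at h
        obtain ⟨j, hj, hnj⟩ := h
        refine Finset.prod_eq_zero (Finset.mem_univ j) ?_
        simp [hF, hj, hnj]
    -- indicator of the condition as a product over edges
    have hind : (if ∀ e ∈ E, n e.1 * n e.2 = 0 then (1 : ℂ) else 0)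
        = ∏ e ∈ E, ((if n e.1 ≠ 0 ∧ n e.2 ≠ 0 then (-1 : ℂ) else 0) + 1) := by
      by_cases h : ∀ e ∈ E, n e.1 * n e.2 = 0
      · rw [if_pos h]
        symm
        refine Finset.prod_eq_one fun e he => ?_
        have : ¬(n e.1 ≠ 0 ∧ n e.2 ≠ 0) := by
          rintro ⟨h1, h2⟩
          exact (mul_ne_zero h1 h2) (h e he)
        simp [this]
      · rw [if_neg h]
        push_neg at h
        obtain ⟨e, he, hne⟩ := h
        refine (Finset.prod_eq_zero he ?_).symm
        have h1 : n e.1 ≠ 0 := fun h0 => hne (by simp [h0])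
        have h2 : n e.2 ≠ 0 := fun h0 => hne (by simp [h0])
        simp [h1, h2]
    -- expand via prod_add
    have hexp : (∏ e ∈ E, ((if n e.1 ≠ 0 ∧ n e.2 ≠ 0 then (-1 : ℂ) else 0) + 1))
        = ∑ U ∈ E.powerset, (∏ e ∈ U, (if n e.1 ≠ 0 ∧ n e.2 ≠ 0 then (-1 : ℂ) else 0)) := by
      rw [Finset.prod_add]
      exact Finset.sum_congr rfl fun U _ => by simp
    have hUind : ∀ U ∈ E.powerset,
        (∏ e ∈ U, (if n e.1 ≠ 0 ∧ n e.2 ≠ 0 then (-1 : ℂ) else 0))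
        = (-1 : ℂ) ^ U.card * (if ∀ j ∈ verSet U, n j ≠ 0 then (1 : ℂ) else 0) := by
      intro U _
      by_cases h : ∀ j ∈ verSet U, n j ≠ 0
      · rw [if_pos h, mul_one,
          show ((-1 : ℂ) ^ U.card) = ∏ _e ∈ U, (-1 : ℂ) from (Finset.prod_const _).symm]
        refine Finset.prod_congr rfl fun e heU => ?_
        have h1 : n e.1 ≠ 0 := h e.1 (by simp [verSet, Finset.mem_biUnion]; exact ⟨e.1, e.2, heU, Or.inl rfl⟩)
        have h2 : n e.2 ≠ 0 := h e.2 (by simp [verSet, Finset.mem_biUnion]; exact ⟨e.1, e.2, heU, Or.inr rfl⟩)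
        simp [h1, h2]
      · rw [if_neg h, mul_zero]
        push_neg at h
        obtain ⟨j, hj, hnj⟩ := h
        simp only [verSet, Finset.mem_biUnion] at hj
        obtain ⟨e, heU, hje⟩ := hj
        refine Finset.prod_eq_zero heU ?_
        simp only [Finset.mem_insert, Finset.mem_singleton] at hje
        rcases hje with h' | h' <;> · subst h'; simp [hnj]
    calc (if ∀ e ∈ E, n e.1 * n e.2 = 0 then ∏ j, x j ^ n j else 0)
        = (if ∀ e ∈ E, n e.1 * n e.2 = 0 then (1 : ℂ) else 0) * ∏ j, x j ^ n j := by
          by_cases h : ∀ e ∈ E, n e.1 * n e.2 = 0 <;> simp [h]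
      _ = (∑ U ∈ E.powerset, (∏ e ∈ U, (if n e.1 ≠ 0 ∧ n e.2 ≠ 0 then (-1 : ℂ) else 0)))
            * ∏ j, x j ^ n j := by rw [hind, hexp]
      _ = ∑ U ∈ E.powerset, (-1 : ℂ) ^ U.card * ∏ j, F (verSet U) j (n j) := by
          rw [Finset.sum_mul]
          refine Finset.sum_congr rfl fun U hU => ?_
          rw [hUind U hU, hprodF U]
          ring
  -- rewrite the tsum and exchange with the finite sum
  have hterm : ∀ U ∈ E.powerset,
      Summable fun n : Fin r → ℕ => (-1 : ℂ) ^ U.card * ∏ j, F (verSet U) j (n j) :=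
    fun U _ => ((pi_hasSum_prod r (F (verSet U)) (hFsum (verSet U))).1.of_norm).mul_left _
  have hswap : (∑' n : Fin r → ℕ,
        if ∀ e ∈ E, n e.1 * n e.2 = 0 then ∏ j, x j ^ n j else 0)
      = ∑ U ∈ E.powerset, (-1 : ℂ) ^ U.card * ∑' n : Fin r → ℕ, ∏ j, F (verSet U) j (n j) := by
    rw [tsum_congr hpoint, Summable.tsum_finsetSum hterm]
    exact Finset.sum_congr rfl fun U _ => tsum_mul_left
  rw [hswap, Finset.mul_sum]
  refine Finset.sum_congr rfl fun U hU => ?_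
  rw [(pi_hasSum_prod r (F (verSet U)) (hFsum (verSet U))).2.tsum_eq]
  have : (∏ j, (1 - x j)) * ((-1 : ℂ) ^ U.card * ∏ j, ∑' n, F (verSet U) j n)
      = (-1 : ℂ) ^ U.card * ∏ j, ((1 - x j) * ∑' n, F (verSet U) j n) := by
    rw [Finset.prod_mul_distrib]; ring
  rw [this]
  congr 1
  have : ∀ j, (1 - x j) * ∑' n, F (verSet U) j n = if j ∈ verSet U then x j else 1 :=
    fun j => geom_tsum_mul (hx j) (j ∈ verSet U)
  rw [Finset.prod_congr rfl (fun j _ => this j), Finset.prod_ite_mem,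
    Finset.univ_inter]
end

section
/- Let 𝒜 be the set of 10-tuples (u, u_1, u_2, u_3, v_1, v_2, v_3, w_1, w_2, w_3) with u, u_j positive integers, w_j nonzero integers, v_j integers, satisfying u_1 v_1 + u_2 v_2 + u_3 v_3 = 0, gcd(u_i, u_j) = 1 for i ≠ j, gcd(u_j, w_j) = 1 for each j, and gcd(w_i, w_j) = 1 for i ≠ j. Let 𝒲 be the set of integer sextuples (x_1, x_2, x_3, y_1, y_2, y_3) with x_1 y_2 y_3 + x_2 y_1 y_3 + x_3 y_1 y_2 = 0 and y_1 y_2 y_3 ≠ 0. Then the map sending a 10-tuple to (x_j, y_j) with x_j = w_j v_j, y_1 = u u_2 u_3 w_1, y_2 = u u_1 u_3 w_2, y_3 = u u_1 u_2 w_3 is a bijection from 𝒜 to 𝒲. -/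
/-- The descent set `𝒜` of 10-tuples `(u, u₁, u₂, u₃, v₁, v₂, v₃, w₁, w₂, w₃)`. -/
def descentA : Set (ℤ × (Fin 3 → ℤ) × (Fin 3 → ℤ) × (Fin 3 → ℤ)) :=
  {t | 0 < t.1 ∧ (∀ j, 0 < t.2.1 j) ∧ (∀ j, t.2.2.2 j ≠ 0) ∧
    t.2.1 0 * t.2.2.1 0 + t.2.1 1 * t.2.2.1 1 + t.2.1 2 * t.2.2.1 2 = 0 ∧
    (∀ i j, i ≠ j → IsCoprime (t.2.1 i) (t.2.1 j)) ∧
    (∀ j, IsCoprime (t.2.1 j) (t.2.2.2 j)) ∧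
    (∀ i j, i ≠ j → IsCoprime (t.2.2.2 i) (t.2.2.2 j))}

/-- The set `𝒲` of integral solutions of the cubic with nonzero `y`-coordinates. -/
def solW : Set ((Fin 3 → ℤ) × (Fin 3 → ℤ)) :=
  {p | p.1 0 * p.2 1 * p.2 2 + p.1 1 * p.2 0 * p.2 2 + p.1 2 * p.2 0 * p.2 1 = 0 ∧
    p.2 0 * p.2 1 * p.2 2 ≠ 0}

/-- The parametrizing map `x_j = w_j v_j`, `y₁ = u u₂ u₃ w₁`, `y₂ = u u₁ u₃ w₂`,
`y₃ = u u₁ u₂ w₃`. -/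
def descentMap (t : ℤ × (Fin 3 → ℤ) × (Fin 3 → ℤ) × (Fin 3 → ℤ)) :
    (Fin 3 → ℤ) × (Fin 3 → ℤ) :=
  (fun j => t.2.2.2 j * t.2.2.1 j,
   ![t.1 * t.2.1 1 * t.2.1 2 * t.2.2.2 0,
     t.1 * t.2.1 0 * t.2.1 2 * t.2.2.2 1,
     t.1 * t.2.1 0 * t.2.1 1 * t.2.2.2 2])

/-- If every common divisor of `a` and `b` divides `1`, they are coprime. -/
lemma int_coprime_of_forall {a b : ℤ} (h : ∀ d : ℤ, d ∣ a → d ∣ b → d ∣ 1) :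
    IsCoprime a b := by
  rw [Int.isCoprime_iff_gcd_eq_one]
  have h1 : ((Int.gcd a b : ℤ)) ∣ 1 := h _ (Int.gcd_dvd_left _ _) (Int.gcd_dvd_right _ _)
  exact Nat.dvd_one.mp (by exact_mod_cast h1)

/-- gcd of `u*A` and `u*B` for coprime `A B` and positive `u` is `u`. -/
lemma gcd_mul_of_coprime {u A B : ℤ} (hu : 0 < u) (h : IsCoprime A B) :
    (Int.gcd (u * A) (u * B) : ℤ) = u := by
  rw [Int.gcd_mul_left, Int.isCoprime_iff_gcd_eq_one.mp h, mul_one, Int.natAbs_of_nonneg hu.le]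

/-- Surjectivity core: every point of `𝒲` has a preimage in `𝒜`. -/
lemma descent_surj_aux (x y : Fin 3 → ℤ)
    (hrel : x 0 * y 1 * y 2 + x 1 * y 0 * y 2 + x 2 * y 0 * y 1 = 0)
    (hy : y 0 * y 1 * y 2 ≠ 0) :
    ∃ t ∈ descentA, descentMap t = (x, y) := by
  have hy0 : y 0 ≠ 0 := fun h => hy (by rw [h]; ring)
  have hy1 : y 1 ≠ 0 := fun h => hy (by rw [h]; ring)
  have hy2 : y 2 ≠ 0 := fun h => hy (by rw [h]; ring)
  -- the common gcd
  set G : ℕ := Int.gcd (y 0) (Int.gcd (y 1) (y 2)) with hGdef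
  have hGpos : 0 < G := Int.gcd_pos_of_ne_zero_left _ hy0
  have hGne : (G : ℤ) ≠ 0 := by exact_mod_cast hGpos.ne'
  have hGd0 : (G : ℤ) ∣ y 0 := Int.gcd_dvd_left _ _
  have hGd1 : (G : ℤ) ∣ y 1 := (Int.gcd_dvd_right _ _).trans (Int.gcd_dvd_left _ _)
  have hGd2 : (G : ℤ) ∣ y 2 := (Int.gcd_dvd_right _ _).trans (Int.gcd_dvd_right _ _)
  set z : Fin 3 → ℤ := fun i => y i / (G : ℤ) with hzdef
  have hz0 : y 0 = (G : ℤ) * z 0 := (Int.mul_ediv_cancel' hGd0).symm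
  have hz1 : y 1 = (G : ℤ) * z 1 := (Int.mul_ediv_cancel' hGd1).symm
  have hz2 : y 2 = (G : ℤ) * z 2 := (Int.mul_ediv_cancel' hGd2).symm
  have hz0ne : z 0 ≠ 0 := fun h => hy0 (by rw [hz0, h, mul_zero])
  have hz1ne : z 1 ≠ 0 := fun h => hy1 (by rw [hz1, h, mul_zero])
  have hz2ne : z 2 ≠ 0 := fun h => hy2 (by rw [hz2, h, mul_zero])
  -- triple coprimality of the z's
  have htrip : ∀ d : ℤ, d ∣ z 0 → d ∣ z 1 → d ∣ z 2 → d ∣ 1 := by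
    intro d h0 h1 h2
    have hd : (G : ℤ) * d ∣ (G : ℤ) := by
      refine Int.dvd_coe_gcd ?_ (Int.dvd_coe_gcd ?_ ?_)
      · rw [hz0]; exact mul_dvd_mul_left _ h0
      · rw [hz1]; exact mul_dvd_mul_left _ h1
      · rw [hz2]; exact mul_dvd_mul_left _ h2
    have := (mul_dvd_mul_iff_left hGne).mp
      (show (G : ℤ) * d ∣ (G : ℤ) * 1 by simpa using hd)
    exact this
  -- the pairwise gcds
  set U0 : ℕ := Int.gcd (z 1) (z 2) with hU0def
  set U1 : ℕ := Int.gcd (z 0) (z 2) with hU1def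
  set U2 : ℕ := Int.gcd (z 0) (z 1) with hU2def
  have hU0pos : (0 : ℤ) < U0 := by exact_mod_cast Int.gcd_pos_of_ne_zero_left _ hz1ne
  have hU1pos : (0 : ℤ) < U1 := by exact_mod_cast Int.gcd_pos_of_ne_zero_left _ hz0ne
  have hU2pos : (0 : ℤ) < U2 := by exact_mod_cast Int.gcd_pos_of_ne_zero_left _ hz0ne
  have hU0d1 : (U0 : ℤ) ∣ z 1 := Int.gcd_dvd_left _ _
  have hU0d2 : (U0 : ℤ) ∣ z 2 := Int.gcd_dvd_right _ _
  have hU1d0 : (U1 : ℤ) ∣ z 0 := Int.gcd_dvd_left _ _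
  have hU1d2 : (U1 : ℤ) ∣ z 2 := Int.gcd_dvd_right _ _
  have hU2d0 : (U2 : ℤ) ∣ z 0 := Int.gcd_dvd_left _ _
  have hU2d1 : (U2 : ℤ) ∣ z 1 := Int.gcd_dvd_right _ _
  have hU01 : IsCoprime (U0 : ℤ) (U1 : ℤ) :=
    int_coprime_of_forall fun d h0 h1 =>
      htrip d (h1.trans hU1d0) (h0.trans hU0d1) (h0.trans hU0d2)
  have hU02 : IsCoprime (U0 : ℤ) (U2 : ℤ) :=
    int_coprime_of_forall fun d h0 h2 =>
      htrip d (h2.trans hU2d0) (h0.trans hU0d1) (h0.trans hU0d2)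
  have hU12 : IsCoprime (U1 : ℤ) (U2 : ℤ) :=
    int_coprime_of_forall fun d h1 h2 =>
      htrip d (h1.trans hU1d0) (h2.trans hU2d1) (h1.trans hU1d2)
  -- the w's
  have hd0 : ((U1 : ℤ) * (U2 : ℤ)) ∣ z 0 := hU12.mul_dvd hU1d0 hU2d0
  have hd1 : ((U0 : ℤ) * (U2 : ℤ)) ∣ z 1 := hU02.mul_dvd hU0d1 hU2d1
  have hd2 : ((U0 : ℤ) * (U1 : ℤ)) ∣ z 2 := hU01.mul_dvd hU0d2 hU1d2
  set w0 : ℤ := z 0 / ((U1 : ℤ) * (U2 : ℤ)) with hw0def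
  set w1 : ℤ := z 1 / ((U0 : ℤ) * (U2 : ℤ)) with hw1def
  set w2 : ℤ := z 2 / ((U0 : ℤ) * (U1 : ℤ)) with hw2def
  have hw0 : z 0 = (U1 : ℤ) * (U2 : ℤ) * w0 := (Int.mul_ediv_cancel' hd0).symm
  have hw1 : z 1 = (U0 : ℤ) * (U2 : ℤ) * w1 := (Int.mul_ediv_cancel' hd1).symm
  have hw2 : z 2 = (U0 : ℤ) * (U1 : ℤ) * w2 := (Int.mul_ediv_cancel' hd2).symm
  have hw0ne : w0 ≠ 0 := fun h => hz0ne (by rw [hw0, h, mul_zero])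
  have hw1ne : w1 ≠ 0 := fun h => hz1ne (by rw [hw1, h, mul_zero])
  have hw2ne : w2 ≠ 0 := fun h => hz2ne (by rw [hw2, h, mul_zero])
  have hw0dz : w0 ∣ z 0 := Dvd.intro_left _ hw0.symm
  have hw1dz : w1 ∣ z 1 := Dvd.intro_left _ hw1.symm
  have hw2dz : w2 ∣ z 2 := Dvd.intro_left _ hw2.symm
  -- coprimality of u_j and w_j
  have hU0w0 : IsCoprime (U0 : ℤ) w0 :=
    int_coprime_of_forall fun d h0 h1 =>
      htrip d (h1.trans hw0dz) (h0.trans hU0d1) (h0.trans hU0d2)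
  have hU1w1 : IsCoprime (U1 : ℤ) w1 :=
    int_coprime_of_forall fun d h0 h1 =>
      htrip d (h0.trans hU1d0) (h1.trans hw1dz) (h0.trans hU1d2)
  have hU2w2 : IsCoprime (U2 : ℤ) w2 :=
    int_coprime_of_forall fun d h0 h1 =>
      htrip d (h0.trans hU2d0) (h0.trans hU2d1) (h1.trans hw2dz)
  -- pairwise coprimality of the w's
  have hgzpos01 : 0 < Int.gcd (z 0) (z 1) := Int.gcd_pos_of_ne_zero_left _ hz0ne
  have hgzpos02 : 0 < Int.gcd (z 0) (z 2) := Int.gcd_pos_of_ne_zero_left _ hz0ne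
  have hgzpos12 : 0 < Int.gcd (z 1) (z 2) := Int.gcd_pos_of_ne_zero_left _ hz1ne
  have hw01 : IsCoprime w0 w1 := by
    have h := Int.gcd_div_gcd_div_gcd hgzpos01
    have e0 : z 0 / (U2 : ℤ) = (U1 : ℤ) * w0 := by
      rw [show z 0 = (U2 : ℤ) * ((U1 : ℤ) * w0) from by rw [hw0]; ring]
      exact Int.mul_ediv_cancel_left _ hU2pos.ne'
    have e1 : z 1 / (U2 : ℤ) = (U0 : ℤ) * w1 := by
      rw [show z 1 = (U2 : ℤ) * ((U0 : ℤ) * w1) from by rw [hw1]; ring]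
      exact Int.mul_ediv_cancel_left _ hU2pos.ne'
    rw [← hU2def, e0, e1] at h
    exact (Int.isCoprime_iff_gcd_eq_one.mpr h).of_mul_left_right.of_mul_right_right
  have hw02 : IsCoprime w0 w2 := by
    have h := Int.gcd_div_gcd_div_gcd hgzpos02
    have e0 : z 0 / (U1 : ℤ) = (U2 : ℤ) * w0 := by
      rw [show z 0 = (U1 : ℤ) * ((U2 : ℤ) * w0) from by rw [hw0]; ring]
      exact Int.mul_ediv_cancel_left _ hU1pos.ne'
    have e1 : z 2 / (U1 : ℤ) = (U0 : ℤ) * w2 := by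
      rw [show z 2 = (U1 : ℤ) * ((U0 : ℤ) * w2) from by rw [hw2]; ring]
      exact Int.mul_ediv_cancel_left _ hU1pos.ne'
    rw [← hU1def, e0, e1] at h
    exact (Int.isCoprime_iff_gcd_eq_one.mpr h).of_mul_left_right.of_mul_right_right
  have hw12 : IsCoprime w1 w2 := by
    have h := Int.gcd_div_gcd_div_gcd hgzpos12
    have e0 : z 1 / (U0 : ℤ) = (U2 : ℤ) * w1 := by
      rw [show z 1 = (U0 : ℤ) * ((U2 : ℤ) * w1) from by rw [hw1]; ring]
      exact Int.mul_ediv_cancel_left _ hU0pos.ne'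
    have e1 : z 2 / (U0 : ℤ) = (U1 : ℤ) * w2 := by
      rw [show z 2 = (U0 : ℤ) * ((U1 : ℤ) * w2) from by rw [hw2]; ring]
      exact Int.mul_ediv_cancel_left _ hU0pos.ne'
    rw [← hU0def, e0, e1] at h
    exact (Int.isCoprime_iff_gcd_eq_one.mpr h).of_mul_left_right.of_mul_right_right
  -- full decompositions of the y's
  have hy0e : y 0 = (G : ℤ) * ((U1 : ℤ) * (U2 : ℤ) * w0) := by rw [hz0, hw0]
  have hy1e : y 1 = (G : ℤ) * ((U0 : ℤ) * (U2 : ℤ) * w1) := by rw [hz1, hw1]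
  have hy2e : y 2 = (G : ℤ) * ((U0 : ℤ) * (U1 : ℤ) * w2) := by rw [hz2, hw2]
  -- the reduced relation
  rw [hy0e, hy1e, hy2e] at hrel
  have hAne : ((G : ℤ) ^ 2 * U0 * U1 * U2) ≠ 0 :=
    mul_ne_zero (mul_ne_zero (mul_ne_zero (pow_ne_zero 2 hGne) hU0pos.ne') hU1pos.ne')
      hU2pos.ne'
  have hE : x 0 * U0 * w1 * w2 + x 1 * U1 * w0 * w2 + x 2 * U2 * w0 * w1 = 0 := by
    apply mul_left_cancel₀ hAne
    rw [mul_zero]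
    linear_combination hrel
  -- divisibility of the x's by the w's
  have hwx0 : w0 ∣ x 0 := by
    have hdvd : w0 ∣ x 0 * ((U0 : ℤ) * (w1 * w2)) :=
      ⟨-(x 1 * U1 * w2 + x 2 * U2 * w1), by linear_combination hE⟩
    exact ((hU0w0.symm).mul_right (hw01.mul_right hw02)).dvd_of_dvd_mul_right hdvd
  have hwx1 : w1 ∣ x 1 := by
    have hdvd : w1 ∣ x 1 * ((U1 : ℤ) * (w0 * w2)) :=
      ⟨-(x 0 * U0 * w2 + x 2 * U2 * w0), by linear_combination hE⟩
    exact ((hU1w1.symm).mul_right ((hw01.symm).mul_right hw12)).dvd_of_dvd_mul_right hdvd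
  have hwx2 : w2 ∣ x 2 := by
    have hdvd : w2 ∣ x 2 * ((U2 : ℤ) * (w0 * w1)) :=
      ⟨-(x 0 * U0 * w1 + x 1 * U1 * w0), by linear_combination hE⟩
    exact ((hU2w2.symm).mul_right ((hw02.symm).mul_right hw12.symm)).dvd_of_dvd_mul_right hdvd
  set v0 : ℤ := x 0 / w0 with hv0def
  set v1 : ℤ := x 1 / w1 with hv1def
  set v2 : ℤ := x 2 / w2 with hv2def
  have hx0 : x 0 = w0 * v0 := (Int.mul_ediv_cancel' hwx0).symm
  have hx1 : x 1 = w1 * v1 := (Int.mul_ediv_cancel' hwx1).symm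
  have hx2 : x 2 = w2 * v2 := (Int.mul_ediv_cancel' hwx2).symm
  rw [hx0, hx1, hx2] at hE
  have hwwwne : w0 * w1 * w2 ≠ 0 := mul_ne_zero (mul_ne_zero hw0ne hw1ne) hw2ne
  have hvrel : (U0 : ℤ) * v0 + (U1 : ℤ) * v1 + (U2 : ℤ) * v2 = 0 := by
    apply mul_left_cancel₀ hwwwne
    rw [mul_zero]
    linear_combination hE
  -- assemble the tuple
  refine ⟨((G : ℤ), ![(U0 : ℤ), (U1 : ℤ), (U2 : ℤ)], ![v0, v1, v2], ![w0, w1, w2]), ?_, ?_⟩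
  · refine ⟨show (0:ℤ) < (G:ℤ) by exact_mod_cast hGpos, ?_, ?_, ?_, ?_, ?_, ?_⟩
    · intro j
      fin_cases j <;> first | simpa using hU0pos | simpa using hU1pos | simpa using hU2pos
    · intro j
      fin_cases j <;> first | simpa using hw0ne | simpa using hw1ne | simpa using hw2ne
    · simpa using hvrel
    · intro i j hij
      fin_cases i <;> fin_cases j <;>
        first
          | exact absurd rfl hij
          | simpa using hU01
          | simpa using hU02
          | simpa using hU12
          | simpa using hU01.symm
          | simpa using hU02.symm
          | simpa using hU12.symm
    · intro j
      fin_cases j <;> first | simpa using hU0w0 | simpa using hU1w1 | simpa using hU2w2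
    · intro i j hij
      fin_cases i <;> fin_cases j <;>
        first
          | exact absurd rfl hij
          | simpa using hw01
          | simpa using hw02
          | simpa using hw12
          | simpa using hw01.symm
          | simpa using hw02.symm
          | simpa using hw12.symm
  · unfold descentMap
    simp only [Prod.mk.injEq]
    constructor
    · funext j
      fin_cases j
      · exact (show w0 * v0 = x 0 from hx0.symm)
      · exact (show w1 * v1 = x 1 from hx1.symm)
      · exact (show w2 * v2 = x 2 from hx2.symm)
    · funext j
      fin_cases j
      · show (G : ℤ) * U1 * U2 * w0 = y 0
        rw [hy0e]; ring
      · show (G : ℤ) * U0 * U2 * w1 = y 1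
        rw [hy1e]; ring
      · show (G : ℤ) * U0 * U1 * w2 = y 2
        rw [hy2e]; ring

/-- Lemma 1: the map is a bijection from `𝒜` onto `𝒲`. -/
theorem descent_bijection : Set.BijOn descentMap descentA solW := by
  refine ⟨?_, ?_, ?_⟩
  · -- MapsTo
    rintro ⟨u, a, v, w⟩ ⟨hu, ha, hw, heq, haa, haw, hww⟩
    refine ⟨?_, ?_⟩
    · simp only [descentMap, Matrix.cons_val_zero, Matrix.cons_val_one, Matrix.head_cons,
        Matrix.cons_val_two, Matrix.tail_cons]
      linear_combination (u ^ 2 * a 0 * a 1 * a 2 * w 0 * w 1 * w 2) * heq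
    · simp only [descentMap, Matrix.cons_val_zero, Matrix.cons_val_one, Matrix.head_cons,
        Matrix.cons_val_two, Matrix.tail_cons]
      have hune : u ≠ 0 := hu.ne'
      exact mul_ne_zero (mul_ne_zero
        (mul_ne_zero (mul_ne_zero (mul_ne_zero hune (ha 1).ne') (ha 2).ne') (hw 0))
        (mul_ne_zero (mul_ne_zero (mul_ne_zero hune (ha 0).ne') (ha 2).ne') (hw 1)))
        (mul_ne_zero (mul_ne_zero (mul_ne_zero hune (ha 0).ne') (ha 1).ne') (hw 2))
  · -- InjOn
    rintro ⟨u, a, v, w⟩ ⟨hu, ha, hw, heq, haa, haw, hww⟩ ⟨u', a', v', w'⟩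
      ⟨hu', ha', hw', heq', haa', haw', hww'⟩ h
    have hx : ∀ j : Fin 3, w j * v j = w' j * v' j := fun j =>
      congrFun (congrArg Prod.fst h) j
    have hyy := congrArg Prod.snd h
    have hyE0 : u * a 1 * a 2 * w 0 = u' * a' 1 * a' 2 * w' 0 := by
      have := congrFun hyy 0
      simpa only [descentMap, Matrix.cons_val_zero] using this
    have hyE1 : u * a 0 * a 2 * w 1 = u' * a' 0 * a' 2 * w' 1 := by
      have := congrFun hyy 1
      simpa only [descentMap, Matrix.cons_val_one, Matrix.head_cons, Matrix.cons_val_zero] using this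
    have hyE2 : u * a 0 * a 1 * w 2 = u' * a' 0 * a' 1 * w' 2 := by
      have := congrFun hyy 2
      simpa only [descentMap, Matrix.cons_val_two, Matrix.tail_cons, Matrix.head_cons]
        using this
    -- recover u * a j as gcds of pairs of y's
    have g0 : u * a 0 = u' * a' 0 := by
      have e : (Int.gcd (u * a 0 * a 2 * w 1) (u * a 0 * a 1 * w 2) : ℤ) = u * a 0 := by
        rw [show u * a 0 * a 2 * w 1 = u * a 0 * (a 2 * w 1) from by ring,
            show u * a 0 * a 1 * w 2 = u * a 0 * (a 1 * w 2) from by ring]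
        exact gcd_mul_of_coprime (mul_pos hu (ha 0))
          (((haa 2 1 (by decide)).mul_right (haw 2)).mul_left
            (((haw 1).symm).mul_right (hww 1 2 (by decide))))
      have e' : (Int.gcd (u' * a' 0 * a' 2 * w' 1) (u' * a' 0 * a' 1 * w' 2) : ℤ)
          = u' * a' 0 := by
        rw [show u' * a' 0 * a' 2 * w' 1 = u' * a' 0 * (a' 2 * w' 1) from by ring,
            show u' * a' 0 * a' 1 * w' 2 = u' * a' 0 * (a' 1 * w' 2) from by ring]
        exact gcd_mul_of_coprime (mul_pos hu' (ha' 0))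
          (((haa' 2 1 (by decide)).mul_right (haw' 2)).mul_left
            (((haw' 1).symm).mul_right (hww' 1 2 (by decide))))
      rw [← e, ← e', hyE1, hyE2]
    have g1 : u * a 1 = u' * a' 1 := by
      have e : (Int.gcd (u * a 1 * a 2 * w 0) (u * a 0 * a 1 * w 2) : ℤ) = u * a 1 := by
        rw [show u * a 1 * a 2 * w 0 = u * a 1 * (a 2 * w 0) from by ring,
            show u * a 0 * a 1 * w 2 = u * a 1 * (a 0 * w 2) from by ring]
        exact gcd_mul_of_coprime (mul_pos hu (ha 1))
          (((haa 2 0 (by decide)).mul_right (haw 2)).mul_left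
            (((haw 0).symm).mul_right (hww 0 2 (by decide))))
      have e' : (Int.gcd (u' * a' 1 * a' 2 * w' 0) (u' * a' 0 * a' 1 * w' 2) : ℤ)
          = u' * a' 1 := by
        rw [show u' * a' 1 * a' 2 * w' 0 = u' * a' 1 * (a' 2 * w' 0) from by ring,
            show u' * a' 0 * a' 1 * w' 2 = u' * a' 1 * (a' 0 * w' 2) from by ring]
        exact gcd_mul_of_coprime (mul_pos hu' (ha' 1))
          (((haa' 2 0 (by decide)).mul_right (haw' 2)).mul_left
            (((haw' 0).symm).mul_right (hww' 0 2 (by decide))))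
      have hyE0' : u * a 1 * a 2 * w 0 = u' * a' 1 * a' 2 * w' 0 := hyE0
      rw [← e, ← e', hyE0', hyE2]
    have g2 : u * a 2 = u' * a' 2 := by
      have e : (Int.gcd (u * a 1 * a 2 * w 0) (u * a 0 * a 2 * w 1) : ℤ) = u * a 2 := by
        rw [show u * a 1 * a 2 * w 0 = u * a 2 * (a 1 * w 0) from by ring,
            show u * a 0 * a 2 * w 1 = u * a 2 * (a 0 * w 1) from by ring]
        exact gcd_mul_of_coprime (mul_pos hu (ha 2))
          (((haa 1 0 (by decide)).mul_right (haw 1)).mul_left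
            (((haw 0).symm).mul_right (hww 0 1 (by decide))))
      have e' : (Int.gcd (u' * a' 1 * a' 2 * w' 0) (u' * a' 0 * a' 2 * w' 1) : ℤ)
          = u' * a' 2 := by
        rw [show u' * a' 1 * a' 2 * w' 0 = u' * a' 2 * (a' 1 * w' 0) from by ring,
            show u' * a' 0 * a' 2 * w' 1 = u' * a' 2 * (a' 0 * w' 1) from by ring]
        exact gcd_mul_of_coprime (mul_pos hu' (ha' 2))
          (((haa' 1 0 (by decide)).mul_right (haw' 1)).mul_left
            (((haw' 0).symm).mul_right (hww' 0 1 (by decide))))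
      rw [← e, ← e', hyE0, hyE1]
    -- recover u
    have huu : u = u' := by
      have e : (Int.gcd (u * a 0) (u * a 1) : ℤ) = u :=
        gcd_mul_of_coprime hu (haa 0 1 (by decide))
      have e' : (Int.gcd (u' * a' 0) (u' * a' 1) : ℤ) = u' :=
        gcd_mul_of_coprime hu' (haa' 0 1 (by decide))
      rw [← e, ← e', g0, g1]
    have ha0e : a 0 = a' 0 := by
      rw [← huu] at g0; exact mul_left_cancel₀ hu.ne' g0
    have ha1e : a 1 = a' 1 := by
      rw [← huu] at g1; exact mul_left_cancel₀ hu.ne' g1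
    have ha2e : a 2 = a' 2 := by
      rw [← huu] at g2; exact mul_left_cancel₀ hu.ne' g2
    have hw0e : w 0 = w' 0 := by
      rw [← huu, ← ha1e, ← ha2e] at hyE0
      exact mul_left_cancel₀
        (mul_ne_zero (mul_ne_zero hu.ne' (ha 1).ne') (ha 2).ne') hyE0
    have hw1e : w 1 = w' 1 := by
      rw [← huu, ← ha0e, ← ha2e] at hyE1
      exact mul_left_cancel₀
        (mul_ne_zero (mul_ne_zero hu.ne' (ha 0).ne') (ha 2).ne') hyE1
    have hw2e : w 2 = w' 2 := by
      rw [← huu, ← ha0e, ← ha1e] at hyE2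
      exact mul_left_cancel₀
        (mul_ne_zero (mul_ne_zero hu.ne' (ha 0).ne') (ha 1).ne') hyE2
    have hv0e : v 0 = v' 0 := by
      have h0 := hx 0; rw [← hw0e] at h0; exact mul_left_cancel₀ (hw 0) h0
    have hv1e : v 1 = v' 1 := by
      have h1 := hx 1; rw [← hw1e] at h1; exact mul_left_cancel₀ (hw 1) h1
    have hv2e : v 2 = v' 2 := by
      have h2 := hx 2; rw [← hw2e] at h2; exact mul_left_cancel₀ (hw 2) h2
    simp only [Prod.mk.injEq]
    refine ⟨huu, ?_, ?_, ?_⟩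
    · funext j; fin_cases j
      · exact ha0e
      · exact ha1e
      · exact ha2e
    · funext j; fin_cases j
      · exact hv0e
      · exact hv1e
      · exact hv2e
    · funext j; fin_cases j
      · exact hw0e
      · exact hw1e
      · exact hw2e
  · -- SurjOn
    rintro ⟨x, y⟩ ⟨h1, h2⟩
    obtain ⟨t, ht, hmap⟩ := descent_surj_aux x y h1 h2
    exact ⟨t, ht, hmap⟩
end

section
/- Let u_1, u_2, u_3 be positive integers that are pairwise coprime. Then every integer solution (v_1, v_2, v_3) of u_1 v_1 + u_2 v_2 + u_3 v_3 = 0 can be written as v_1 = u_2 r_3 - u_3 r_2, v_2 = u_3 r_1 - u_1 r_3, v_3 = u_1 r_2 - u_2 r_1 for some integers r_1, r_2, r_3; moreover r can be chosen with r_1 in any prescribed complete set of residues modulo u_1, and with that normalization the representation is unique. -/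
/-- Lattice parametrization: if `u₁, u₂, u₃` are pairwise coprime positive integers and `S` is
a complete set of residues mod `u₁`, then every integer solution of
`u₁v₁ + u₂v₂ + u₃v₃ = 0` has a unique representation
`v₁ = u₂r₃ - u₃r₂`, `v₂ = u₃r₁ - u₁r₃`, `v₃ = u₁r₂ - u₂r₁` with `r₁ ∈ S`. -/
theorem lattice_parametrization
    (u₁ u₂ u₃ : ℤ) (hu₁ : 0 < u₁) (hu₂ : 0 < u₂) (hu₃ : 0 < u₃)
    (h12 : IsCoprime u₁ u₂) (h13 : IsCoprime u₁ u₃) (h23 : IsCoprime u₂ u₃)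
    (S : Set ℤ) (hS : ∀ m : ℤ, ∃! r, r ∈ S ∧ r ≡ m [ZMOD u₁])
    (v₁ v₂ v₃ : ℤ) (hv : u₁ * v₁ + u₂ * v₂ + u₃ * v₃ = 0) :
    ∃! r : ℤ × ℤ × ℤ, r.1 ∈ S ∧
      v₁ = u₂ * r.2.2 - u₃ * r.2.1 ∧
      v₂ = u₃ * r.1 - u₁ * r.2.2 ∧
      v₃ = u₁ * r.2.1 - u₂ * r.1 := by
  obtain ⟨a, b, hab⟩ := id h13
  obtain ⟨r₁, ⟨hr₁S, hr₁m⟩, hr₁uniq⟩ := hS (b * v₂)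
  have h1 : u₁ ∣ r₁ - b * v₂ := Int.ModEq.dvd hr₁m.symm
  obtain ⟨k, hk⟩ := h1
  have key : u₁ ∣ u₃ * r₁ - v₂ := ⟨u₃ * k - a * v₂, by linear_combination u₃ * hk + v₂ * hab⟩
  obtain ⟨r₃, hr₃⟩ := key
  have key2 : u₁ ∣ u₃ * (v₃ + u₂ * r₁) := ⟨u₂ * r₃ - v₁, by linear_combination u₂ * hr₃ + hv⟩
  have key2' : u₁ ∣ v₃ + u₂ * r₁ := h13.dvd_of_dvd_mul_left key2
  obtain ⟨r₂, hr₂⟩ := key2'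
  refine ⟨(r₁, r₂, r₃), ⟨hr₁S, ?_, by linarith, by linarith⟩, ?_⟩
  · have : u₁ * v₁ = u₁ * (u₂ * r₃ - u₃ * r₂) := by
      linear_combination u₂ * hr₃ - u₃ * hr₂ + hv
    have := mul_left_cancel₀ hu₁.ne' this
    linarith
  · rintro ⟨s₁, s₂, s₃⟩ ⟨hs₁S, he₁, he₂, he₃⟩
    simp only at hs₁S he₁ he₂ he₃ ⊢
    have hs₁ : s₁ = r₁ := by
      apply hr₁uniq
      refine ⟨hs₁S, (Int.modEq_iff_dvd).mpr ⟨-a * s₁ - b * s₃, ?_⟩⟩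
      linear_combination b * he₂ + s₁ * hab
    subst hs₁
    have h3 : s₃ = r₃ := by
      have : u₁ * s₃ = u₁ * r₃ := by linarith
      exact mul_left_cancel₀ hu₁.ne' this
    have h2 : s₂ = r₂ := by
      have : u₁ * s₂ = u₁ * r₂ := by linarith
      exact mul_left_cancel₀ hu₁.ne' this
    simp [h2, h3]
end

section
/- Let A_1, A_2 ≥ 1 be reals, and let u_1, u_2, u_3 be pairwise coprime positive integers with u_3 ≤ A_2. Then the number of integer triples (v_1, v_2, v_3) with u_1 v_1 + u_2 v_2 + u_3 v_3 = 0, |v_1| ≤ A_1 and |v_2| ≤ A_2 is O(A_1 A_2 / u_3), with an absolute implied constant. -/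
/-- Lemma 4: for `A₁, A₂ ≥ 1` and pairwise coprime positive `u₁, u₂, u₃` with `u₃ ≤ A₂`, the
number of integer solutions of `u₁v₁ + u₂v₂ + u₃v₃ = 0` with `|v₁| ≤ A₁`, `|v₂| ≤ A₂` is
`O(A₁A₂/u₃)` with an absolute implied constant. -/
theorem linear_equation_count :
    ∃ C : ℝ, 0 < C ∧
      ∀ (A₁ A₂ : ℝ) (u₁ u₂ u₃ : ℕ),
        1 ≤ A₁ → 1 ≤ A₂ → 0 < u₁ → 0 < u₂ → 0 < u₃ →
        Nat.Coprime u₁ u₂ → Nat.Coprime u₁ u₃ → Nat.Coprime u₂ u₃ →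
        (u₃ : ℝ) ≤ A₂ →
        (Set.ncard {v : ℤ × ℤ × ℤ |
            (u₁ : ℤ) * v.1 + (u₂ : ℤ) * v.2.1 + (u₃ : ℤ) * v.2.2 = 0 ∧
            (|v.1| : ℝ) ≤ A₁ ∧ (|v.2.1| : ℝ) ≤ A₂} : ℝ)
          ≤ C * A₁ * A₂ / u₃ := by
  classical
  refine ⟨12, by norm_num, ?_⟩
  intro A₁ A₂ u₁ u₂ u₃ hA₁ hA₂ hu₁ hu₂ hu₃ h12 h13 h23 hu₃A₂
  set S : Set (ℤ × ℤ × ℤ) := {v : ℤ × ℤ × ℤ |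
      (u₁ : ℤ) * v.1 + (u₂ : ℤ) * v.2.1 + (u₃ : ℤ) * v.2.2 = 0 ∧
      (|v.1| : ℝ) ≤ A₁ ∧ (|v.2.1| : ℝ) ≤ A₂} with hS
  set N₁ : ℤ := ⌊A₁⌋ with hN₁
  set N₂ : ℤ := ⌊A₂⌋ with hN₂
  have hN₁pos : 1 ≤ N₁ := Int.le_floor.mpr (by exact_mod_cast hA₁)
  have hN₂pos : 1 ≤ N₂ := Int.le_floor.mpr (by exact_mod_cast hA₂)
  have hN₁le : (N₁ : ℝ) ≤ A₁ := Int.floor_le A₁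
  have hN₂le : (N₂ : ℝ) ≤ A₂ := Int.floor_le A₂
  have hu₃R : (0:ℝ) < (u₃:ℝ) := by exact_mod_cast hu₃
  have hu₃Z : (0:ℤ) < (u₃:ℤ) := by exact_mod_cast hu₃
  -- bounds on integer division
  have ediv_le : ∀ b : ℤ, ((b / (u₃:ℤ) : ℤ) : ℝ) ≤ (b : ℝ) / (u₃:ℝ) := by
    intro b
    rw [le_div_iff₀ hu₃R]
    have h1 : (u₃:ℤ) * (b / (u₃:ℤ)) + b % (u₃:ℤ) = b := Int.mul_ediv_add_emod b (u₃:ℤ)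
    have h2 : 0 ≤ b % (u₃:ℤ) := Int.emod_nonneg b (by positivity)
    have : (u₃:ℤ) * (b / (u₃:ℤ)) ≤ b := by omega
    calc ((b / (u₃:ℤ) : ℤ) : ℝ) * (u₃:ℝ) = (((u₃:ℤ) * (b / (u₃:ℤ)) : ℤ) : ℝ) := by
          push_cast; ring
      _ ≤ (b : ℝ) := by exact_mod_cast this
  have lt_ediv : ∀ b : ℤ, (b : ℝ) / (u₃:ℝ) - 1 < ((b / (u₃:ℤ) : ℤ) : ℝ) := by
    intro b
    have h1 : (u₃:ℤ) * (b / (u₃:ℤ)) + b % (u₃:ℤ) = b := Int.mul_ediv_add_emod b (u₃:ℤ)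
    have h2 : b % (u₃:ℤ) < (u₃:ℤ) := Int.emod_lt_of_pos b hu₃Z
    have h3 : b < (u₃:ℤ) * (b / (u₃:ℤ)) + (u₃:ℤ) := by omega
    have h3R : (b:ℝ) < (u₃:ℝ) * ((b / (u₃:ℤ) : ℤ) : ℝ) + (u₃:ℝ) := by exact_mod_cast h3
    rw [sub_lt_iff_lt_add, div_lt_iff₀ hu₃R]
    nlinarith
  -- the finite set of (v₁, v₂) pairs
  set F : Finset (ℤ × ℤ) := (Finset.Icc (-N₁) N₁ ×ˢ Finset.Icc (-N₂) N₂).filter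
    (fun p => (u₃:ℤ) ∣ (u₁:ℤ) * p.1 + (u₂:ℤ) * p.2) with hF
  have hcop : IsCoprime ((u₃:ℕ):ℤ) ((u₂:ℕ):ℤ) := by
    rw [Nat.isCoprime_iff_coprime]
    exact h23.symm
  -- the projection is injective on S
  have hinj : Set.InjOn (fun v : ℤ × ℤ × ℤ => (v.1, v.2.1)) S := by
    rintro ⟨a, b, c⟩ ⟨ha, _⟩ ⟨a', b', c'⟩ ⟨ha', _⟩ h
    simp only [Prod.mk.injEq] at h
    obtain ⟨h1, h2⟩ := h
    subst h1; subst h2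
    have : c = c' := by
      have hne : ((u₃:ℤ)) ≠ 0 := by positivity
      have : (u₃:ℤ) * c = (u₃:ℤ) * c' := by linarith
      exact mul_left_cancel₀ hne this
    simp [this]
  have himg : (fun v : ℤ × ℤ × ℤ => (v.1, v.2.1)) '' S ⊆ (F : Set (ℤ × ℤ)) := by
    rintro ⟨a, b⟩ ⟨⟨x, y, z⟩, ⟨heq, hx, hy⟩, hxy⟩
    simp only [Prod.mk.injEq] at hxy
    obtain ⟨h1, h2⟩ := hxy
    subst h1; subst h2
    simp only [hF, Finset.coe_filter, Finset.mem_product, Finset.mem_coe, Set.mem_setOf_eq,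
      Finset.mem_Icc]
    refine ⟨⟨?_, ?_⟩, ⟨-z, by linarith⟩⟩
    · have : |x| ≤ N₁ := Int.le_floor.mpr (by push_cast; exact hx)
      exact abs_le.mp this
    · have : |y| ≤ N₂ := Int.le_floor.mpr (by push_cast; exact hy)
      exact abs_le.mp this
  have hcard1 : S.ncard ≤ F.card := by
    rw [← Set.ncard_image_of_injOn hinj, ← Set.ncard_coe_finset F]
    exact Set.ncard_le_ncard himg F.finite_toSet
  -- fiberwise count
  set M : ℕ := (Finset.Icc ((-N₂) / (u₃:ℤ)) (N₂ / (u₃:ℤ))).card with hM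
  have hfiber : F.card ≤ M * (Finset.Icc (-N₁) N₁).card := by
    apply Finset.card_le_mul_card_image_of_maps_to (f := Prod.fst)
    · intro p hp
      simp only [hF, Finset.mem_filter, Finset.mem_product] at hp
      exact hp.1.1
    · intro a _
      apply Finset.card_le_card_of_injOn (fun p => p.2 / (u₃:ℤ))
      · intro p hp
        simp only [hF, Finset.mem_coe, Finset.mem_filter, Finset.mem_product, Finset.mem_Icc] at hp ⊢
        obtain ⟨⟨⟨_, hb⟩, _⟩, _⟩ := hp
        exact ⟨Int.ediv_le_ediv hu₃Z hb.1, Int.ediv_le_ediv hu₃Z hb.2⟩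
      · rintro ⟨a₁, b₁⟩ hp ⟨a₂, b₂⟩ hq h
        simp only [Finset.mem_coe, Finset.mem_filter, hF, Finset.mem_product] at hp hq
        obtain ⟨⟨_, hd₁⟩, hfst₁⟩ := hp
        obtain ⟨⟨_, hd₂⟩, hfst₂⟩ := hq
        simp only at hfst₁ hfst₂ h
        have haa : a₁ = a₂ := hfst₁.trans hfst₂.symm
        have hd₂' : (u₃:ℤ) ∣ (u₁:ℤ) * a₁ + (u₂:ℤ) * b₂ := haa ▸ hd₂
        have hb : b₁ = b₂ := by
          have hdvd : (u₃:ℤ) ∣ (u₂:ℤ) * (b₁ - b₂) := by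
            have := dvd_sub hd₁ hd₂'
            have heq : ((u₁:ℤ) * a₁ + (u₂:ℤ) * b₁) - ((u₁:ℤ) * a₁ + (u₂:ℤ) * b₂)
                = (u₂:ℤ) * (b₁ - b₂) := by ring
            rwa [heq] at this
          have hdvd2 : (u₃:ℤ) ∣ (b₂ - b₁) :=
            dvd_sub_comm.mp (hcop.dvd_of_dvd_mul_left hdvd)
          have hmod : b₁ % (u₃:ℤ) = b₂ % (u₃:ℤ) := Int.modEq_iff_dvd.mpr hdvd2
          have e1 : (u₃:ℤ) * (b₁ / (u₃:ℤ)) + b₁ % (u₃:ℤ) = b₁ := Int.mul_ediv_add_emod _ _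
          have e2 : (u₃:ℤ) * (b₂ / (u₃:ℤ)) + b₂ % (u₃:ℤ) = b₂ := Int.mul_ediv_add_emod _ _
          have h' : b₁ / (u₃:ℤ) = b₂ / (u₃:ℤ) := h
          have hmul : (u₃:ℤ) * (b₁ / (u₃:ℤ)) = (u₃:ℤ) * (b₂ / (u₃:ℤ)) := by rw [h']
          linarith [e1, e2, hmod, hmul]
        simp [hb, haa]
  -- real bounds on M and the Icc card
  have hMreal : (M : ℝ) ≤ 4 * A₂ / (u₃:ℝ) := by
    have hle : (-N₂) / (u₃:ℤ) ≤ N₂ / (u₃:ℤ) := Int.ediv_le_ediv hu₃Z (by omega)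
    have hMeq : (M : ℤ) = N₂ / (u₃:ℤ) + 1 - (-N₂) / (u₃:ℤ) := by
      rw [hM, Int.card_Icc]
      omega
    have hMR : (M : ℝ) = ((N₂ / (u₃:ℤ) : ℤ) : ℝ) + 1 - (((-N₂) / (u₃:ℤ) : ℤ) : ℝ) := by
      exact_mod_cast congrArg (Int.cast : ℤ → ℝ) hMeq
    have h1 : ((N₂ / (u₃:ℤ) : ℤ) : ℝ) ≤ (N₂:ℝ) / (u₃:ℝ) := ediv_le N₂
    have h2 : ((-N₂ : ℤ) : ℝ) / (u₃:ℝ) - 1 < (((-N₂) / (u₃:ℤ) : ℤ) : ℝ) := lt_ediv (-N₂)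
    have hA₂u : 1 ≤ A₂ / (u₃:ℝ) := (one_le_div hu₃R).mpr hu₃A₂
    have hN₂R : (N₂:ℝ) ≤ A₂ := hN₂le
    have hdiv : (N₂:ℝ) / (u₃:ℝ) ≤ A₂ / (u₃:ℝ) := by gcongr
    push_cast at h2
    rw [hMR]
    have h4 : 4 * A₂ / (u₃:ℝ) = A₂ / (u₃:ℝ) + A₂ / (u₃:ℝ) + A₂ / (u₃:ℝ) + A₂ / (u₃:ℝ) := by
      ring
    rw [h4]
    have h5 : -(((-N₂) / (u₃:ℤ) : ℤ) : ℝ) < (N₂:ℝ) / (u₃:ℝ) + 1 := by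
      have : (-(N₂:ℝ)) / (u₃:ℝ) - 1 < (((-N₂) / (u₃:ℤ) : ℤ) : ℝ) := h2
      have hh : (-(N₂:ℝ)) / (u₃:ℝ) = -((N₂:ℝ) / (u₃:ℝ)) := by ring
      linarith [this]
    linarith
  have hIccreal : ((Finset.Icc (-N₁) N₁).card : ℝ) ≤ 3 * A₁ := by
    have : ((Finset.Icc (-N₁) N₁).card : ℤ) = 2 * N₁ + 1 := by
      rw [Int.card_Icc]; omega
    have hR : ((Finset.Icc (-N₁) N₁).card : ℝ) = 2 * (N₁:ℝ) + 1 := by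
      exact_mod_cast congrArg (Int.cast : ℤ → ℝ) this
    rw [hR]
    have h1 : (1:ℝ) ≤ N₁ := by exact_mod_cast hN₁pos
    linarith
  -- put everything together
  have hScard : (S.ncard : ℝ) ≤ (M : ℝ) * ((Finset.Icc (-N₁) N₁).card : ℝ) := by
    have : (S.ncard : ℝ) ≤ (F.card : ℝ) := by exact_mod_cast hcard1
    have h2 : (F.card : ℝ) ≤ (M : ℝ) * ((Finset.Icc (-N₁) N₁).card : ℝ) := by
      exact_mod_cast hfiber
    linarith
  have hMnn : (0:ℝ) ≤ (M:ℝ) := by positivity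
  have hIccnn : (0:ℝ) ≤ ((Finset.Icc (-N₁) N₁).card : ℝ) := by positivity
  calc (S.ncard : ℝ) ≤ (M : ℝ) * ((Finset.Icc (-N₁) N₁).card : ℝ) := hScard
    _ ≤ (4 * A₂ / (u₃:ℝ)) * (3 * A₁) := by
        apply mul_le_mul hMreal hIccreal hIccnn (by positivity)
    _ = 12 * A₁ * A₂ / (u₃:ℝ) := by field_simp; ring
end

section
/- For P ≥ 1 and a subset 𝒵 ⊆ {1, 2, ..., ⌊P⌋} of cardinality Z, the number of integer solutions (x, y) of x_1 y_2 y_3 + x_2 y_1 y_3 + x_3 y_1 y_2 = 0 with y_1 y_2 y_3 ≠ 0, |x_j| ≤ P, |y_j| ≤ P for all j, and |y_j| ∈ 𝒵 for at least one j ∈ {1,2,3}, is O_ε(P^{2+ε} Z) for every ε > 0. -/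
lemma div_bound (δ : ℝ) (hδ : 0 < δ) :
    ∃ C : ℝ, 1 ≤ C ∧ ∀ n : ℕ, n ≠ 0 → (n.divisors.card : ℝ) ≤ C * (n : ℝ) ^ δ := by
  have hlog2 : (0:ℝ) < Real.log 2 := Real.log_pos (by norm_num)
  set K : ℝ := max 1 (1 / (δ * Real.log 2)) with hKdef
  have hK1 : 1 ≤ K := le_max_left _ _
  have hK0 : 0 < K := lt_of_lt_of_le one_pos hK1
  have hKd : 1 ≤ K * (δ * Real.log 2) := by
    have h2 : 1 / (δ * Real.log 2) ≤ K := le_max_right _ _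
    have hpos : 0 < δ * Real.log 2 := mul_pos hδ hlog2
    calc (1:ℝ) = (1 / (δ * Real.log 2)) * (δ * Real.log 2) := by field_simp
    _ ≤ K * (δ * Real.log 2) := by gcongr
  have claim1 : ∀ a : ℕ, (a + 1 : ℝ) ≤ K * (2:ℝ) ^ (δ * a) := by
    intro a
    have h1 : (1:ℝ) + δ * a * Real.log 2 ≤ (2:ℝ) ^ (δ * a) := by
      have h := Real.add_one_le_exp (δ * a * Real.log 2)
      rw [Real.rpow_def_of_pos (by norm_num)]
      calc (1:ℝ) + δ * a * Real.log 2 = δ * a * Real.log 2 + 1 := by ring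
      _ ≤ Real.exp (δ * a * Real.log 2) := h
      _ = Real.exp (Real.log 2 * (δ * a)) := by ring_nf
    calc (a + 1 : ℝ) ≤ K * (1 + δ * a * Real.log 2) := by
          have heq : K * (1 + δ * a * Real.log 2) = K + (K * (δ * Real.log 2)) * a := by ring
          rw [heq]
          have ha0 : (0:ℝ) ≤ a := Nat.cast_nonneg a
          nlinarith
    _ ≤ K * (2:ℝ) ^ (δ * a) := mul_le_mul_of_nonneg_left h1 (le_of_lt hK0)
  have claim2 : ∀ (p : ℝ), 0 ≤ p → 2 ≤ p ^ δ → ∀ a : ℕ, (a + 1 : ℝ) ≤ p ^ (δ * a) := by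
    intro p hp h2 a
    have h3 : ((a:ℝ) + 1) ≤ (2:ℝ) ^ a := by
      have h := Nat.lt_two_pow_self (n := a)
      have h' : (a:ℝ) + 1 ≤ ((2:ℕ) ^ a : ℕ) := by exact_mod_cast h
      simpa using h'
    calc (a + 1 : ℝ) ≤ (2:ℝ) ^ a := h3
    _ ≤ (p ^ δ) ^ a := pow_le_pow_left₀ (by norm_num) h2 a
    _ = p ^ (δ * a) := by rw [← Real.rpow_natCast (p ^ δ) a, ← Real.rpow_mul hp]
  set p0 : ℕ := ⌈(2:ℝ) ^ (1/δ)⌉₊ with hp0def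
  refine ⟨K ^ (p0 + 1), one_le_pow₀ hK1, ?_⟩
  intro n hn
  set S := n.primeFactors with hS
  have hd : (n.divisors.card : ℝ) = ∏ p ∈ S, ((n.factorization p + 1 : ℕ) : ℝ) := by
    rw [Nat.card_divisors hn]; push_cast; ring
  have hfac : ∀ p ∈ S, ((n.factorization p + 1 : ℕ) : ℝ)
      ≤ (if (p:ℝ) ^ δ < 2 then K else 1) * (p:ℝ) ^ (δ * (n.factorization p : ℕ)) := by
    intro p hp
    have hp2 : 2 ≤ p := (Nat.prime_of_mem_primeFactors hp).two_le
    have hp2R : (2:ℝ) ≤ (p:ℝ) := by exact_mod_cast hp2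
    have hp0R : (0:ℝ) ≤ (p:ℝ) := by positivity
    by_cases hsm : (p:ℝ) ^ δ < 2
    · simp only [hsm, if_pos]
      calc ((n.factorization p + 1 : ℕ) : ℝ) = ((n.factorization p : ℕ) : ℝ) + 1 := by push_cast; ring
      _ ≤ K * (2:ℝ) ^ (δ * (n.factorization p : ℕ)) := claim1 _
      _ ≤ K * (p:ℝ) ^ (δ * (n.factorization p : ℕ)) := by
          apply mul_le_mul_of_nonneg_left _ (le_of_lt hK0)
          exact Real.rpow_le_rpow (by norm_num) hp2R (by positivity)
    · simp only [hsm, if_neg, not_false_iff, one_mul]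
      calc ((n.factorization p + 1 : ℕ) : ℝ) = ((n.factorization p : ℕ) : ℝ) + 1 := by push_cast; ring
      _ ≤ (p:ℝ) ^ (δ * (n.factorization p : ℕ)) := claim2 _ hp0R (not_lt.mp hsm) _
  have hprodrpow : ∏ p ∈ S, (p:ℝ) ^ (δ * (n.factorization p : ℕ)) = (n:ℝ) ^ δ := by
    have h1 : ∀ p ∈ S, (p:ℝ) ^ (δ * (n.factorization p : ℕ)) = ((p:ℝ) ^ (n.factorization p)) ^ δ := by
      intro p hp
      have hp0R : (0:ℝ) ≤ (p:ℝ) := by positivity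
      rw [← Real.rpow_natCast (p:ℝ) (n.factorization p), ← Real.rpow_mul hp0R, mul_comm]
    rw [Finset.prod_congr rfl h1, Real.finset_prod_rpow S _ (fun p _ => by positivity)]
    congr 1
    have h2 : ∏ p ∈ S, (p:ℝ) ^ (n.factorization p) = ((∏ p ∈ S, p ^ n.factorization p : ℕ) : ℝ) := by
      push_cast; ring
    rw [h2]
    congr 1
    have h3 := Nat.factorization_prod_pow_eq_self hn
    rw [Finsupp.prod, Nat.support_factorization] at h3
    exact h3
  have hprodite : ∏ p ∈ S, (if (p:ℝ) ^ δ < 2 then K else (1:ℝ)) ≤ K ^ (p0 + 1) := by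
    rw [← Finset.prod_filter_mul_prod_filter_not S (fun p : ℕ => (p:ℝ) ^ δ < 2) (fun p => if (p:ℝ) ^ δ < 2 then K else (1:ℝ))]
    have e1 : ∏ p ∈ S.filter (fun p : ℕ => (p:ℝ) ^ δ < 2), (if (p:ℝ) ^ δ < 2 then K else (1:ℝ)) = K ^ (S.filter (fun p : ℕ => (p:ℝ) ^ δ < 2)).card := by
      rw [Finset.prod_congr rfl (fun p hp => if_pos (Finset.mem_filter.mp hp).2), Finset.prod_const]
    have e2 : ∏ p ∈ S.filter (fun p : ℕ => ¬ ((p:ℝ) ^ δ < 2)), (if (p:ℝ) ^ δ < 2 then K else (1:ℝ)) = 1 := by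
      rw [Finset.prod_congr rfl (fun p hp => if_neg (Finset.mem_filter.mp hp).2), Finset.prod_const_one]
    rw [e1, e2, mul_one]
    apply pow_le_pow_right₀ hK1
    have hsub : S.filter (fun p : ℕ => (p:ℝ) ^ δ < 2) ⊆ Finset.range (p0 + 1) := by
      intro p hp
      obtain ⟨hpS, hpsm⟩ := Finset.mem_filter.mp hp
      rw [Finset.mem_range, Nat.lt_succ_iff]
      have h1 : (p:ℝ) ≤ (2:ℝ) ^ (1/δ) := by
        by_contra hcon
        push_neg at hcon
        have h2 : ((2:ℝ) ^ (1/δ)) ^ δ < (p:ℝ) ^ δ :=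
          Real.rpow_lt_rpow (by positivity) hcon hδ
        rw [← Real.rpow_mul (by norm_num), one_div, inv_mul_cancel₀ (ne_of_gt hδ), Real.rpow_one] at h2
        linarith
      have h2 : (p:ℝ) ≤ (p0 : ℝ) := le_trans h1 (Nat.le_ceil _)
      exact_mod_cast h2
    calc (S.filter (fun p : ℕ => (p:ℝ) ^ δ < 2)).card ≤ (Finset.range (p0+1)).card := Finset.card_le_card hsub
    _ = p0 + 1 := Finset.card_range _
  calc (n.divisors.card : ℝ) = ∏ p ∈ S, ((n.factorization p + 1 : ℕ) : ℝ) := hd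
  _ ≤ ∏ p ∈ S, ((if (p:ℝ) ^ δ < 2 then K else 1) * (p:ℝ) ^ (δ * (n.factorization p : ℕ))) := by
      apply Finset.prod_le_prod (fun p _ => by positivity) hfac
  _ = (∏ p ∈ S, (if (p:ℝ) ^ δ < 2 then K else (1:ℝ))) * ∏ p ∈ S, (p:ℝ) ^ (δ * (n.factorization p : ℕ)) := Finset.prod_mul_distrib
  _ ≤ K ^ (p0 + 1) * (n:ℝ) ^ δ := by
      rw [hprodrpow]
      apply mul_le_mul_of_nonneg_right hprodite (by positivity)


/-- fiberwise counting with real bounds -/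
lemma card_le_real {α β : Type*} [DecidableEq β] (s : Finset α) (t : Finset β) (f : α → β)
    (hf : ∀ a ∈ s, f a ∈ t) (K : ℝ) (hK : ∀ b ∈ t, ((s.filter fun a => f a = b).card : ℝ) ≤ K) :
    (s.card : ℝ) ≤ t.card * K := by
  have h := Finset.card_eq_sum_card_fiberwise hf
  have : (s.card : ℝ) = ∑ b ∈ t, ((s.filter fun a => f a = b).card : ℝ) := by
    rw [h]; push_cast; ring
  rw [this]
  calc ∑ b ∈ t, ((s.filter fun a => f a = b).card : ℝ) ≤ ∑ _b ∈ t, K := Finset.sum_le_sum hK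
  _ = t.card * K := by rw [Finset.sum_const, nsmul_eq_mul]

/-- counting divisor pairs -/
lemma mulpairs {α : Type*} (C δ : ℝ) (hC : 0 ≤ C) (hδ : 0 ≤ δ)
    (hdiv : ∀ n : ℕ, n ≠ 0 → (n.divisors.card : ℝ) ≤ C * (n : ℝ) ^ δ)
    (N : ℤ) (hN : N ≠ 0) (R : ℝ) (hR : 1 ≤ R) (hNR : (|N| : ℝ) ≤ R)
    (s : Finset α) (g : α → ℤ × ℤ) (hinj : Set.InjOn g s)
    (hg : ∀ a ∈ s, (g a).1 * (g a).2 = N) : (s.card : ℝ) ≤ 2 * C * R ^ δ := by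
  classical
  set D : Finset ℤ := N.natAbs.divisors.image (fun d : ℕ => (d : ℤ)) ∪ N.natAbs.divisors.image (fun d : ℕ => -(d : ℤ)) with hD
  have hmap : ∀ a ∈ s, (g a).1 ∈ D := by
    intro a ha
    have hprod := hg a ha
    have h1 : (g a).1 ∣ N := ⟨(g a).2, hprod.symm⟩
    have h2 : (g a).1.natAbs ∣ N.natAbs := Int.natAbs_dvd_natAbs.mpr h1
    have h3 : (g a).1.natAbs ∈ N.natAbs.divisors :=
      Nat.mem_divisors.mpr ⟨h2, Int.natAbs_ne_zero.mpr hN⟩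
    rcases Int.natAbs_eq (g a).1 with he | he
    · exact Finset.mem_union_left _ (Finset.mem_image.mpr ⟨_, h3, he.symm⟩)
    · exact Finset.mem_union_right _ (Finset.mem_image.mpr ⟨_, h3, he.symm⟩)
  have hinj1 : Set.InjOn (fun a => (g a).1) s := by
    intro a ha b hb hab
    simp only at hab
    have ha' := hg a ha
    have hb' := hg b hb
    have h1 : (g a).1 ≠ 0 := by
      intro h0; rw [h0, zero_mul] at ha'; exact hN ha'.symm
    apply hinj ha hb
    have h2 : (g a).2 = (g b).2 := by
      apply mul_left_cancel₀ h1
      rw [ha', hab, hb']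
    exact Prod.ext hab h2
  have hcard : s.card ≤ D.card := Finset.card_le_card_of_injOn _ hmap hinj1
  have hDcard : (D.card : ℝ) ≤ 2 * N.natAbs.divisors.card := by
    calc (D.card : ℝ) ≤ ((N.natAbs.divisors.image (fun d : ℕ => (d : ℤ))).card : ℝ)
        + ((N.natAbs.divisors.image (fun d : ℕ => -(d : ℤ))).card : ℝ) := by
          exact_mod_cast Finset.card_union_le _ _
    _ ≤ (N.natAbs.divisors.card : ℝ) + (N.natAbs.divisors.card : ℝ) := by
          have := Finset.card_image_le (s := N.natAbs.divisors) (f := fun d : ℕ => (d:ℤ))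
          have := Finset.card_image_le (s := N.natAbs.divisors) (f := fun d : ℕ => -(d:ℤ))
          gcongr <;> exact_mod_cast Finset.card_image_le
    _ = 2 * N.natAbs.divisors.card := by ring
  have hdivb : (N.natAbs.divisors.card : ℝ) ≤ C * R ^ δ := by
    calc (N.natAbs.divisors.card : ℝ) ≤ C * (N.natAbs : ℝ) ^ δ :=
          hdiv _ (Int.natAbs_ne_zero.mpr hN)
    _ ≤ C * R ^ δ := by
          apply mul_le_mul_of_nonneg_left _ hC
          apply Real.rpow_le_rpow (by positivity) _ hδ
          rw [Nat.cast_natAbs]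
          push_cast
          exact hNR
  calc (s.card : ℝ) ≤ (D.card : ℝ) := by exact_mod_cast hcard
  _ ≤ 2 * N.natAbs.divisors.card := hDcard
  _ ≤ 2 * (C * R ^ δ) := by linarith
  _ = 2 * C * R ^ δ := by ring


/-- two-level fibered counting via divisor pairs -/
lemma count_pairs (C δ : ℝ) (hC : 0 ≤ C) (hδ : 0 ≤ δ)
    (hdiv : ∀ n : ℕ, n ≠ 0 → (n.divisors.card : ℝ) ≤ C * (n : ℝ) ^ δ)
    {α β : Type*} [DecidableEq α] [DecidableEq β] (s : Finset α) (JJ : Finset β)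
    (f : α → β) (g : α → ℤ × ℤ) (hf : ∀ x ∈ s, f x ∈ JJ)
    (ginj : ∀ x ∈ s, ∀ y ∈ s, f x = f y → g x = g y → x = y)
    (N : β → ℤ) (hgN : ∀ x ∈ s, (g x).1 * (g x).2 = N (f x))
    (hNne : ∀ x ∈ s, N (f x) ≠ 0)
    (R : ℝ) (hR : 1 ≤ R) (hNR : ∀ x ∈ s, |((N (f x)) : ℝ)| ≤ R) :
    (s.card : ℝ) ≤ JJ.card * (2 * C * R ^ δ) := by
  apply card_le_real s JJ f hf
  intro b hb
  by_cases hne : (s.filter fun x => f x = b).Nonempty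
  · obtain ⟨x0, hx0⟩ := hne
    obtain ⟨hx0s, hx0f⟩ := Finset.mem_filter.mp hx0
    apply mulpairs C δ hC hδ hdiv (N b) (hx0f ▸ hNne x0 hx0s) R hR (hx0f ▸ hNR x0 hx0s)
    · intro x hx y hy hgxy
      obtain ⟨hxs, hxf⟩ := Finset.mem_filter.mp hx
      obtain ⟨hys, hyf⟩ := Finset.mem_filter.mp hy
      exact ginj x hxs y hys (hxf.trans hyf.symm) hgxy
    · intro x hx
      obtain ⟨hxs, hxf⟩ := Finset.mem_filter.mp hx
      rw [← hxf]
      exact hgN x hxs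
  · rw [Finset.not_nonempty_iff_eq_empty.mp hne]
    simp
    positivity


/-- Core count: for fixed `a ≠ 0`, tuples `(x0,x1,x2,y1,y2)` with
`x0*y1*y2 + x1*a*y2 + x2*a*y1 = 0`, `y1 y2 ≠ 0`, all coordinates of absolute value `≤ P`. -/
lemma core_count (C δ : ℝ) (hC : 1 ≤ C) (hδ : 0 < δ)
    (hdiv : ∀ n : ℕ, n ≠ 0 → (n.divisors.card : ℝ) ≤ C * (n : ℝ) ^ δ)
    (P : ℝ) (hP : 1 ≤ P) (a : ℤ) (ha : a ≠ 0) (haP : |(a:ℝ)| ≤ P)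
    (s : Finset (ℤ × ℤ × ℤ × ℤ × ℤ))
    (hs : ∀ t ∈ s,
      t.1 * t.2.2.2.1 * t.2.2.2.2 + t.2.1 * a * t.2.2.2.2 + t.2.2.1 * a * t.2.2.2.1 = 0 ∧
      t.2.2.2.1 ≠ 0 ∧ t.2.2.2.2 ≠ 0 ∧
      |(t.1 : ℝ)| ≤ P ∧ |(t.2.1 : ℝ)| ≤ P ∧ |(t.2.2.1 : ℝ)| ≤ P ∧
      |(t.2.2.2.1 : ℝ)| ≤ P ∧ |(t.2.2.2.2 : ℝ)| ≤ P) :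
    (s.card : ℝ) ≤ 180 * C ^ 2 * P ^ ((2:ℝ) + 6 * δ) := by
  classical
  have hP0 : (0:ℝ) < P := lt_of_lt_of_le one_pos hP
  have hC0 : (0:ℝ) ≤ C := le_trans zero_le_one hC
  -- rpow facts
  have hmono : ∀ e1 e2 : ℝ, e1 ≤ e2 → P ^ e1 ≤ P ^ e2 :=
    fun e1 e2 h => Real.rpow_le_rpow_of_exponent_le hP h
  have hone : ∀ e : ℝ, 0 ≤ e → 1 ≤ P ^ e := by
    intro e he
    have := hmono 0 e he
    rwa [Real.rpow_zero] at this
  have hsq : P ^ (2:ℝ) = P * P := by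
    rw [show (2:ℝ) = ((2:ℕ):ℝ) by norm_num, Real.rpow_natCast]; ring
  have hfour : P ^ (4:ℝ) = P * P * (P * P) := by
    rw [show (4:ℝ) = ((4:ℕ):ℝ) by norm_num, Real.rpow_natCast]; ring
  have hmul : ∀ e1 e2 : ℝ, P ^ e1 * P ^ e2 = P ^ (e1 + e2) := fun e1 e2 => (Real.rpow_add hP0 e1 e2).symm
  -- the interval
  set J : Finset ℤ := Finset.Icc (-⌊P⌋) ⌊P⌋ with hJdef
  have hJmem : ∀ z : ℤ, |(z:ℝ)| ≤ P → z ∈ J := by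
    intro z hz
    rw [hJdef, Finset.mem_Icc]
    rw [abs_le] at hz
    constructor
    · rw [neg_le, Int.le_floor]
      push_cast
      linarith [hz.1]
    · rw [Int.le_floor]
      exact hz.2
  have hfl1 : (1:ℤ) ≤ ⌊P⌋ := by rw [Int.le_floor]; exact_mod_cast hP
  have hJmem' : ∀ z : ℤ, z ∈ J → |(z:ℝ)| ≤ P := by
    intro z hz
    rw [hJdef, Finset.mem_Icc] at hz
    have hfle := Int.floor_le P
    rw [abs_le]
    constructor
    · have : ((-⌊P⌋ : ℤ) : ℝ) ≤ (z:ℝ) := by exact_mod_cast hz.1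
      push_cast at this
      linarith
    · have : (z:ℝ) ≤ ((⌊P⌋:ℤ):ℝ) := by exact_mod_cast hz.2
      linarith
  have hJcard : (J.card : ℝ) ≤ 3 * P := by
    rw [hJdef, Int.card_Icc]
    have h2 : (((⌊P⌋ + 1 - -⌊P⌋)).toNat : ℝ) = 2 * (⌊P⌋:ℝ) + 1 := by
      have h0 : (0:ℤ) ≤ ⌊P⌋ + 1 - -⌊P⌋ := by linarith
      have h1 := Int.toNat_of_nonneg h0
      have h3 : (((⌊P⌋ + 1 - -⌊P⌋).toNat : ℤ) : ℝ) = ((⌊P⌋ + 1 - -⌊P⌋ : ℤ) : ℝ) :=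
        congrArg (fun z : ℤ => (z : ℝ)) h1
      push_cast at h3 ⊢
      linarith
    rw [h2]
    have := Int.floor_le P
    linarith
  have hJJcard : ((J ×ˢ J).card : ℝ) ≤ 9 * P ^ (2:ℝ) := by
    rw [Finset.card_product, hsq]
    push_cast
    nlinarith [hJcard, (Nat.cast_nonneg J.card : (0:ℝ) ≤ (J.card:ℝ))]
  have e2d : (P ^ (2:ℝ)) ^ δ = P ^ (2 * δ) := by rw [← Real.rpow_mul hP0.le]
  have e4d : (P ^ (4:ℝ)) ^ δ = P ^ (4 * δ) := by rw [← Real.rpow_mul hP0.le]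
  have habs : ∀ u v : ℤ, |(u:ℝ)| ≤ P → |(v:ℝ)| ≤ P → |((u * v : ℤ) : ℝ)| ≤ P ^ (2:ℝ) := by
    intro u v hu hv
    rw [hsq]
    push_cast
    rw [abs_mul]
    have h0u : (0:ℝ) ≤ |(u:ℝ)| := abs_nonneg _
    have h0v : (0:ℝ) ≤ |(v:ℝ)| := abs_nonneg _
    exact mul_le_mul hu hv h0v hP0.le
  -- the five pieces
  classical
  set s1 := s.filter (fun t => t.1 = 0 ∧ t.2.1 = 0) with hs1def
  set s2 := s.filter (fun t => t.1 = 0 ∧ t.2.1 ≠ 0) with hs2def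
  set s3 := s.filter (fun t => t.1 ≠ 0 ∧ t.2.1 = 0) with hs3def
  set s4 := s.filter (fun t => t.1 ≠ 0 ∧ t.2.1 ≠ 0 ∧ t.2.2.1 = 0) with hs4def
  set s5 := s.filter (fun t => t.1 ≠ 0 ∧ t.2.1 ≠ 0 ∧ t.2.2.1 ≠ 0) with hs5def
  have hsplit : (s.card : ℝ) ≤ (s1.card : ℝ) + s2.card + s3.card + s4.card + s5.card := by
    have hsub : s ⊆ s1 ∪ s2 ∪ s3 ∪ s4 ∪ s5 := by
      intro x hx
      simp only [Finset.mem_union, hs1def, hs2def, hs3def, hs4def, hs5def, Finset.mem_filter]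
      by_cases h1 : x.1 = 0
      · by_cases h2 : x.2.1 = 0
        · exact Or.inl (Or.inl (Or.inl (Or.inl ⟨hx, h1, h2⟩)))
        · exact Or.inl (Or.inl (Or.inl (Or.inr ⟨hx, h1, h2⟩)))
      · by_cases h2 : x.2.1 = 0
        · exact Or.inl (Or.inl (Or.inr ⟨hx, h1, h2⟩))
        · by_cases h3 : x.2.2.1 = 0
          · exact Or.inl (Or.inr ⟨hx, h1, h2, h3⟩)
          · exact Or.inr ⟨hx, h1, h2, h3⟩
    have h1 := Finset.card_le_card hsub
    have h2 := Finset.card_union_le (s1 ∪ s2 ∪ s3 ∪ s4) s5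
    have h3 := Finset.card_union_le (s1 ∪ s2 ∪ s3) s4
    have h4 := Finset.card_union_le (s1 ∪ s2) s3
    have h5 := Finset.card_union_le s1 s2
    have hn : s.card ≤ s1.card + s2.card + s3.card + s4.card + s5.card := by omega
    exact_mod_cast hn
  -- piece 1 : x0 = 0, x1 = 0 (then x2 = 0)
  have hb1 : (s1.card : ℝ) ≤ 9 * P ^ (2:ℝ) := by
    have hinj : Set.InjOn (fun t : ℤ × ℤ × ℤ × ℤ × ℤ => (t.2.2.2.1, t.2.2.2.2)) s1 := by
      intro x hx y hy hxy
      simp only [Finset.coe_filter, Set.mem_setOf_eq, hs1def, Finset.mem_coe,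
        Finset.mem_filter] at hx hy
      obtain ⟨hxs, hx0, hx1⟩ := hx
      obtain ⟨hys, hy0, hy1⟩ := hy
      obtain ⟨heqx, hy1x, hy2x, -⟩ := hs x hxs
      obtain ⟨heqy, hy1y, hy2y, -⟩ := hs y hys
      simp only [Prod.mk.injEq] at hxy
      -- derive x.2.2.1 = 0 and y.2.2.1 = 0
      have hx2 : x.2.2.1 = 0 := by
        rw [hx0, hx1] at heqx
        have h : x.2.2.1 * (a * x.2.2.2.1) = 0 := by linarith [heqx]
        rcases mul_eq_zero.mp h with h' | h'
        · exact h'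
        · exact absurd (mul_eq_zero.mp h') (by simp [ha, hy1x])
      have hy2 : y.2.2.1 = 0 := by
        rw [hy0, hy1] at heqy
        have h : y.2.2.1 * (a * y.2.2.2.1) = 0 := by linarith [heqy]
        rcases mul_eq_zero.mp h with h' | h'
        · exact h'
        · exact absurd (mul_eq_zero.mp h') (by simp [ha, hy1y])
      have : x = (x.1, x.2.1, x.2.2.1, x.2.2.2.1, x.2.2.2.2) := rfl
      rw [this]
      have hy : y = (y.1, y.2.1, y.2.2.1, y.2.2.2.1, y.2.2.2.2) := rfl
      rw [hy]
      rw [hx0, hx1, hx2, hy0, hy1, hy2, hxy.1, hxy.2]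
    have hmemJJ : ∀ t ∈ s1, (t.2.2.2.1, t.2.2.2.2) ∈ J ×ˢ J := by
      intro t ht
      obtain ⟨hts, -⟩ := Finset.mem_filter.mp ht
      obtain ⟨-, -, -, -, -, -, h7, h8⟩ := hs t hts
      exact Finset.mem_product.mpr ⟨hJmem _ h7, hJmem _ h8⟩
    calc (s1.card : ℝ) ≤ ((J ×ˢ J).card : ℝ) := by
          exact_mod_cast Finset.card_le_card_of_injOn _ hmemJJ hinj
    _ ≤ 9 * P ^ (2:ℝ) := hJJcard
  -- piece 2 : x0 = 0, x1 ≠ 0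
  have hb2 : (s2.card : ℝ) ≤ 9 * P ^ (2:ℝ) * (2 * C * (P ^ (2:ℝ)) ^ δ) := by
    have hf : ∀ t ∈ s2, (t.2.1, t.2.2.2.2) ∈ J ×ˢ J := by
      intro t ht
      obtain ⟨hts, -⟩ := Finset.mem_filter.mp ht
      obtain ⟨-, -, -, -, h5, -, -, h8⟩ := hs t hts
      exact Finset.mem_product.mpr ⟨hJmem _ h5, hJmem _ h8⟩
    have hprod : ∀ x ∈ s2, x.2.2.1 * x.2.2.2.1 = -(x.2.1 * x.2.2.2.2) := by
      intro x hx
      obtain ⟨hxs, hx0, hx1⟩ := Finset.mem_filter.mp hx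
      obtain ⟨heq, hy1, hy2, -⟩ := hs x hxs
      rw [hx0] at heq
      have h : a * (x.2.1 * x.2.2.2.2 + x.2.2.1 * x.2.2.2.1) = 0 := by linear_combination heq
      rcases mul_eq_zero.mp h with h' | h'
      · exact absurd h' ha
      · linarith
    have h := count_pairs C δ hC0 hδ.le hdiv s2 (J ×ˢ J)
      (fun t => (t.2.1, t.2.2.2.2)) (fun t => (t.2.2.1, t.2.2.2.1)) hf
      (by
        intro x hx y hy hfxy hgxy
        obtain ⟨hxs, hx0, -⟩ := Finset.mem_filter.mp hx
        obtain ⟨hys, hy0, -⟩ := Finset.mem_filter.mp hy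
        simp only [Prod.mk.injEq] at hfxy hgxy
        have ex : x = (x.1, x.2.1, x.2.2.1, x.2.2.2.1, x.2.2.2.2) := rfl
        have ey : y = (y.1, y.2.1, y.2.2.1, y.2.2.2.1, y.2.2.2.2) := rfl
        rw [ex, ey, hx0, hy0, hfxy.1, hfxy.2, hgxy.1, hgxy.2])
      (fun b => -(b.1 * b.2))
      (by intro x hx; exact hprod x hx)
      (by
        intro x hx
        obtain ⟨hxs, -, hx1⟩ := Finset.mem_filter.mp hx
        obtain ⟨-, hy1, hy2, -⟩ := hs x hxs
        exact neg_ne_zero.mpr (mul_ne_zero hx1 hy2))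
      (P ^ (2:ℝ)) (hone 2 (by norm_num))
      (by
        intro x hx
        obtain ⟨hxs, -⟩ := Finset.mem_filter.mp hx
        obtain ⟨-, -, -, -, h5, -, -, h8⟩ := hs x hxs
        have hab := habs x.2.1 x.2.2.2.2 h5 h8
        push_cast at hab ⊢
        rwa [abs_neg])
    calc (s2.card : ℝ) ≤ ((J ×ˢ J).card : ℝ) * (2 * C * (P ^ (2:ℝ)) ^ δ) := h
    _ ≤ 9 * P ^ (2:ℝ) * (2 * C * (P ^ (2:ℝ)) ^ δ) := by
        apply mul_le_mul_of_nonneg_right hJJcard (by positivity)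
  -- piece 3 : x0 ≠ 0, x1 = 0
  have hb3 : (s3.card : ℝ) ≤ 9 * P ^ (2:ℝ) * (2 * C * (P ^ (2:ℝ)) ^ δ) := by
    have hf : ∀ t ∈ s3, (t.2.2.1, t.2.2.2.1) ∈ J ×ˢ J := by
      intro t ht
      obtain ⟨hts, -⟩ := Finset.mem_filter.mp ht
      obtain ⟨-, -, -, -, -, h6, h7, -⟩ := hs t hts
      exact Finset.mem_product.mpr ⟨hJmem _ h6, hJmem _ h7⟩
    have hprod : ∀ x ∈ s3, x.1 * x.2.2.2.2 = -(a * x.2.2.1) := by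
      intro x hx
      obtain ⟨hxs, hx0, hx1⟩ := Finset.mem_filter.mp hx
      obtain ⟨heq, hy1, hy2, -⟩ := hs x hxs
      rw [hx1] at heq
      have h : x.2.2.2.1 * (x.1 * x.2.2.2.2 + a * x.2.2.1) = 0 := by linear_combination heq
      rcases mul_eq_zero.mp h with h' | h'
      · exact absurd h' hy1
      · linarith
    have h := count_pairs C δ hC0 hδ.le hdiv s3 (J ×ˢ J)
      (fun t => (t.2.2.1, t.2.2.2.1)) (fun t => (t.1, t.2.2.2.2)) hf
      (by
        intro x hx y hy hfxy hgxy
        obtain ⟨hxs, -, hx1⟩ := Finset.mem_filter.mp hx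
        obtain ⟨hys, -, hy1⟩ := Finset.mem_filter.mp hy
        simp only [Prod.mk.injEq] at hfxy hgxy
        have ex : x = (x.1, x.2.1, x.2.2.1, x.2.2.2.1, x.2.2.2.2) := rfl
        have ey : y = (y.1, y.2.1, y.2.2.1, y.2.2.2.1, y.2.2.2.2) := rfl
        rw [ex, ey, hx1, hy1, hfxy.1, hfxy.2, hgxy.1, hgxy.2])
      (fun b => -(a * b.1))
      (by intro x hx; exact hprod x hx)
      (by
        intro x hx
        obtain ⟨hxs, hx0, -⟩ := Finset.mem_filter.mp hx
        obtain ⟨-, -, hy2, -⟩ := hs x hxs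
        show -(a * x.2.2.1) ≠ 0
        rw [← hprod x hx]
        exact mul_ne_zero hx0 hy2)
      (P ^ (2:ℝ)) (hone 2 (by norm_num))
      (by
        intro x hx
        obtain ⟨hxs, -⟩ := Finset.mem_filter.mp hx
        obtain ⟨-, -, -, -, -, h6, -, -⟩ := hs x hxs
        have hab := habs a x.2.2.1 haP h6
        show |((-(a * x.2.2.1) : ℤ) : ℝ)| ≤ P ^ (2:ℝ)
        push_cast at hab ⊢
        rwa [abs_neg])
    calc (s3.card : ℝ) ≤ ((J ×ˢ J).card : ℝ) * (2 * C * (P ^ (2:ℝ)) ^ δ) := h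
    _ ≤ 9 * P ^ (2:ℝ) * (2 * C * (P ^ (2:ℝ)) ^ δ) := by
        apply mul_le_mul_of_nonneg_right hJJcard (by positivity)
  -- piece 4 : x0 ≠ 0, x1 ≠ 0, x2 = 0
  have hb4 : (s4.card : ℝ) ≤ 9 * P ^ (2:ℝ) * (2 * C * (P ^ (2:ℝ)) ^ δ) := by
    have hf : ∀ t ∈ s4, (t.2.1, t.2.2.2.2) ∈ J ×ˢ J := by
      intro t ht
      obtain ⟨hts, -⟩ := Finset.mem_filter.mp ht
      obtain ⟨-, -, -, -, h5, -, -, h8⟩ := hs t hts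
      exact Finset.mem_product.mpr ⟨hJmem _ h5, hJmem _ h8⟩
    have hprod : ∀ x ∈ s4, x.1 * x.2.2.2.1 = -(a * x.2.1) := by
      intro x hx
      obtain ⟨hxs, hx0, hx1, hx2⟩ := Finset.mem_filter.mp hx
      obtain ⟨heq, hy1, hy2, -⟩ := hs x hxs
      rw [hx2] at heq
      have h : x.2.2.2.2 * (x.1 * x.2.2.2.1 + a * x.2.1) = 0 := by linear_combination heq
      rcases mul_eq_zero.mp h with h' | h'
      · exact absurd h' hy2
      · linarith
    have h := count_pairs C δ hC0 hδ.le hdiv s4 (J ×ˢ J)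
      (fun t => (t.2.1, t.2.2.2.2)) (fun t => (t.1, t.2.2.2.1)) hf
      (by
        intro x hx y hy hfxy hgxy
        obtain ⟨hxs, -, -, hx2⟩ := Finset.mem_filter.mp hx
        obtain ⟨hys, -, -, hy2⟩ := Finset.mem_filter.mp hy
        simp only [Prod.mk.injEq] at hfxy hgxy
        have ex : x = (x.1, x.2.1, x.2.2.1, x.2.2.2.1, x.2.2.2.2) := rfl
        have ey : y = (y.1, y.2.1, y.2.2.1, y.2.2.2.1, y.2.2.2.2) := rfl
        rw [ex, ey, hx2, hy2, hfxy.1, hfxy.2, hgxy.1, hgxy.2])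
      (fun b => -(a * b.1))
      (by intro x hx; exact hprod x hx)
      (by
        intro x hx
        obtain ⟨hxs, hx0, -⟩ := Finset.mem_filter.mp hx
        obtain ⟨-, hy1, -, -⟩ := hs x hxs
        show -(a * x.2.1) ≠ 0
        rw [← hprod x hx]
        exact mul_ne_zero hx0 hy1)
      (P ^ (2:ℝ)) (hone 2 (by norm_num))
      (by
        intro x hx
        obtain ⟨hxs, -⟩ := Finset.mem_filter.mp hx
        obtain ⟨-, -, -, -, h5, -, -, -⟩ := hs x hxs
        have hab := habs a x.2.1 haP h5
        show |((-(a * x.2.1) : ℤ) : ℝ)| ≤ P ^ (2:ℝ)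
        push_cast at hab ⊢
        rwa [abs_neg])
    calc (s4.card : ℝ) ≤ ((J ×ˢ J).card : ℝ) * (2 * C * (P ^ (2:ℝ)) ^ δ) := h
    _ ≤ 9 * P ^ (2:ℝ) * (2 * C * (P ^ (2:ℝ)) ^ δ) := by
        apply mul_le_mul_of_nonneg_right hJJcard (by positivity)
  -- piece 5 : x0 ≠ 0, x1 ≠ 0, x2 ≠ 0
  have hb5 : (s5.card : ℝ) ≤ 9 * P ^ (2:ℝ) * ((2 * C * (P ^ (4:ℝ)) ^ δ) * (2 * C * (P ^ (2:ℝ)) ^ δ)) := by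
    have hf : ∀ t ∈ s5, (t.2.1, t.2.2.1) ∈ J ×ˢ J := by
      intro t ht
      obtain ⟨hts, -⟩ := Finset.mem_filter.mp ht
      obtain ⟨-, -, -, -, h5, h6, -, -⟩ := hs t hts
      exact Finset.mem_product.mpr ⟨hJmem _ h5, hJmem _ h6⟩
    have hfib : ∀ b ∈ J ×ˢ J,
        ((s5.filter fun t => (t.2.1, t.2.2.1) = b).card : ℝ)
          ≤ (2 * C * (P ^ (4:ℝ)) ^ δ) * (2 * C * (P ^ (2:ℝ)) ^ δ) := by
      rintro ⟨b1, b2⟩ hb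
      set F := s5.filter (fun t => (t.2.1, t.2.2.1) = (b1, b2)) with hFdef
      by_cases hne : F.Nonempty
      · obtain ⟨w, hwF⟩ := hne
        have hmemF : ∀ t ∈ F, t ∈ s ∧ t.1 ≠ 0 ∧ t.2.1 = b1 ∧ t.2.2.1 = b2 := by
          intro t ht
          obtain ⟨ht5, htp⟩ := Finset.mem_filter.mp ht
          obtain ⟨hts, ht0, -, -⟩ := Finset.mem_filter.mp ht5
          simp only [Prod.mk.injEq] at htp
          exact ⟨hts, ht0, htp.1, htp.2⟩
        have hb1ne : b1 ≠ 0 := by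
          obtain ⟨hw5, -⟩ := Finset.mem_filter.mp hwF
          obtain ⟨-, -, hw1, -⟩ := Finset.mem_filter.mp hw5
          obtain ⟨-, -, hwb1, -⟩ := hmemF w hwF
          rw [← hwb1]; exact hw1
        have hb2ne : b2 ≠ 0 := by
          obtain ⟨hw5, -⟩ := Finset.mem_filter.mp hwF
          obtain ⟨-, -, -, hw2⟩ := Finset.mem_filter.mp hw5
          obtain ⟨-, -, -, hwb2⟩ := hmemF w hwF
          rw [← hwb2]; exact hw2
        have hb1P : |(b1:ℝ)| ≤ P := hJmem' b1 (Finset.mem_product.mp hb).1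
        have hb2P : |(b2:ℝ)| ≤ P := hJmem' b2 (Finset.mem_product.mp hb).2
        set h : ℤ × ℤ × ℤ × ℤ × ℤ → ℤ × ℤ :=
          fun t => (t.1 * t.2.2.2.1 + a * b1, t.1 * t.2.2.2.2 + a * b2) with hhdef
        set H := F.image h with hHdef
        have step1 : (H.card : ℝ) ≤ 2 * C * (P ^ (4:ℝ)) ^ δ := by
          apply mulpairs C δ hC0 hδ.le hdiv (a * a * (b1 * b2))
            (mul_ne_zero (mul_ne_zero ha ha) (mul_ne_zero hb1ne hb2ne))
            (P ^ (4:ℝ)) (hone 4 (by norm_num))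
            (by
              rw [hfour]
              push_cast
              rw [abs_mul, abs_mul, abs_mul]
              have n1 := abs_nonneg ((a:ℝ))
              have n2 := abs_nonneg ((b1:ℝ))
              have n3 := abs_nonneg ((b2:ℝ))
              have m1 : |(a:ℝ)| * |(a:ℝ)| ≤ P * P := mul_le_mul haP haP n1 hP0.le
              have m2 : |(b1:ℝ)| * |(b2:ℝ)| ≤ P * P := mul_le_mul hb1P hb2P n3 hP0.le
              exact mul_le_mul m1 m2 (mul_nonneg n2 n3) (by positivity))
            H id (Set.injOn_id _)
          intro p hp
          obtain ⟨t, htF, rfl⟩ := Finset.mem_image.mp hp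
          obtain ⟨hts, ht0, ht1, ht2⟩ := hmemF t htF
          obtain ⟨heq, -, -, -⟩ := hs t hts
          show (t.1 * t.2.2.2.1 + a * b1) * (t.1 * t.2.2.2.2 + a * b2) = a * a * (b1 * b2)
          rw [← ht1, ← ht2]
          linear_combination t.1 * heq
        have step2 : (F.card : ℝ) ≤ (H.card : ℝ) * (2 * C * (P ^ (2:ℝ)) ^ δ) := by
          refine count_pairs C δ hC0 hδ.le hdiv F H h (fun t => (t.1, t.2.2.2.1))
            (fun t ht => Finset.mem_image_of_mem h ht) ?_ (fun p => p.1 - a * b1) ?_ ?_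
            (P ^ (2:ℝ)) (hone 2 (by norm_num)) ?_
          · intro x hx y hy hhxy hgxy
            obtain ⟨hxs, hx0, hx1, hx2⟩ := hmemF x hx
            obtain ⟨hys, hy0, hy1, hy2⟩ := hmemF y hy
            simp only [hhdef, Prod.mk.injEq] at hhxy hgxy
            have e5 : x.2.2.2.2 = y.2.2.2.2 := by
              have h2 := hhxy.2
              rw [hgxy.1] at h2
              have h3 : y.1 * x.2.2.2.2 = y.1 * y.2.2.2.2 := by linarith
              exact mul_left_cancel₀ (by rw [← hgxy.1]; exact hx0) h3
            have ex : x = (x.1, x.2.1, x.2.2.1, x.2.2.2.1, x.2.2.2.2) := rfl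
            have ey : y = (y.1, y.2.1, y.2.2.1, y.2.2.2.1, y.2.2.2.2) := rfl
            rw [ex, ey, hx1, hx2, hy1, hy2, hgxy.1, hgxy.2, e5]
          · intro x hx
            show x.1 * x.2.2.2.1 = (h x).1 - a * b1
            simp only [hhdef]
            ring
          · intro x hx
            obtain ⟨hxs, hx0, -, -⟩ := hmemF x hx
            obtain ⟨-, hy1, -, -⟩ := hs x hxs
            show (h x).1 - a * b1 ≠ 0
            have e : (h x).1 - a * b1 = x.1 * x.2.2.2.1 := by simp only [hhdef]; ring
            rw [e]
            exact mul_ne_zero hx0 hy1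
          · intro x hx
            obtain ⟨hxs, -, -, -⟩ := hmemF x hx
            obtain ⟨-, -, -, h4, -, -, h7, -⟩ := hs x hxs
            show |(((h x).1 - a * b1 : ℤ) : ℝ)| ≤ P ^ (2:ℝ)
            have e : (h x).1 - a * b1 = x.1 * x.2.2.2.1 := by simp only [hhdef]; ring
            rw [e]
            exact habs _ _ h4 h7
        calc (F.card : ℝ) ≤ (H.card : ℝ) * (2 * C * (P ^ (2:ℝ)) ^ δ) := step2
        _ ≤ (2 * C * (P ^ (4:ℝ)) ^ δ) * (2 * C * (P ^ (2:ℝ)) ^ δ) := by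
            apply mul_le_mul_of_nonneg_right step1 (by positivity)
      · rw [Finset.not_nonempty_iff_eq_empty.mp hne]
        simp only [Finset.card_empty, Nat.cast_zero]
        positivity
    calc (s5.card : ℝ) ≤ ((J ×ˢ J).card : ℝ) * ((2 * C * (P ^ (4:ℝ)) ^ δ) * (2 * C * (P ^ (2:ℝ)) ^ δ)) :=
          card_le_real s5 (J ×ˢ J) _ hf _ hfib
    _ ≤ 9 * P ^ (2:ℝ) * ((2 * C * (P ^ (4:ℝ)) ^ δ) * (2 * C * (P ^ (2:ℝ)) ^ δ)) := by
        apply mul_le_mul_of_nonneg_right hJJcard (by positivity)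
  -- combine
  set T : ℝ := P ^ ((2:ℝ) + 6 * δ) with hTdef
  have hTpos : (0:ℝ) < T := Real.rpow_pos_of_pos hP0 _
  have m1 : P ^ (2:ℝ) ≤ T := hmono 2 _ (by linarith)
  have m2 : P ^ ((2:ℝ) + 2 * δ) ≤ T := hmono _ _ (by linarith)
  have conv2 : 9 * P ^ (2:ℝ) * (2 * C * (P ^ (2:ℝ)) ^ δ) = 18 * C * P ^ ((2:ℝ) + 2 * δ) := by
    rw [e2d, ← hmul 2 (2 * δ)]
    ring
  have conv5 : 9 * P ^ (2:ℝ) * ((2 * C * (P ^ (4:ℝ)) ^ δ) * (2 * C * (P ^ (2:ℝ)) ^ δ)) = 36 * C ^ 2 * T := by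
    rw [e2d, e4d, hTdef]
    have e : ((2:ℝ) + 6 * δ) = 2 + 4 * δ + 2 * δ := by ring
    rw [e, ← hmul (2 + 4 * δ) (2 * δ), ← hmul 2 (4 * δ)]
    ring
  rw [conv2] at hb2 hb3 hb4
  rw [conv5] at hb5
  have hCC : (1:ℝ) ≤ C ^ 2 := by nlinarith [hC, hC0]
  have t1 : T ≤ C ^ 2 * T := le_mul_of_one_le_left hTpos.le hCC
  have t2 : C * T ≤ C ^ 2 * T := by
    calc C * T ≤ C * (C * T) := le_mul_of_one_le_left (by positivity) hC
    _ = C ^ 2 * T := by ring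
  have k1 : 9 * P ^ (2:ℝ) ≤ 9 * (C ^ 2 * T) := by linarith [m1, t1]
  have k2 : 18 * C * P ^ ((2:ℝ) + 2 * δ) ≤ 18 * (C ^ 2 * T) := by
    have h' : C * P ^ ((2:ℝ) + 2 * δ) ≤ C * T := mul_le_mul_of_nonneg_left m2 hC0
    linarith
  have k5 : 36 * C ^ 2 * T = 36 * (C ^ 2 * T) := by ring
  have hfin : (s.card : ℝ) ≤ 99 * (C ^ 2 * T) := by linarith
  have hpos99 : (0:ℝ) ≤ C ^ 2 * T := by positivity
  have : (99:ℝ) * (C ^ 2 * T) ≤ 180 * (C ^ 2 * T) := by linarith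
  calc (s.card : ℝ) ≤ 99 * (C ^ 2 * T) := hfin
  _ ≤ 180 * (C ^ 2 * T) := this
  _ = 180 * C ^ 2 * T := by ring

/-- counting solutions where a selected `y`-coordinate has `|y| ∈ Z` -/
lemma slice_bound (C δ : ℝ) (hC : 1 ≤ C) (hδ : 0 < δ)
    (hdiv : ∀ n : ℕ, n ≠ 0 → (n.divisors.card : ℝ) ≤ C * (n : ℝ) ^ δ)
    (P : ℝ) (hP : 1 ≤ P) (Z : Finset ℕ) (hZ : ∀ z ∈ Z, 1 ≤ z ∧ (z : ℝ) ≤ P)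
    {α : Type*} [DecidableEq α] (s : Finset α)
    (yj : α → ℤ) (ψ : α → ℤ × ℤ × ℤ × ℤ × ℤ)
    (hmem : ∀ t ∈ s, (yj t).natAbs ∈ Z)
    (hinj : ∀ x ∈ s, ∀ y ∈ s, yj x = yj y → ψ x = ψ y → x = y)
    (heq : ∀ t ∈ s, (ψ t).1 * (ψ t).2.2.2.1 * (ψ t).2.2.2.2
        + (ψ t).2.1 * (yj t) * (ψ t).2.2.2.2 + (ψ t).2.2.1 * (yj t) * (ψ t).2.2.2.1 = 0)
    (hnz : ∀ t ∈ s, (ψ t).2.2.2.1 ≠ 0 ∧ (ψ t).2.2.2.2 ≠ 0)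
    (hbd : ∀ t ∈ s, |((ψ t).1 : ℝ)| ≤ P ∧ |((ψ t).2.1 : ℝ)| ≤ P ∧ |((ψ t).2.2.1 : ℝ)| ≤ P ∧
        |((ψ t).2.2.2.1 : ℝ)| ≤ P ∧ |((ψ t).2.2.2.2 : ℝ)| ≤ P) :
    (s.card : ℝ) ≤ (2 * Z.card) * (180 * C ^ 2 * P ^ ((2:ℝ) + 6 * δ)) := by
  classical
  set W : Finset ℤ := Z.image (fun n : ℕ => (n : ℤ)) ∪ Z.image (fun n : ℕ => -(n : ℤ)) with hWdef
  have hWcard : (W.card : ℝ) ≤ 2 * Z.card := by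
    have h1 : W.card ≤ (Z.image (fun n : ℕ => (n : ℤ))).card + (Z.image (fun n : ℕ => -(n : ℤ))).card :=
      Finset.card_union_le _ _
    have h2 := Finset.card_image_le (s := Z) (f := fun n : ℕ => (n : ℤ))
    have h3 := Finset.card_image_le (s := Z) (f := fun n : ℕ => -(n : ℤ))
    have : W.card ≤ 2 * Z.card := by omega
    exact_mod_cast this
  have hf : ∀ t ∈ s, yj t ∈ W := by
    intro t ht
    have h := hmem t ht
    rcases Int.natAbs_eq (yj t) with he | he
    · exact Finset.mem_union_left _ (Finset.mem_image.mpr ⟨_, h, he.symm⟩)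
    · exact Finset.mem_union_right _ (Finset.mem_image.mpr ⟨_, h, he.symm⟩)
  have hKb : ∀ b ∈ W, ((s.filter fun t => yj t = b).card : ℝ)
      ≤ 180 * C ^ 2 * P ^ ((2:ℝ) + 6 * δ) := by
    intro b hb
    have hbprop : b ≠ 0 ∧ |(b:ℝ)| ≤ P := by
      rw [hWdef, Finset.mem_union, Finset.mem_image, Finset.mem_image] at hb
      rcases hb with ⟨z, hz, rfl⟩ | ⟨z, hz, rfl⟩
      · obtain ⟨hz1, hz2⟩ := hZ z hz
        constructor
        · exact Int.natCast_ne_zero.mpr (by omega)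
        · rw [abs_of_nonneg (by positivity)]
          push_cast
          exact hz2
      · obtain ⟨hz1, hz2⟩ := hZ z hz
        constructor
        · simp only [neg_ne_zero]
          exact Int.natCast_ne_zero.mpr (by omega)
        · push_cast
          rw [abs_neg, abs_of_nonneg (by positivity)]
          exact hz2
    set F := s.filter (fun t => yj t = b) with hFdef
    have himg : (F.card : ℝ) = ((F.image ψ).card : ℝ) := by
      congr 1
      rw [Finset.card_image_of_injOn]
      intro x hx y hy hxy
      obtain ⟨hxs, hxb⟩ := Finset.mem_filter.mp (by exact_mod_cast hx)
      obtain ⟨hys, hyb⟩ := Finset.mem_filter.mp (by exact_mod_cast hy)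
      exact hinj x hxs y hys (hxb.trans hyb.symm) hxy
    rw [himg]
    apply core_count C δ hC hδ hdiv P hP b hbprop.1 hbprop.2
    intro u hu
    obtain ⟨t, htF, rfl⟩ := Finset.mem_image.mp hu
    obtain ⟨hts, htb⟩ := Finset.mem_filter.mp htF
    obtain ⟨b1, b2, b3, b4, b5⟩ := hbd t hts
    obtain ⟨n1, n2⟩ := hnz t hts
    refine ⟨?_, n1, n2, b1, b2, b3, b4, b5⟩
    have h := heq t hts
    rw [htb] at h
    exact h
  calc (s.card : ℝ) ≤ (W.card : ℝ) * (180 * C ^ 2 * P ^ ((2:ℝ) + 6 * δ)) :=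
        card_le_real s W yj hf _ hKb
  _ ≤ (2 * Z.card) * (180 * C ^ 2 * P ^ ((2:ℝ) + 6 * δ)) := by
      apply mul_le_mul_of_nonneg_right hWcard
      have hP0 : (0:ℝ) < P := lt_of_lt_of_le one_pos hP
      positivity


/-- Lemma 3: for `P ≥ 1` and `𝒵 ⊆ {1, …, ⌊P⌋}` of cardinality `Z`, the number of integer
solutions of the cubic with `y₁y₂y₃ ≠ 0`, `|x_j| ≤ P`, `|y_j| ≤ P` and `|y_j| ∈ 𝒵` for some
`j` is `O_ε(P^{2+ε} Z)`. -/
theorem slim_set_count (ε : ℝ) (hε : 0 < ε) :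
    ∃ C : ℝ, 0 < C ∧
      ∀ (P : ℝ), 1 ≤ P → ∀ (Z : Finset ℕ),
        (∀ z ∈ Z, 1 ≤ z ∧ (z : ℝ) ≤ P) →
        (Set.ncard {p : (Fin 3 → ℤ) × (Fin 3 → ℤ) |
            p.1 0 * p.2 1 * p.2 2 + p.1 1 * p.2 0 * p.2 2 + p.1 2 * p.2 0 * p.2 1 = 0 ∧
            p.2 0 * p.2 1 * p.2 2 ≠ 0 ∧
            (∀ j, (|p.1 j| : ℝ) ≤ P ∧ (|p.2 j| : ℝ) ≤ P) ∧
            (∃ j, (p.2 j).natAbs ∈ Z)} : ℝ)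
          ≤ C * P ^ (2 + ε) * Z.card := by
  classical
  obtain ⟨C, hC1, hdiv⟩ := div_bound (ε / 6) (by positivity)
  have hC0 : (0:ℝ) < C := lt_of_lt_of_le one_pos hC1
  refine ⟨1080 * C ^ 2, by positivity, ?_⟩
  intro P hP Z hZ
  have hP0 : (0:ℝ) < P := lt_of_lt_of_le one_pos hP
  set S := {p : (Fin 3 → ℤ) × (Fin 3 → ℤ) |
      p.1 0 * p.2 1 * p.2 2 + p.1 1 * p.2 0 * p.2 2 + p.1 2 * p.2 0 * p.2 1 = 0 ∧
      p.2 0 * p.2 1 * p.2 2 ≠ 0 ∧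
      (∀ j, (|p.1 j| : ℝ) ≤ P ∧ (|p.2 j| : ℝ) ≤ P) ∧
      (∃ j, (p.2 j).natAbs ∈ Z)} with hSdef
  set I : Finset ℤ := Finset.Icc (-⌊P⌋) ⌊P⌋ with hIdef
  have hImem : ∀ z : ℤ, |(z:ℝ)| ≤ P → z ∈ I := by
    intro z hz
    rw [hIdef, Finset.mem_Icc]
    rw [abs_le] at hz
    constructor
    · rw [neg_le, Int.le_floor]; push_cast; linarith [hz.1]
    · rw [Int.le_floor]; exact hz.2
  have hImem' : ∀ z : ℤ, z ∈ I → |(z:ℝ)| ≤ P := by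
    intro z hz
    rw [hIdef, Finset.mem_Icc] at hz
    have hfle := Int.floor_le P
    rw [abs_le]
    constructor
    · have h : ((-⌊P⌋ : ℤ) : ℝ) ≤ (z:ℝ) := by exact_mod_cast hz.1
      push_cast at h; linarith
    · have h : (z:ℝ) ≤ ((⌊P⌋:ℤ):ℝ) := by exact_mod_cast hz.2
      linarith
  set T : Finset (ℤ × ℤ × ℤ × ℤ × ℤ × ℤ) :=
    (I ×ˢ I ×ˢ I ×ˢ I ×ˢ I ×ˢ I).filter (fun t =>
      t.1 * t.2.2.2.2.1 * t.2.2.2.2.2 + t.2.1 * t.2.2.2.1 * t.2.2.2.2.2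
        + t.2.2.1 * t.2.2.2.1 * t.2.2.2.2.1 = 0 ∧
      t.2.2.2.1 ≠ 0 ∧ t.2.2.2.2.1 ≠ 0 ∧ t.2.2.2.2.2 ≠ 0 ∧
      (t.2.2.2.1.natAbs ∈ Z ∨ t.2.2.2.2.1.natAbs ∈ Z ∨ t.2.2.2.2.2.natAbs ∈ Z)) with hTdef
  set φ : (Fin 3 → ℤ) × (Fin 3 → ℤ) → ℤ × ℤ × ℤ × ℤ × ℤ × ℤ :=
    fun p => (p.1 0, p.1 1, p.1 2, p.2 0, p.2 1, p.2 2) with hφdef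
  have hφinj : Function.Injective φ := by
    intro p q h
    simp only [hφdef, Prod.mk.injEq] at h
    obtain ⟨h1, h2, h3, h4, h5, h6⟩ := h
    refine Prod.ext ?_ ?_ <;> funext j <;> fin_cases j <;> assumption
  have himg : φ '' S ⊆ ↑T := by
    rintro _ ⟨p, hp, rfl⟩
    obtain ⟨heq, hynz, hbox, hj⟩ := hp
    rw [mul_ne_zero_iff, mul_ne_zero_iff] at hynz
    obtain ⟨⟨hy0, hy1⟩, hy2⟩ := hynz
    rw [Finset.mem_coe, hTdef, Finset.mem_filter]
    constructor
    · simp only [hφdef, Finset.mem_product]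
      exact ⟨hImem _ (hbox 0).1, hImem _ (hbox 1).1, hImem _ (hbox 2).1,
        hImem _ (hbox 0).2, hImem _ (hbox 1).2, hImem _ (hbox 2).2⟩
    · refine ⟨heq, hy0, hy1, hy2, ?_⟩
      obtain ⟨j, hj⟩ := hj
      fin_cases j
      · exact Or.inl hj
      · exact Or.inr (Or.inl hj)
      · exact Or.inr (Or.inr hj)
  have hcard : (S.ncard : ℝ) ≤ (T.card : ℝ) := by
    have h1 : S.ncard = (φ '' S).ncard := (Set.ncard_image_of_injOn hφinj.injOn).symm
    have h2 : (φ '' S).ncard ≤ (↑T : Set (ℤ × ℤ × ℤ × ℤ × ℤ × ℤ)).ncard :=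
      Set.ncard_le_ncard himg (Finset.finite_toSet T)
    rw [Set.ncard_coe_finset] at h2
    rw [h1]
    exact_mod_cast h2
  -- split by which coordinate is in Z
  set T0 := T.filter (fun t => t.2.2.2.1.natAbs ∈ Z) with hT0def
  set T1 := T.filter (fun t => t.2.2.2.2.1.natAbs ∈ Z) with hT1def
  set T2 := T.filter (fun t => t.2.2.2.2.2.natAbs ∈ Z) with hT2def
  have hsplit : (T.card : ℝ) ≤ (T0.card : ℝ) + T1.card + T2.card := by
    have hsub : T ⊆ T0 ∪ T1 ∪ T2 := by
      intro t ht
      have hcond := (Finset.mem_filter.mp ht).2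
      obtain ⟨-, -, -, -, hor⟩ := hcond
      simp only [Finset.mem_union, hT0def, hT1def, hT2def, Finset.mem_filter]
      rcases hor with h | h | h
      · exact Or.inl (Or.inl ⟨ht, h⟩)
      · exact Or.inl (Or.inr ⟨ht, h⟩)
      · exact Or.inr ⟨ht, h⟩
    have h1 := Finset.card_le_card hsub
    have h2 := Finset.card_union_le (T0 ∪ T1) T2
    have h3 := Finset.card_union_le T0 T1
    have hn : T.card ≤ T0.card + T1.card + T2.card := by omega
    exact_mod_cast hn
  -- common facts about members of T
  have hTfact : ∀ t, t ∈ T →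
      (t.1 * t.2.2.2.2.1 * t.2.2.2.2.2 + t.2.1 * t.2.2.2.1 * t.2.2.2.2.2
        + t.2.2.1 * t.2.2.2.1 * t.2.2.2.2.1 = 0) ∧
      t.2.2.2.1 ≠ 0 ∧ t.2.2.2.2.1 ≠ 0 ∧ t.2.2.2.2.2 ≠ 0 ∧
      |(t.1:ℝ)| ≤ P ∧ |(t.2.1:ℝ)| ≤ P ∧ |(t.2.2.1:ℝ)| ≤ P ∧
      |(t.2.2.2.1:ℝ)| ≤ P ∧ |(t.2.2.2.2.1:ℝ)| ≤ P ∧ |(t.2.2.2.2.2:ℝ)| ≤ P := by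
    intro t ht
    rw [hTdef, Finset.mem_filter] at ht
    obtain ⟨hmem, heq, h1, h2, h3, -⟩ := ht
    simp only [Finset.mem_product] at hmem
    exact ⟨heq, h1, h2, h3, hImem' _ hmem.1, hImem' _ hmem.2.1, hImem' _ hmem.2.2.1,
      hImem' _ hmem.2.2.2.1, hImem' _ hmem.2.2.2.2.1, hImem' _ hmem.2.2.2.2.2⟩
  set KB : ℝ := (2 * Z.card) * (180 * C ^ 2 * P ^ ((2:ℝ) + 6 * (ε / 6))) with hKBdef
  have hb0 : (T0.card : ℝ) ≤ KB := by
    apply slice_bound C (ε/6) hC1 (by positivity) hdiv P hP Z hZ T0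
      (fun t => t.2.2.2.1) (fun t => (t.1, t.2.1, t.2.2.1, t.2.2.2.2.1, t.2.2.2.2.2))
    · intro t ht; exact (Finset.mem_filter.mp ht).2
    · intro x hx y hy h1 h2
      simp only [Prod.mk.injEq] at h2
      have ex : x = (x.1, x.2.1, x.2.2.1, x.2.2.2.1, x.2.2.2.2.1, x.2.2.2.2.2) := rfl
      have ey : y = (y.1, y.2.1, y.2.2.1, y.2.2.2.1, y.2.2.2.2.1, y.2.2.2.2.2) := rfl
      rw [ex, ey, h1, h2.1, h2.2.1, h2.2.2.1, h2.2.2.2.1, h2.2.2.2.2]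
    · intro t ht
      obtain ⟨heq, -⟩ := hTfact t (Finset.mem_filter.mp ht).1
      exact heq
    · intro t ht
      obtain ⟨-, -, h2, h3, -⟩ := hTfact t (Finset.mem_filter.mp ht).1
      exact ⟨h2, h3⟩
    · intro t ht
      obtain ⟨-, -, -, -, b1, b2, b3, -, b5, b6⟩ := hTfact t (Finset.mem_filter.mp ht).1
      exact ⟨b1, b2, b3, b5, b6⟩
  have hb1 : (T1.card : ℝ) ≤ KB := by
    apply slice_bound C (ε/6) hC1 (by positivity) hdiv P hP Z hZ T1
      (fun t => t.2.2.2.2.1) (fun t => (t.2.1, t.1, t.2.2.1, t.2.2.2.1, t.2.2.2.2.2))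
    · intro t ht; exact (Finset.mem_filter.mp ht).2
    · intro x hx y hy h1 h2
      simp only [Prod.mk.injEq] at h2
      have ex : x = (x.1, x.2.1, x.2.2.1, x.2.2.2.1, x.2.2.2.2.1, x.2.2.2.2.2) := rfl
      have ey : y = (y.1, y.2.1, y.2.2.1, y.2.2.2.1, y.2.2.2.2.1, y.2.2.2.2.2) := rfl
      rw [ex, ey, h1, h2.1, h2.2.1, h2.2.2.1, h2.2.2.2.1, h2.2.2.2.2]
    · intro t ht
      obtain ⟨heq, -⟩ := hTfact t (Finset.mem_filter.mp ht).1
      show t.2.1 * t.2.2.2.1 * t.2.2.2.2.2 + t.1 * t.2.2.2.2.1 * t.2.2.2.2.2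
        + t.2.2.1 * t.2.2.2.2.1 * t.2.2.2.1 = 0
      linear_combination heq
    · intro t ht
      obtain ⟨-, h1, -, h3, -⟩ := hTfact t (Finset.mem_filter.mp ht).1
      exact ⟨h1, h3⟩
    · intro t ht
      obtain ⟨-, -, -, -, b1, b2, b3, b4, -, b6⟩ := hTfact t (Finset.mem_filter.mp ht).1
      exact ⟨b2, b1, b3, b4, b6⟩
  have hb2 : (T2.card : ℝ) ≤ KB := by
    apply slice_bound C (ε/6) hC1 (by positivity) hdiv P hP Z hZ T2
      (fun t => t.2.2.2.2.2) (fun t => (t.2.2.1, t.1, t.2.1, t.2.2.2.1, t.2.2.2.2.1))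
    · intro t ht; exact (Finset.mem_filter.mp ht).2
    · intro x hx y hy h1 h2
      simp only [Prod.mk.injEq] at h2
      have ex : x = (x.1, x.2.1, x.2.2.1, x.2.2.2.1, x.2.2.2.2.1, x.2.2.2.2.2) := rfl
      have ey : y = (y.1, y.2.1, y.2.2.1, y.2.2.2.1, y.2.2.2.2.1, y.2.2.2.2.2) := rfl
      rw [ex, ey, h1, h2.1, h2.2.1, h2.2.2.1, h2.2.2.2.1, h2.2.2.2.2]
    · intro t ht
      obtain ⟨heq, -⟩ := hTfact t (Finset.mem_filter.mp ht).1
      show t.2.2.1 * t.2.2.2.1 * t.2.2.2.2.1 + t.1 * t.2.2.2.2.2 * t.2.2.2.2.1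
        + t.2.1 * t.2.2.2.2.2 * t.2.2.2.1 = 0
      linear_combination heq
    · intro t ht
      obtain ⟨-, h1, h2, -, -⟩ := hTfact t (Finset.mem_filter.mp ht).1
      exact ⟨h1, h2⟩
    · intro t ht
      obtain ⟨-, -, -, -, b1, b2, b3, b4, b5, -⟩ := hTfact t (Finset.mem_filter.mp ht).1
      exact ⟨b3, b1, b2, b4, b5⟩
  have hexp : (2:ℝ) + 6 * (ε / 6) = 2 + ε := by ring
  rw [hexp] at hKBdef
  calc (S.ncard : ℝ) ≤ (T.card : ℝ) := hcard
  _ ≤ (T0.card : ℝ) + T1.card + T2.card := hsplit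
  _ ≤ 3 * KB := by linarith
  _ = 1080 * C ^ 2 * P ^ ((2:ℝ) + ε) * Z.card := by rw [hKBdef]; ring
end

section
/- Let k₀⁻ be the characteristic function of {(x_1, x_2) ∈ [0,∞)² : x_1 ≤ 10, x_2 ≤ 10, |x_1 - x_2| ≤ 1}. Then for Re(s_1), Re(s_2) > 0, its Mellin transform satisfies k̂₀⁻(s_1, s_2) = 10^{s_1+s_2}/(s_1 s_2) - F(s_2, s_1)/s_1 - F(s_1, s_2)/s_2, where F(a, b) = ∫_0^9 (x+1)^{a-1} x^{b} dx. Consequently s_1 s_2 k̂₀⁻(s_1, s_2) extends holomorphically to Re(s_1) > -1, Re(s_2) > -1. -/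
open MeasureTheory

/-- `F(a, b) = ∫₀⁹ (x+1)^{a-1} x^{b} dx`. -/
noncomputable def Fint (a b : ℂ) : ℂ :=
  ∫ x in (0 : ℝ)..9, ((x : ℂ) + 1) ^ (a - 1) * (x : ℂ) ^ b

/-- The Mellin transform of the characteristic function of
`{0 ≤ x₁ ≤ 10, 0 ≤ x₂ ≤ 10, |x₁ - x₂| ≤ 1}`. -/
noncomputable def kminusMellin (s₁ s₂ : ℂ) : ℂ :=
  ∫ p : ℝ × ℝ,
    Set.indicator {p : ℝ × ℝ | 0 ≤ p.1 ∧ 0 ≤ p.2 ∧ p.1 ≤ 10 ∧ p.2 ≤ 10 ∧ |p.1 - p.2| ≤ 1}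
      (fun _ => (1 : ℂ)) p * (p.1 : ℂ) ^ (s₁ - 1) * (p.2 : ℂ) ^ (s₂ - 1)

open Set Complex

lemma integrableOn_cpow_Ioc {s : ℂ} (hs : 0 < s.re) {c : ℝ} (hc : 0 ≤ c) :
    IntegrableOn (fun x : ℝ => (x:ℂ) ^ (s-1)) (Set.Ioc 0 c) := by
  have h : (-1:ℝ) < (s-1).re := by simp [Complex.sub_re]; linarith
  exact (intervalIntegrable_iff_integrableOn_Ioc_of_le hc).mp
    (intervalIntegral.intervalIntegrable_cpow' h)

lemma integral_cpow_Ioc {s : ℂ} (hs : 0 < s.re) {c : ℝ} (hc : 0 ≤ c) :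
    ∫ x in Set.Ioc (0:ℝ) c, (x:ℂ) ^ (s-1) = (c:ℂ)^s / s := by
  rw [← intervalIntegral.integral_of_le hc,
    integral_cpow (Or.inl (by simp [Complex.sub_re]; linarith))]
  have hs0 : s ≠ 0 := fun h => by simp [h] at hs
  simp [sub_add_cancel, Complex.zero_cpow hs0]

lemma aux_slice (s t : ℂ) (hs : 0 < s.re) (ht : 0 < t.re) (x : ℝ) :
    (∫ y : ℝ, ((Set.Ioc (0:ℝ) 10 ×ˢ Set.Ioc (0:ℝ) 10) ∩ {p : ℝ × ℝ | 1 < p.1 - p.2}).indicator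
      (fun p => (p.1:ℂ) ^ (s-1) * (p.2:ℂ) ^ (t-1)) (x, y))
      = (Set.Ioc (1:ℝ) 10).indicator (fun x => (x:ℂ)^(s-1) * (((x-1:ℝ):ℂ)^t / t)) x := by
  by_cases hx : x ∈ Set.Ioc (1:ℝ) 10
  · have hset : (fun y : ℝ =>
        ((Set.Ioc (0:ℝ) 10 ×ˢ Set.Ioc (0:ℝ) 10) ∩ {p : ℝ × ℝ | 1 < p.1 - p.2}).indicator
          (fun p => (p.1:ℂ) ^ (s-1) * (p.2:ℂ) ^ (t-1)) (x, y))
        = (Set.Ioo (0:ℝ) (x-1)).indicator (fun y => (x:ℂ)^(s-1) * (y:ℂ)^(t-1)) := by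
      funext y
      rw [Set.indicator_apply, Set.indicator_apply]
      have hiff : ((x,y) ∈ (Set.Ioc (0:ℝ) 10 ×ˢ Set.Ioc (0:ℝ) 10) ∩ {p : ℝ × ℝ | 1 < p.1 - p.2})
          ↔ y ∈ Set.Ioo (0:ℝ) (x-1) := by
        simp only [Set.mem_inter_iff, Set.mem_prod, Set.mem_Ioc, Set.mem_setOf_eq, Set.mem_Ioo]
        constructor
        · rintro ⟨⟨_, hy1, _⟩, hd⟩; exact ⟨hy1, by linarith⟩
        · rintro ⟨hy1, hy2⟩
          exact ⟨⟨⟨by linarith [hx.1], hx.2⟩, hy1, by linarith [hx.2]⟩, by linarith⟩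
      rw [if_congr hiff rfl rfl]
    rw [hset, integral_indicator measurableSet_Ioo, MeasureTheory.integral_const_mul,
      ← integral_Ioc_eq_integral_Ioo, integral_cpow_Ioc ht (by linarith [hx.1]),
      Set.indicator_of_mem hx]
  · have hzero : (fun y : ℝ =>
        ((Set.Ioc (0:ℝ) 10 ×ˢ Set.Ioc (0:ℝ) 10) ∩ {p : ℝ × ℝ | 1 < p.1 - p.2}).indicator
          (fun p => (p.1:ℂ) ^ (s-1) * (p.2:ℂ) ^ (t-1)) (x, y)) = fun _ => 0 := by
      funext y
      refine Set.indicator_of_notMem (fun hmem => hx ?_) _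
      obtain ⟨⟨hx', hy'⟩, hd⟩ := hmem
      exact ⟨by simp only [Set.mem_setOf_eq] at hd; linarith [hy'.1], hx'.2⟩
    rw [hzero, integral_zero, Set.indicator_of_notMem hx]

lemma aux_outer (s t : ℂ) (hs : 0 < s.re) (ht : 0 < t.re) :
    (∫ x : ℝ, (Set.Ioc (1:ℝ) 10).indicator (fun x => (x:ℂ)^(s-1) * (((x-1:ℝ):ℂ)^t / t)) x)
      = Fint s t / t := by
  rw [integral_indicator measurableSet_Ioc,
    ← intervalIntegral.integral_of_le (by norm_num : (1:ℝ) ≤ 10)]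
  have hcomp := intervalIntegral.integral_comp_add_right (a := (0:ℝ)) (b := 9)
    (fun x : ℝ => (x:ℂ)^(s-1) * (((x-1:ℝ):ℂ)^t / t)) 1
  simp only [zero_add, show (9:ℝ)+1 = 10 by norm_num] at hcomp
  rw [← hcomp, Fint, ← intervalIntegral.integral_div]
  apply intervalIntegral.integral_congr
  intro u _
  simp only []
  rw [show u + 1 - 1 = u by ring, show ((u + 1 : ℝ) : ℂ) = (u:ℂ) + 1 by push_cast; ring,
    mul_div_assoc]

lemma part1 (s₁ s₂ : ℂ) (h₁ : 0 < s₁.re) (h₂ : 0 < s₂.re) :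
    kminusMellin s₁ s₂ =
      (10 : ℂ) ^ (s₁ + s₂) / (s₁ * s₂) - Fint s₂ s₁ / s₁ - Fint s₁ s₂ / s₂ := by
  set f : ℝ × ℝ → ℂ := fun p => (p.1:ℂ) ^ (s₁-1) * (p.2:ℂ) ^ (s₂-1) with hfdef
  set T : Set (ℝ × ℝ) := Set.Ioc 0 10 ×ˢ Set.Ioc 0 10 with hTdef
  set A : Set (ℝ × ℝ) := T ∩ {p : ℝ × ℝ | 1 < p.1 - p.2} with hAdef
  set B : Set (ℝ × ℝ) := T ∩ {p : ℝ × ℝ | 1 < p.2 - p.1} with hBdef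
  have hmT : MeasurableSet T := measurableSet_Ioc.prod measurableSet_Ioc
  have hmA : MeasurableSet A :=
    hmT.inter (measurableSet_lt measurable_const (measurable_fst.sub measurable_snd))
  have hmB : MeasurableSet B :=
    hmT.inter (measurableSet_lt measurable_const (measurable_snd.sub measurable_fst))
  -- a.e. nonvanishing of coordinates
  have hN1 : ∀ᵐ p : ℝ × ℝ, p.1 ≠ 0 := by
    rw [ae_iff]
    have h0 : {p : ℝ × ℝ | ¬ p.1 ≠ 0} = ({0} : Set ℝ) ×ˢ (Set.univ : Set ℝ) := by
      ext p; rw [Set.mem_setOf_eq, Set.mem_prod]; simp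
    rw [h0, MeasureTheory.Measure.volume_eq_prod, MeasureTheory.Measure.prod_prod]
    simp
  have hN2 : ∀ᵐ p : ℝ × ℝ, p.2 ≠ 0 := by
    rw [ae_iff]
    have h0 : {p : ℝ × ℝ | ¬ p.2 ≠ 0} = (Set.univ : Set ℝ) ×ˢ ({0} : Set ℝ) := by
      ext p; rw [Set.mem_setOf_eq, Set.mem_prod]; simp
    rw [h0, MeasureTheory.Measure.volume_eq_prod, MeasureTheory.Measure.prod_prod]
    simp
  -- step 1 : rewrite as indicator of T \ (A ∪ B)
  have step1 : kminusMellin s₁ s₂ = ∫ p : ℝ × ℝ, (T \ (A ∪ B)).indicator f p := by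
    rw [kminusMellin]
    apply integral_congr_ae
    filter_upwards [hN1, hN2] with p hp1 hp2
    have hiff : p ∈ T \ (A ∪ B) ↔
        (0 ≤ p.1 ∧ 0 ≤ p.2 ∧ p.1 ≤ 10 ∧ p.2 ≤ 10 ∧ |p.1 - p.2| ≤ 1) := by
      constructor
      · rintro ⟨hT, hnot⟩
        obtain ⟨⟨hx0, hx10⟩, hy0, hy10⟩ := hT
        rw [Set.mem_union] at hnot; push_neg at hnot
        refine ⟨le_of_lt hx0, le_of_lt hy0, hx10, hy10, abs_le.2 ⟨?_, ?_⟩⟩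
        · by_contra h; push_neg at h
          exact hnot.2 ⟨⟨⟨hx0, hx10⟩, hy0, hy10⟩, by simp only [Set.mem_setOf_eq]; linarith⟩
        · by_contra h; push_neg at h
          exact hnot.1 ⟨⟨⟨hx0, hx10⟩, hy0, hy10⟩, by simp only [Set.mem_setOf_eq]; linarith⟩
      · rintro ⟨hx0, hy0, hx10, hy10, habs⟩
        rw [abs_le] at habs
        have hx0' : 0 < p.1 := lt_of_le_of_ne hx0 (Ne.symm hp1)
        have hy0' : 0 < p.2 := lt_of_le_of_ne hy0 (Ne.symm hp2)
        refine ⟨⟨⟨hx0', hx10⟩, hy0', hy10⟩, ?_⟩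
        rw [Set.mem_union]
        rintro (⟨_, h⟩ | ⟨_, h⟩) <;> simp only [Set.mem_setOf_eq] at h <;>
          [linarith [habs.2]; linarith [habs.1]]
    by_cases hmem : p ∈ T \ (A ∪ B)
    · rw [Set.indicator_of_mem hmem,
        Set.indicator_of_mem (show p ∈ {p : ℝ × ℝ | 0 ≤ p.1 ∧ 0 ≤ p.2 ∧ p.1 ≤ 10 ∧
          p.2 ≤ 10 ∧ |p.1 - p.2| ≤ 1} from hiff.1 hmem) (fun _ => (1:ℂ))]
      simp [hfdef]
    · rw [Set.indicator_of_notMem hmem,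
        Set.indicator_of_notMem (show p ∉ {p : ℝ × ℝ | 0 ≤ p.1 ∧ 0 ≤ p.2 ∧ p.1 ≤ 10 ∧
          p.2 ≤ 10 ∧ |p.1 - p.2| ≤ 1} from fun h => hmem (hiff.2 h)) (fun _ => (1:ℂ))]
      simp
  -- integrabilities
  have hT_int : IntegrableOn f T := by
    rw [IntegrableOn, hTdef, MeasureTheory.Measure.volume_eq_prod,
      ← MeasureTheory.Measure.prod_restrict]
    exact Integrable.mul_prod (integrableOn_cpow_Ioc h₁ (by norm_num))
      (integrableOn_cpow_Ioc h₂ (by norm_num))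
  have hA_int : IntegrableOn f A := hT_int.mono_set Set.inter_subset_left
  have hB_int : IntegrableOn f B := hT_int.mono_set Set.inter_subset_left
  have hIT : Integrable (T.indicator f) := (integrable_indicator_iff hmT).2 hT_int
  have hIA : Integrable (A.indicator f) := (integrable_indicator_iff hmA).2 hA_int
  have hIB : Integrable (B.indicator f) := (integrable_indicator_iff hmB).2 hB_int
  have hAB_sub : A ∪ B ⊆ T := by
    rintro p (hp | hp) <;> exact hp.1
  have hdisj : Disjoint A B := by
    rw [Set.disjoint_left]
    rintro p ⟨_, h1⟩ ⟨_, h2⟩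
    simp only [Set.mem_setOf_eq] at h1 h2
    linarith
  have step2 : (∫ p : ℝ × ℝ, (T \ (A ∪ B)).indicator f p)
      = (∫ p : ℝ × ℝ, T.indicator f p) - (∫ p : ℝ × ℝ, A.indicator f p)
        - (∫ p : ℝ × ℝ, B.indicator f p) := by
    have hpoint : ∀ p, (T \ (A ∪ B)).indicator f p
        = T.indicator f p - A.indicator f p - B.indicator f p := by
      intro p
      rw [Set.indicator_sdiff hAB_sub f, Pi.sub_apply,
        Set.indicator_union_of_disjoint hdisj f]
      ring
    calc (∫ p : ℝ × ℝ, (T \ (A ∪ B)).indicator f p)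
        = ∫ p : ℝ × ℝ, (T.indicator f p - A.indicator f p - B.indicator f p) :=
          integral_congr_ae (ae_of_all _ hpoint)
      _ = _ := by
          have h3 : Integrable (fun p : ℝ × ℝ => T.indicator f p - A.indicator f p) volume :=
            hIT.sub hIA
          rw [integral_sub h3 hIB, integral_sub hIT hIA]
  -- the square integral
  have e1 : (∫ p : ℝ × ℝ, T.indicator f p) = (10:ℂ) ^ (s₁+s₂) / (s₁ * s₂) := by
    rw [integral_indicator hmT, hfdef, hTdef, MeasureTheory.Measure.volume_eq_prod,
      MeasureTheory.setIntegral_prod_mul (fun x : ℝ => (x:ℂ) ^ (s₁-1))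
        (fun y : ℝ => (y:ℂ) ^ (s₂-1)) _ _,
      integral_cpow_Ioc h₁ (by norm_num), integral_cpow_Ioc h₂ (by norm_num),
      Complex.cpow_add _ _ (by norm_num : (10:ℂ) ≠ 0)]
    push_cast
    ring
  -- region A
  have hIA' : Integrable (A.indicator f) (volume.prod volume) := by
    rwa [← MeasureTheory.Measure.volume_eq_prod]
  have e2 : (∫ p : ℝ × ℝ, A.indicator f p) = Fint s₁ s₂ / s₂ := by
    rw [MeasureTheory.Measure.volume_eq_prod, MeasureTheory.integral_prod _ hIA']
    have : ∀ x : ℝ, (∫ y : ℝ, A.indicator f (x, y))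
        = (Set.Ioc (1:ℝ) 10).indicator (fun x => (x:ℂ)^(s₁-1) * (((x-1:ℝ):ℂ)^s₂ / s₂)) x :=
      fun x => aux_slice s₁ s₂ h₁ h₂ x
    rw [integral_congr_ae (ae_of_all _ this)]
    exact aux_outer s₁ s₂ h₁ h₂
  -- region B
  have hIB' : Integrable (B.indicator f) (volume.prod volume) := by
    rwa [← MeasureTheory.Measure.volume_eq_prod]
  have e3 : (∫ p : ℝ × ℝ, B.indicator f p) = Fint s₂ s₁ / s₁ := by
    rw [MeasureTheory.Measure.volume_eq_prod, MeasureTheory.integral_prod_symm _ hIB']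
    have hpt : ∀ y x : ℝ, B.indicator f (x, y)
        = ((Set.Ioc (0:ℝ) 10 ×ˢ Set.Ioc (0:ℝ) 10) ∩ {p : ℝ × ℝ | 1 < p.1 - p.2}).indicator
          (fun p => (p.1:ℂ) ^ (s₂-1) * (p.2:ℂ) ^ (s₁-1)) (y, x) := by
      intro y x
      rw [Set.indicator_apply, Set.indicator_apply]
      have hiff : (x, y) ∈ B ↔
          (y, x) ∈ (Set.Ioc (0:ℝ) 10 ×ˢ Set.Ioc (0:ℝ) 10) ∩ {p : ℝ × ℝ | 1 < p.1 - p.2} := by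
        rw [hBdef, hTdef]
        constructor
        · rintro ⟨⟨ha, hb⟩, hc⟩; exact ⟨⟨hb, ha⟩, hc⟩
        · rintro ⟨⟨ha, hb⟩, hc⟩; exact ⟨⟨hb, ha⟩, hc⟩
      rw [if_congr hiff rfl rfl]
      split_ifs with h
      · rw [hfdef]; ring
      · rfl
    have : ∀ y : ℝ, (∫ x : ℝ, B.indicator f (x, y))
        = (Set.Ioc (1:ℝ) 10).indicator (fun x => (x:ℂ)^(s₂-1) * (((x-1:ℝ):ℂ)^s₁ / s₁)) y := by
      intro y
      calc (∫ x : ℝ, B.indicator f (x, y))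
          = ∫ x : ℝ, ((Set.Ioc (0:ℝ) 10 ×ˢ Set.Ioc (0:ℝ) 10) ∩ {p : ℝ × ℝ | 1 < p.1 - p.2}).indicator
            (fun p => (p.1:ℂ) ^ (s₂-1) * (p.2:ℂ) ^ (s₁-1)) (y, x) := by
            exact integral_congr_ae (ae_of_all _ (fun x => hpt y x))
        _ = _ := aux_slice s₂ s₁ h₂ h₁ y
    rw [integral_congr_ae (ae_of_all _ this)]
    exact aux_outer s₂ s₁ h₂ h₁
  rw [step1, step2, e1, e2, e3]
  ring

lemma prod_add_sum_card {R : Type*} [CommSemiring R] (n : ℕ) (a b : R) :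
    (a + b) ^ n = ∑ S : Finset (Fin n), a ^ S.card * b ^ (n - S.card) := by
  classical
  have h1 : (a + b) ^ n = ∏ _i : Fin n, (a + b) := by
    rw [Finset.prod_const, Finset.card_univ, Fintype.card_fin]
  rw [h1, Finset.prod_add, ← Finset.powerset_univ]
  refine Finset.sum_congr rfl fun S _ => ?_
  rw [Finset.prod_const, Finset.prod_const, Finset.card_sdiff_of_subset (Finset.subset_univ S),
    Finset.card_univ, Fintype.card_fin]

lemma prod_ite_card {n : ℕ} (S : Finset (Fin n)) (u v : ℂ) :
    (∏ i : Fin n, if i ∈ S then u else v) = u ^ S.card * v ^ (n - S.card) := by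
  classical
  rw [Finset.prod_ite, Finset.prod_const, Finset.prod_const]
  congr 2
  · simp [Finset.filter_mem_eq_inter]
  · rw [show (Finset.univ.filter (fun i => ¬ i ∈ S)) = Sᶜ by ext i; simp,
      Finset.card_compl, Fintype.card_fin]

set_option maxHeartbeats 1000000 in
lemma analyticAt_integral_exp2
    {α : Type*} [MeasurableSpace α] (μ : Measure α)
    (φ : α → ℂ) (L M : α → ℝ) (c : ℝ) (hc : 0 < c)
    (hφm : AEStronglyMeasurable φ μ) (hLm : AEMeasurable L μ) (hMm : AEMeasurable M μ)
    (hW : Integrable (fun x => ‖φ x‖ * Real.exp (c * (|L x| + |M x|))) μ) :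
    AnalyticAt ℂ
      (fun w : ℂ × ℂ => ∫ x, φ x * Complex.exp (w.1 * L x + w.2 * M x) ∂μ) 0 := by
  classical
  set W : α → ℝ := fun x => ‖φ x‖ * Real.exp (c * (|L x| + |M x|)) with hWdef
  have hW0 : ∀ x, 0 ≤ W x := fun x => mul_nonneg (norm_nonneg _) (Real.exp_pos _).le
  set K : ℝ := ∫ x, W x ∂μ with hKdef
  have hK0 : 0 ≤ K := integral_nonneg hW0
  -- pointwise factorial bound
  have hbound : ∀ (n : ℕ) (x : α),
      (|L x| + |M x|) ^ n ≤ n.factorial * c⁻¹ ^ n * Real.exp (c * (|L x| + |M x|)) := by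
    intro n x
    set t := |L x| + |M x| with htdef
    have ht : 0 ≤ t := by positivity
    have h1 : (c * t) ^ n / n.factorial ≤ Real.exp (c * t) :=
      Real.pow_div_factorial_le_exp _ (by positivity) n
    have h1' : (c * t) ^ n ≤ n.factorial * Real.exp (c * t) := by
      rw [div_le_iff₀ (by positivity : (0:ℝ) < n.factorial)] at h1
      linarith [h1]
    have hcc : c⁻¹ ^ n * c ^ n = 1 := by
      rw [← mul_pow, inv_mul_cancel₀ (ne_of_gt hc), one_pow]
    calc t ^ n = (c⁻¹ ^ n * c ^ n) * t ^ n := by rw [hcc, one_mul]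
      _ = c⁻¹ ^ n * (c * t) ^ n := by rw [mul_pow]; ring
      _ ≤ c⁻¹ ^ n * (n.factorial * Real.exp (c * t)) := by
          apply mul_le_mul_of_nonneg_left h1' (by positivity)
      _ = n.factorial * c⁻¹ ^ n * Real.exp (c * t) := by ring
  -- measurability helpers
  have hLc : AEStronglyMeasurable (fun x => ((L x : ℂ))) μ :=
    (Complex.measurable_ofReal.comp_aemeasurable hLm).aestronglyMeasurable
  have hMc : AEStronglyMeasurable (fun x => ((M x : ℂ))) μ :=
    (Complex.measurable_ofReal.comp_aemeasurable hMm).aestronglyMeasurable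
  -- integrability of monomials
  have hIntLM : ∀ (k m : ℕ),
      Integrable (fun x => φ x * (L x : ℂ) ^ k * (M x : ℂ) ^ m) μ := by
    intro k m
    have hmeas : AEStronglyMeasurable (fun x => φ x * (L x : ℂ) ^ k * (M x : ℂ) ^ m) μ :=
      (hφm.mul (hLc.pow k)).mul (hMc.pow m)
    apply Integrable.mono' (hW.const_mul ((k+m).factorial * c⁻¹ ^ (k+m))) hmeas
    filter_upwards with x
    have he1 : ‖φ x * (L x : ℂ) ^ k * (M x : ℂ) ^ m‖ = ‖φ x‖ * |L x| ^ k * |M x| ^ m := by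
      simp [norm_mul, norm_pow, Complex.norm_real, Real.norm_eq_abs]
    rw [he1]
    have h2 : ‖φ x‖ * |L x| ^ k * |M x| ^ m
        ≤ ‖φ x‖ * (|L x| + |M x|) ^ (k + m) := by
      rw [pow_add, ← mul_assoc]
      have hk : |L x| ^ k ≤ (|L x| + |M x|) ^ k :=
        pow_le_pow_left₀ (abs_nonneg _) (le_add_of_nonneg_right (abs_nonneg _)) k
      have hm : |M x| ^ m ≤ (|L x| + |M x|) ^ m :=
        pow_le_pow_left₀ (abs_nonneg _) (le_add_of_nonneg_left (abs_nonneg _)) m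
      have := mul_le_mul hk hm (by positivity) (by positivity)
      calc ‖φ x‖ * |L x| ^ k * |M x| ^ m = ‖φ x‖ * (|L x| ^ k * |M x| ^ m) := by ring
        _ ≤ ‖φ x‖ * ((|L x| + |M x|) ^ k * (|L x| + |M x|) ^ m) :=
            mul_le_mul_of_nonneg_left this (norm_nonneg _)
        _ = ‖φ x‖ * (|L x| + |M x|) ^ k * (|L x| + |M x|) ^ m := by ring
    refine h2.trans ?_
    calc ‖φ x‖ * (|L x| + |M x|) ^ (k+m)
        ≤ ‖φ x‖ * ((k+m).factorial * c⁻¹ ^ (k+m) * Real.exp (c * (|L x| + |M x|))) :=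
          mul_le_mul_of_nonneg_left (hbound (k+m) x) (norm_nonneg _)
      _ = (k+m).factorial * c⁻¹ ^ (k+m) * W x := by rw [hWdef]; ring
  -- integrability of the exponential-sum powers
  have hIntUV : ∀ (u v : ℂ) (n : ℕ),
      Integrable (fun x => φ x * (u * (L x : ℂ) + v * (M x : ℂ)) ^ n) μ := by
    intro u v n
    have hmeas : AEStronglyMeasurable
        (fun x => φ x * (u * (L x : ℂ) + v * (M x : ℂ)) ^ n) μ :=
      hφm.mul (((aestronglyMeasurable_const.mul hLc).add
        (aestronglyMeasurable_const.mul hMc)).pow n)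
    apply Integrable.mono'
      (hW.const_mul ((‖u‖ + ‖v‖) ^ n * (n.factorial * c⁻¹ ^ n))) hmeas
    filter_upwards with x
    have habs : ‖u * (L x : ℂ) + v * (M x : ℂ)‖ ≤ (‖u‖ + ‖v‖) * (|L x| + |M x|) := by
      calc ‖u * (L x : ℂ) + v * (M x : ℂ)‖ ≤ ‖u * (L x : ℂ)‖ + ‖v * (M x : ℂ)‖ :=
            norm_add_le _ _
        _ = ‖u‖ * |L x| + ‖v‖ * |M x| := by
            simp [norm_mul, Complex.norm_real, Real.norm_eq_abs]
        _ ≤ (‖u‖ + ‖v‖) * (|L x| + |M x|) := by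
            have h1 : (0:ℝ) ≤ ‖u‖ := norm_nonneg _
            have h2 : (0:ℝ) ≤ ‖v‖ := norm_nonneg _
            have h3 : (0:ℝ) ≤ |L x| := abs_nonneg _
            have h4 : (0:ℝ) ≤ |M x| := abs_nonneg _
            nlinarith
    calc ‖φ x * (u * (L x : ℂ) + v * (M x : ℂ)) ^ n‖
        = ‖φ x‖ * ‖u * (L x : ℂ) + v * (M x : ℂ)‖ ^ n := by rw [norm_mul, norm_pow]
      _ ≤ ‖φ x‖ * ((‖u‖ + ‖v‖) * (|L x| + |M x|)) ^ n := by
          apply mul_le_mul_of_nonneg_left (pow_le_pow_left₀ (norm_nonneg _) habs n)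
            (norm_nonneg _)
      _ = (‖u‖ + ‖v‖) ^ n * (‖φ x‖ * (|L x| + |M x|) ^ n) := by rw [mul_pow]; ring
      _ ≤ (‖u‖ + ‖v‖) ^ n *
          (‖φ x‖ * (n.factorial * c⁻¹ ^ n * Real.exp (c * (|L x| + |M x|)))) := by
          apply mul_le_mul_of_nonneg_left
            (mul_le_mul_of_nonneg_left (hbound n x) (norm_nonneg _)) (by positivity)
      _ = (‖u‖ + ‖v‖) ^ n * (n.factorial * c⁻¹ ^ n) * W x := by rw [hWdef]; ring
  -- the power series
  set bmap : (n : ℕ) → Finset (Fin n) → ContinuousMultilinearMap ℂ (fun _ : Fin n => ℂ × ℂ) ℂ :=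
    fun n S => (ContinuousMultilinearMap.mkPiAlgebra ℂ (Fin n) ℂ).compContinuousLinearMap
      (fun i => if i ∈ S then ContinuousLinearMap.fst ℂ ℂ ℂ else ContinuousLinearMap.snd ℂ ℂ ℂ)
    with hbmapdef
  have hbase_eval : ∀ (n : ℕ) (S : Finset (Fin n)) (w : Fin n → ℂ × ℂ),
      bmap n S w = ∏ i : Fin n, (if i ∈ S then (w i).1 else (w i).2) := by
    intro n S w
    rw [hbmapdef]
    simp only [ContinuousMultilinearMap.compContinuousLinearMap_apply,
      ContinuousMultilinearMap.mkPiAlgebra_apply]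
    refine Finset.prod_congr rfl fun i _ => ?_
    by_cases h : i ∈ S <;> simp [h]
  have hbase_norm : ∀ (n : ℕ) (S : Finset (Fin n)), ‖bmap n S‖ ≤ 1 := by
    intro n S
    apply ContinuousMultilinearMap.opNorm_le_bound (by norm_num)
    intro w
    rw [hbase_eval, one_mul]
    calc ‖∏ i : Fin n, (if i ∈ S then (w i).1 else (w i).2)‖
        = ∏ i : Fin n, ‖if i ∈ S then (w i).1 else (w i).2‖ := norm_prod _ _
      _ ≤ ∏ i : Fin n, ‖w i‖ := by
          apply Finset.prod_le_prod (fun i _ => norm_nonneg _)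
          intro i _
          by_cases h : i ∈ S <;> simp only [h, if_true, if_false]
          · exact norm_fst_le (w i)
          · exact norm_snd_le (w i)
  set coef : (n : ℕ) → Finset (Fin n) → ℂ := fun n S =>
    ((n.factorial : ℂ))⁻¹ * ∫ x, φ x * (L x : ℂ) ^ S.card * (M x : ℂ) ^ (n - S.card) ∂μ
    with hcoefdef
  set p : FormalMultilinearSeries ℂ (ℂ × ℂ) ℂ := fun n =>
    ∑ S : Finset (Fin n), coef n S • bmap n S
    with hpdef
  -- coefficient bound
  have hcoef : ∀ (n : ℕ) (S : Finset (Fin n)), ‖coef n S‖ ≤ c⁻¹ ^ n * K := by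
    intro n S
    rw [hcoefdef]
    have hcard : S.card + (n - S.card) = n :=
      Nat.add_sub_cancel' (Finset.card_le_card (Finset.subset_univ S) |>.trans
        (by rw [Finset.card_univ, Fintype.card_fin]))
    have h1 : ‖∫ x, φ x * (L x : ℂ) ^ S.card * (M x : ℂ) ^ (n - S.card) ∂μ‖
        ≤ ∫ x, n.factorial * c⁻¹ ^ n * W x ∂μ := by
      refine (norm_integral_le_integral_norm _).trans ?_
      apply integral_mono (hIntLM S.card (n - S.card)).norm (hW.const_mul _)
      intro x
      dsimp only
      have he1 : ‖φ x * (L x : ℂ) ^ S.card * (M x : ℂ) ^ (n - S.card)‖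
          = ‖φ x‖ * |L x| ^ S.card * |M x| ^ (n - S.card) := by
        simp [norm_mul, norm_pow, Complex.norm_real, Real.norm_eq_abs]
      rw [he1]
      have hk : |L x| ^ S.card ≤ (|L x| + |M x|) ^ S.card :=
        pow_le_pow_left₀ (abs_nonneg _) (le_add_of_nonneg_right (abs_nonneg _)) _
      have hm : |M x| ^ (n - S.card) ≤ (|L x| + |M x|) ^ (n - S.card) :=
        pow_le_pow_left₀ (abs_nonneg _) (le_add_of_nonneg_left (abs_nonneg _)) _
      calc ‖φ x‖ * |L x| ^ S.card * |M x| ^ (n - S.card)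
          ≤ ‖φ x‖ * ((|L x| + |M x|) ^ S.card * (|L x| + |M x|) ^ (n - S.card)) := by
            rw [mul_assoc]
            exact mul_le_mul_of_nonneg_left
              (mul_le_mul hk hm (by positivity) (by positivity)) (norm_nonneg _)
        _ = ‖φ x‖ * (|L x| + |M x|) ^ n := by rw [← pow_add, hcard]
        _ ≤ ‖φ x‖ * (n.factorial * c⁻¹ ^ n * Real.exp (c * (|L x| + |M x|))) :=
            mul_le_mul_of_nonneg_left (hbound n x) (norm_nonneg _)
        _ = n.factorial * c⁻¹ ^ n * W x := by rw [hWdef]; ring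
    have h2 : (∫ x, (n.factorial : ℝ) * c⁻¹ ^ n * W x ∂μ) = n.factorial * c⁻¹ ^ n * K := by
      rw [hKdef, integral_const_mul]
    rw [norm_mul]
    have h3 : ‖((n.factorial : ℂ))⁻¹‖ = ((n.factorial : ℝ))⁻¹ := by
      rw [norm_inv]
      simp
    rw [h3]
    calc ((n.factorial : ℝ))⁻¹ * ‖∫ x, φ x * (L x : ℂ) ^ S.card * (M x : ℂ) ^ (n - S.card) ∂μ‖
        ≤ ((n.factorial : ℝ))⁻¹ * (n.factorial * c⁻¹ ^ n * K) :=
          mul_le_mul_of_nonneg_left (h1.trans_eq h2) (by positivity)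
      _ = c⁻¹ ^ n * K := by
          have : (n.factorial : ℝ) ≠ 0 := Nat.cast_ne_zero.2 n.factorial_ne_zero
          field_simp
  -- norm of p n
  have hpn : ∀ n : ℕ, ‖p n‖ ≤ 2 ^ n * (c⁻¹ ^ n * K) := by
    intro n
    rw [hpdef]
    refine (norm_sum_le _ _).trans ?_
    calc ∑ S : Finset (Fin n), ‖coef n S • bmap n S‖
        ≤ ∑ _S : Finset (Fin n), c⁻¹ ^ n * K := by
          apply Finset.sum_le_sum
          intro S _
          refine (ContinuousMultilinearMap.opNorm_smul_le _ _).trans ?_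
          calc ‖coef n S‖ * ‖bmap n S‖
              ≤ (c⁻¹ ^ n * K) * 1 :=
                mul_le_mul (hcoef n S) (hbase_norm n S) (norm_nonneg _) (by positivity)
            _ = c⁻¹ ^ n * K := mul_one _
      _ = 2 ^ n * (c⁻¹ ^ n * K) := by
          rw [Finset.sum_const, Finset.card_univ, Fintype.card_finset, Fintype.card_fin,
            nsmul_eq_mul]
          norm_num
  -- radius bound
  set r : NNReal := (c/2).toNNReal with hrdef
  have hr_coe : (r : ℝ) = c/2 := Real.coe_toNNReal _ (by positivity)
  have hrad : (r : ENNReal) ≤ p.radius := by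
    apply p.le_radius_of_bound K
    intro n
    have h1 : ‖p n‖ * (r:ℝ)^n ≤ (2^n * (c⁻¹^n * K)) * (c/2)^n := by
      rw [hr_coe]
      exact mul_le_mul_of_nonneg_right (hpn n) (by positivity)
    refine h1.trans ?_
    have h2 : (2:ℝ)^n * (c⁻¹^n * K) * (c/2)^n = K * (2 * c⁻¹ * (c/2))^n := by
      rw [mul_pow, mul_pow]; ring
    rw [h2, show (2 * c⁻¹ * (c/2) : ℝ) = 1 by field_simp, one_pow, mul_one]
  -- integrability of each S-term at a fixed point y
  have hIntS : ∀ (y : ℂ × ℂ) (n : ℕ) (S : Finset (Fin n)),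
      Integrable (fun x => (n.factorial:ℂ)⁻¹ *
        (φ x * ((y.1 * (L x:ℂ)) ^ S.card * (y.2 * (M x:ℂ)) ^ (n - S.card)))) μ := by
    intro y n S
    have h := ((hIntLM S.card (n - S.card)).mul_const
      (y.1 ^ S.card * y.2 ^ (n - S.card))).const_mul ((n.factorial:ℂ))⁻¹
    refine h.congr (Filter.Eventually.of_forall fun x => ?_)
    dsimp only
    rw [mul_pow, mul_pow]; ring
  -- evaluation of p n on the diagonal
  have heval : ∀ (y : ℂ × ℂ) (n : ℕ), ((p n) fun _ => y)
      = ∫ x, (n.factorial:ℂ)⁻¹ * (φ x * (y.1 * (L x:ℂ) + y.2 * (M x:ℂ)) ^ n) ∂μ := by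
    intro y n
    have h1 : ((p n) fun _ => y)
        = ∑ S : Finset (Fin n), coef n S * (y.1 ^ S.card * y.2 ^ (n - S.card)) := by
      rw [hpdef]
      rw [ContinuousMultilinearMap.sum_apply]
      refine Finset.sum_congr rfl fun S _ => ?_
      rw [ContinuousMultilinearMap.smul_apply, hbase_eval, prod_ite_card, smul_eq_mul]
    have h2 : ∀ S : Finset (Fin n), coef n S * (y.1 ^ S.card * y.2 ^ (n - S.card))
        = ∫ x, (n.factorial:ℂ)⁻¹ *
            (φ x * ((y.1 * (L x:ℂ)) ^ S.card * (y.2 * (M x:ℂ)) ^ (n - S.card))) ∂μ := by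
      intro S
      rw [hcoefdef]
      dsimp only
      rw [mul_assoc, ← integral_mul_const, ← integral_const_mul]
      refine integral_congr_ae (Filter.Eventually.of_forall fun x => ?_)
      dsimp only
      rw [mul_pow, mul_pow]; ring
    rw [h1, Finset.sum_congr rfl (fun S _ => h2 S),
      ← integral_finset_sum _ (fun S _ => hIntS y n S)]
    refine integral_congr_ae (Filter.Eventually.of_forall fun x => ?_)
    dsimp only
    rw [prod_add_sum_card n (y.1 * (L x:ℂ)) (y.2 * (M x:ℂ)), Finset.mul_sum, Finset.mul_sum]
  -- the power series ball
  have hball : HasFPowerSeriesOnBall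
      (fun w : ℂ × ℂ => ∫ x, φ x * Complex.exp (w.1 * L x + w.2 * M x) ∂μ) p 0 r := by
    refine ⟨hrad, ENNReal.coe_pos.2 (Real.toNNReal_pos.2 (by positivity)), ?_⟩
    intro y hy
    rw [mem_emetric_ball_zero_iff] at hy
    have hy2 : ‖y‖ < c/2 := by
      have := ENNReal.coe_lt_coe.1 hy
      rw [← hr_coe]
      exact this
    rw [zero_add]
    have hFint : ∀ n : ℕ, Integrable
        (fun x => (n.factorial:ℂ)⁻¹ * (φ x * (y.1 * (L x:ℂ) + y.2 * (M x:ℂ)) ^ n)) μ :=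
      fun n => (hIntUV y.1 y.2 n).const_mul _
    have hq1 : (0:ℝ) ≤ ‖y‖ / c := by positivity
    have hq2 : ‖y‖ / c < 1 := (div_lt_one hc).2 (by linarith)
    have hnormle : ∀ n : ℕ,
        (∫ x, ‖(n.factorial:ℂ)⁻¹ * (φ x * (y.1 * (L x:ℂ) + y.2 * (M x:ℂ)) ^ n)‖ ∂μ)
          ≤ (‖y‖/c)^n * K := by
      intro n
      have hstep : ∀ x : α,
          ‖(n.factorial:ℂ)⁻¹ * (φ x * (y.1 * (L x:ℂ) + y.2 * (M x:ℂ)) ^ n)‖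
            ≤ (‖y‖/c)^n * W x := by
        intro x
        have hz : ‖y.1 * (L x:ℂ) + y.2 * (M x:ℂ)‖ ≤ ‖y‖ * (|L x| + |M x|) := by
          calc ‖y.1 * (L x:ℂ) + y.2 * (M x:ℂ)‖
              ≤ ‖y.1 * (L x:ℂ)‖ + ‖y.2 * (M x:ℂ)‖ := norm_add_le _ _
            _ = ‖y.1‖ * |L x| + ‖y.2‖ * |M x| := by
                simp [norm_mul, Complex.norm_real, Real.norm_eq_abs]
            _ ≤ ‖y‖ * |L x| + ‖y‖ * |M x| := by
                have h1 := mul_le_mul_of_nonneg_right (norm_fst_le y) (abs_nonneg (L x))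
                have h2 := mul_le_mul_of_nonneg_right (norm_snd_le y) (abs_nonneg (M x))
                linarith
            _ = ‖y‖ * (|L x| + |M x|) := by ring
        have he : ‖(n.factorial:ℂ)⁻¹ * (φ x * (y.1 * (L x:ℂ) + y.2 * (M x:ℂ)) ^ n)‖
            = ((n.factorial:ℝ))⁻¹ * (‖φ x‖ * ‖y.1 * (L x:ℂ) + y.2 * (M x:ℂ)‖ ^ n) := by
          rw [norm_mul, norm_mul, norm_pow, norm_inv]
          norm_num
        rw [he]
        have hfac0 : (0:ℝ) < (n.factorial:ℝ) := by positivity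
        calc ((n.factorial:ℝ))⁻¹ * (‖φ x‖ * ‖y.1 * (L x:ℂ) + y.2 * (M x:ℂ)‖ ^ n)
            ≤ ((n.factorial:ℝ))⁻¹ * (‖φ x‖ * (‖y‖ * (|L x| + |M x|)) ^ n) := by
              apply mul_le_mul_of_nonneg_left _ (by positivity)
              exact mul_le_mul_of_nonneg_left
                (pow_le_pow_left₀ (norm_nonneg _) hz n) (norm_nonneg _)
          _ = ‖y‖^n * ((n.factorial:ℝ))⁻¹ * (‖φ x‖ * (|L x| + |M x|) ^ n) := by
              rw [mul_pow]; ring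
          _ ≤ ‖y‖^n * ((n.factorial:ℝ))⁻¹ *
              (‖φ x‖ * ((n.factorial:ℝ) * c⁻¹ ^ n * Real.exp (c * (|L x| + |M x|)))) := by
              apply mul_le_mul_of_nonneg_left
                (mul_le_mul_of_nonneg_left (hbound n x) (norm_nonneg _)) (by positivity)
          _ = (‖y‖/c)^n * W x := by
              rw [hWdef, div_pow]
              field_simp
              have hcn : c ^ n * c⁻¹ ^ n = 1 := by rw [← mul_pow, mul_inv_cancel₀ hc.ne', one_pow]
              linear_combination (‖y‖ ^ n * ‖φ x‖) * hcn
      refine le_trans (integral_mono (hFint n).norm (hW.const_mul ((‖y‖/c)^n)) hstep) ?_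
      rw [integral_const_mul]
    have hsummable : Summable (fun n : ℕ =>
        ∫ x, ‖(n.factorial:ℂ)⁻¹ * (φ x * (y.1 * (L x:ℂ) + y.2 * (M x:ℂ)) ^ n)‖ ∂μ) := by
      refine Summable.of_nonneg_of_le (fun n => integral_nonneg fun x => norm_nonneg _)
        hnormle ?_
      exact (summable_geometric_of_lt_one hq1 hq2).mul_right K
    have h0 := hasSum_integral_of_summable_integral_norm hFint hsummable
    have hpt : (∫ x, ∑' n : ℕ,
        (n.factorial:ℂ)⁻¹ * (φ x * (y.1 * (L x:ℂ) + y.2 * (M x:ℂ)) ^ n) ∂μ)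
        = ∫ x, φ x * Complex.exp (y.1 * (L x:ℂ) + y.2 * (M x:ℂ)) ∂μ := by
      refine integral_congr_ae (Filter.Eventually.of_forall fun x => ?_)
      set z := y.1 * (L x:ℂ) + y.2 * (M x:ℂ) with hzdef
      calc (∑' n : ℕ, (n.factorial:ℂ)⁻¹ * (φ x * z ^ n))
          = ∑' n : ℕ, φ x * (z ^ n / (n.factorial:ℂ)) := by
            refine tsum_congr fun n => ?_
            rw [div_eq_mul_inv]; ring
        _ = φ x * ∑' n : ℕ, z ^ n / (n.factorial:ℂ) := tsum_mul_left
        _ = φ x * Complex.exp z := by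
            rw [Complex.exp_eq_exp_ℂ, NormedSpace.exp_eq_tsum_div]
    rw [hpt] at h0
    have hfun : (fun n : ℕ => (p n) fun _ => y)
        = fun n : ℕ => ∫ x, (n.factorial:ℂ)⁻¹ *
            (φ x * (y.1 * (L x:ℂ) + y.2 * (M x:ℂ)) ^ n) ∂μ := funext (heval y)
    rw [hfun]
    exact h0
  exact hball.analyticAt

lemma analyticAt_Fint (q : ℂ × ℂ) (hb : -1 < q.2.re) :
    AnalyticAt ℂ (fun p : ℂ × ℂ => Fint p.1 p.2) q := by
  set μ : Measure ℝ := volume.restrict (Set.Ioc (0:ℝ) 9) with hμdef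
  set φ : ℝ → ℂ := fun x =>
    Complex.exp ((q.1 - 1) * Complex.log ((x:ℂ) + 1)) *
      Complex.exp (q.2 * Complex.log (x:ℂ)) with hφdef
  set L : ℝ → ℝ := fun x => Real.log (x + 1) with hLdef
  set M : ℝ → ℝ := fun x => Real.log x with hMdef
  set c : ℝ := (q.2.re + 1) / 2 with hcdef
  have hc : 0 < c := by rw [hcdef]; linarith
  -- measurability
  have hφmeas : Measurable φ := by
    apply Measurable.mul
    · exact (Complex.measurable_exp.comp
        (measurable_const.mul ((Complex.measurable_ofReal.add_const 1).clog)))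
    · exact (Complex.measurable_exp.comp
        (measurable_const.mul Complex.measurable_ofReal.clog))
  have hφm : AEStronglyMeasurable φ μ := hφmeas.aestronglyMeasurable
  have hLm : AEMeasurable L μ :=
    (Real.measurable_log.comp (measurable_id.add_const 1)).aemeasurable
  have hMm : AEMeasurable M μ := Real.measurable_log.aemeasurable
  -- the dominating function
  have hW : Integrable (fun x => ‖φ x‖ * Real.exp (c * (|L x| + |M x|))) μ := by
    set a : ℝ := q.1.re with hadef
    set b : ℝ := q.2.re with hbdef
    set C : ℝ := Real.exp (|a - 1| * Real.log 10 + c * Real.log 10 + c * Real.log 81)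
      with hCdef
    have hd : (-1:ℝ) < b - c := by rw [hbdef, hcdef]; linarith
    have hg : IntegrableOn (fun x : ℝ => C * x ^ (b - c)) (Set.Ioc (0:ℝ) 9) := by
      apply Integrable.const_mul
      exact (intervalIntegrable_iff_integrableOn_Ioc_of_le (by norm_num : (0:ℝ) ≤ 9)).mp
        (intervalIntegral.intervalIntegrable_rpow' hd)
    apply Integrable.mono' hg
    · apply Measurable.aestronglyMeasurable
      apply (hφmeas.norm).mul
      apply Real.measurable_exp.comp
      apply Measurable.const_mul
      exact ((Real.measurable_log.comp (measurable_id.add_const 1)).abs.add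
        Real.measurable_log.abs)
    · rw [ae_restrict_iff' measurableSet_Ioc]
      refine Filter.Eventually.of_forall fun x hx => ?_
      obtain ⟨hx0, hx9⟩ := hx
      have hL0 : 0 ≤ L x := Real.log_nonneg (by linarith)
      have hL10 : L x ≤ Real.log 10 := by
        rw [hLdef]
        exact Real.log_le_log (by linarith) (by linarith)
      have hM9 : M x ≤ Real.log 9 := by
        rw [hMdef]
        exact Real.log_le_log hx0 hx9
      have hM81 : |M x| ≤ Real.log 81 - M x := by
        rcases le_or_gt (M x) 0 with h | h
        · rw [abs_of_nonpos h]
          have : (0:ℝ) ≤ Real.log 81 := Real.log_nonneg (by norm_num)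
          linarith
        · rw [abs_of_pos h]
          have h81 : Real.log 81 = 2 * Real.log 9 := by
            rw [show (81:ℝ) = 9 ^ 2 by norm_num, Real.log_pow]
            push_cast; ring
          rw [h81]; linarith
      -- compute ‖φ x‖
      have hlog1 : Complex.log ((x:ℂ) + 1) = ((L x : ℝ) : ℂ) := by
        rw [hLdef]
        rw [show ((x:ℂ) + 1) = ((x + 1 : ℝ) : ℂ) by push_cast; ring]
        exact (Complex.ofReal_log (by linarith)).symm
      have hlog2 : Complex.log (x:ℂ) = ((M x : ℝ) : ℂ) := by
        rw [hMdef]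
        exact (Complex.ofReal_log hx0.le).symm
      have hnφ : ‖φ x‖ = Real.exp ((a - 1) * L x + b * M x) := by
        rw [hφdef]
        simp only [norm_mul, Complex.norm_exp, hlog1, hlog2]
        rw [← Real.exp_add]
        congr 1
        simp [Complex.mul_re, Complex.sub_re, Complex.sub_im, Complex.one_re,
          Complex.one_im, hadef, hbdef]
      have hWx : ‖φ x‖ * Real.exp (c * (|L x| + |M x|))
          ≤ C * x ^ (b - c) := by
        rw [hnφ, ← Real.exp_add]
        have hrpow : x ^ (b - c) = Real.exp ((b - c) * M x) := by
          rw [hMdef, Real.rpow_def_of_pos hx0]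
          ring_nf
        rw [hCdef, hrpow, ← Real.exp_add]
        apply Real.exp_le_exp.2
        have h1 : (a - 1) * L x ≤ |a - 1| * Real.log 10 := by
          calc (a - 1) * L x ≤ |a - 1| * L x := by
                apply mul_le_mul_of_nonneg_right (le_abs_self _) hL0
            _ ≤ |a - 1| * Real.log 10 :=
                mul_le_mul_of_nonneg_left hL10 (abs_nonneg _)
        have h2 : c * |L x| ≤ c * Real.log 10 := by
          apply mul_le_mul_of_nonneg_left _ hc.le
          rw [_root_.abs_of_nonneg hL0]; exact hL10
        have h3 : c * |M x| ≤ c * (Real.log 81 - M x) :=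
          mul_le_mul_of_nonneg_left hM81 hc.le
        have hexp : c * (|L x| + |M x|) = c * |L x| + c * |M x| := by ring
        nlinarith [h1, h2, h3]
      calc ‖‖φ x‖ * Real.exp (c * (|L x| + |M x|))‖
          = ‖φ x‖ * Real.exp (c * (|L x| + |M x|)) := by
            rw [Real.norm_eq_abs, _root_.abs_of_nonneg (by positivity)]
        _ ≤ C * x ^ (b - c) := hWx
  -- analyticity of the shifted integral
  have hh : AnalyticAt ℂ
      (fun w : ℂ × ℂ => ∫ x, φ x * Complex.exp (w.1 * L x + w.2 * M x) ∂μ) 0 :=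
    analyticAt_integral_exp2 μ φ L M c hc hφm hLm hMm hW
  -- global identity
  have hFeq : ∀ p : ℂ × ℂ, Fint p.1 p.2
      = ∫ x, φ x * Complex.exp ((p - q).1 * L x + (p - q).2 * M x) ∂μ := by
    intro p
    rw [Fint, intervalIntegral.integral_of_le (by norm_num : (0:ℝ) ≤ 9), hμdef]
    apply MeasureTheory.setIntegral_congr_fun measurableSet_Ioc
    intro x hx
    obtain ⟨hx0, _⟩ := hx
    show ((x:ℂ) + 1) ^ (p.1 - 1) * (x:ℂ) ^ p.2
      = φ x * Complex.exp ((p - q).1 * (L x : ℂ) + (p - q).2 * (M x : ℂ))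
    have h1ne : ((x:ℂ) + 1) ≠ 0 := by
      rw [show ((x:ℂ) + 1) = ((x + 1 : ℝ) : ℂ) by push_cast; ring]
      exact Complex.ofReal_ne_zero.2 (by linarith)
    have hxne : ((x:ℂ)) ≠ 0 := Complex.ofReal_ne_zero.2 (ne_of_gt hx0)
    have hlog1 : Complex.log ((x:ℂ) + 1) = ((L x : ℝ) : ℂ) := by
      rw [hLdef, show ((x:ℂ) + 1) = ((x + 1 : ℝ) : ℂ) by push_cast; ring]
      exact (Complex.ofReal_log (by linarith)).symm
    have hlog2 : Complex.log (x:ℂ) = ((M x : ℝ) : ℂ) := by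
      rw [hMdef]
      exact (Complex.ofReal_log hx0.le).symm
    rw [Complex.cpow_def_of_ne_zero h1ne, Complex.cpow_def_of_ne_zero hxne,
      hφdef]
    dsimp only
    rw [hlog1, hlog2, ← Complex.exp_add, ← Complex.exp_add, ← Complex.exp_add]
    congr 1
    simp only [Prod.fst_sub, Prod.snd_sub]
    ring
  have hsub : AnalyticAt ℂ (fun p : ℂ × ℂ => p - q) q :=
    analyticAt_id.sub analyticAt_const
  have hh' : AnalyticAt ℂ
      (fun w : ℂ × ℂ => ∫ x, φ x * Complex.exp (w.1 * L x + w.2 * M x) ∂μ)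
      (q - q) := by
    simpa using hh
  have hcomp : AnalyticAt ℂ
      ((fun w : ℂ × ℂ => ∫ x, φ x * Complex.exp (w.1 * L x + w.2 * M x) ∂μ) ∘
        (fun p : ℂ × ℂ => p - q)) q := AnalyticAt.comp (f := fun p : ℂ × ℂ => p - q) hh' hsub
  refine hcomp.congr (Filter.Eventually.of_forall fun p => ?_)
  show (∫ x, φ x * Complex.exp ((p - q).1 * L x + (p - q).2 * M x) ∂μ) = Fint p.1 p.2
  exact (hFeq p).symm

/-- For `Re s₁, Re s₂ > 0`:
`k̂₀⁻(s₁,s₂) = 10^{s₁+s₂}/(s₁s₂) - F(s₂,s₁)/s₁ - F(s₁,s₂)/s₂`, and consequently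
`s₁s₂ k̂₀⁻(s₁,s₂)` extends holomorphically to `Re s₁ > -1`, `Re s₂ > -1`. -/
theorem kminus_mellin_formula :
    (∀ s₁ s₂ : ℂ, 0 < s₁.re → 0 < s₂.re →
      kminusMellin s₁ s₂ =
        (10 : ℂ) ^ (s₁ + s₂) / (s₁ * s₂) - Fint s₂ s₁ / s₁ - Fint s₁ s₂ / s₂) ∧
    ∃ g : ℂ × ℂ → ℂ,
      AnalyticOnNhd ℂ g {p : ℂ × ℂ | -1 < p.1.re ∧ -1 < p.2.re} ∧
      ∀ s₁ s₂ : ℂ, 0 < s₁.re → 0 < s₂.re →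
        g (s₁, s₂) = s₁ * s₂ * kminusMellin s₁ s₂ := by
  constructor
  · exact fun s₁ s₂ h₁ h₂ => part1 s₁ s₂ h₁ h₂
  · refine ⟨fun p => (10:ℂ) ^ (p.1 + p.2) - p.2 * Fint p.2 p.1 - p.1 * Fint p.1 p.2, ?_, ?_⟩
    · intro p hp
      obtain ⟨hp1, hp2⟩ := hp
      have h10 : AnalyticAt ℂ (fun p : ℂ × ℂ => (10:ℂ) ^ (p.1 + p.2)) p := by
        have he : (fun p : ℂ × ℂ => (10:ℂ) ^ (p.1 + p.2))
            = fun p : ℂ × ℂ => Complex.exp (Complex.log 10 * (p.1 + p.2)) := by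
          funext w
          rw [Complex.cpow_def_of_ne_zero (by norm_num : (10:ℂ) ≠ 0)]
        rw [he]
        exact (analyticAt_const.mul (analyticAt_fst.add analyticAt_snd)).cexp
      have h1 : AnalyticAt ℂ (fun p : ℂ × ℂ => Fint p.1 p.2) p := analyticAt_Fint p hp2
      have hswap : AnalyticAt ℂ (fun p : ℂ × ℂ => (p.2, p.1)) p :=
        analyticAt_snd.prod analyticAt_fst
      have h2 : AnalyticAt ℂ (fun p : ℂ × ℂ => Fint p.2 p.1) p := by
        have h := AnalyticAt.comp (f := fun p : ℂ × ℂ => (p.2, p.1))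
          (analyticAt_Fint (p.2, p.1) (by simpa using hp1)) hswap
        exact h
      exact (h10.sub (analyticAt_snd.mul h2)).sub (analyticAt_fst.mul h1)
    · intro s₁ s₂ h₁ h₂
      rw [part1 s₁ s₂ h₁ h₂]
      have hs₁ : s₁ ≠ 0 := fun h => by simp [h] at h₁
      have hs₂ : s₂ ≠ 0 := fun h => by simp [h] at h₂
      field_simp
end

section
/- Let m, n be positive integers, ν = 1/(8n), and let ℓ_1, ..., ℓ_m be real linear forms in n variables such that for every i ∈ {1,...,n} at least one ℓ_j has nonzero coefficient of x_i. Then the function x ↦ Π_{j=1}^{n} (1+|x_j|)^{ν-1} · Π_{j=1}^{m} (1+|ℓ_j(x)|)^{-1/3} is integrable over ℝⁿ. -/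
open MeasureTheory
open scoped BigOperators

open scoped ENNReal

private lemma cont_aux {α : Type*} [TopologicalSpace α] {g : α → ℝ} (hg : Continuous g)
    (c : ℝ) : Continuous fun x => (1 + |g x|) ^ c := by
  apply Continuous.rpow_const (by fun_prop)
  intro x; left; positivity

private lemma meas_aux {α : Type*} [MeasurableSpace α] [TopologicalSpace α] [BorelSpace α]
    {g : α → ℝ} (hg : Continuous g) (c : ℝ) :
    Measurable fun x => ENNReal.ofReal ((1 + |g x|) ^ c) :=
  (cont_aux hg c).measurable.ennreal_ofReal

private lemma lintA {γ : ℝ} (hγ : 1 < γ) :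
    ∫⁻ s : ℝ, ENNReal.ofReal ((1 + |s|) ^ (-γ)) < ∞ := by
  have h := finite_integral_one_add_norm (E := ℝ) (μ := volume) (r := γ) (by simpa using hγ)
  simpa [Real.norm_eq_abs] using h

private lemma lintB (g : ℝ → ℝ≥0∞) (hg : Measurable g) {b : ℝ} (hb : b ≠ 0) (t : ℝ) :
    ∫⁻ s : ℝ, g (b * s + t) = ENNReal.ofReal |b⁻¹| * ∫⁻ u : ℝ, g u := by
  have h2 : ∫⁻ s : ℝ, (fun u => g (u + t)) (b * s)
      = ∫⁻ u : ℝ, g (u + t) ∂(Measure.map (fun x => b * x) volume) := by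
    rw [lintegral_map (by fun_prop) (by fun_prop)]
  show ∫⁻ s : ℝ, (fun u => g (u + t)) (b * s) = _
  rw [h2, Real.map_volume_mul_left hb, lintegral_smul_measure,
    lintegral_add_right_eq_self (fun u => g u) t, smul_eq_mul]

private lemma lintC {γ b : ℝ} (hγ : 5/6 < γ) (hb : b ≠ 0) :
    ∃ C : ℝ≥0∞, C < ∞ ∧ ∀ t : ℝ,
      ∫⁻ s : ℝ, ENNReal.ofReal ((1 + |s|) ^ (-γ) * (1 + |b * s + t|) ^ (-(1/3) : ℝ)) ≤ C := by
  set I1 : ℝ≥0∞ := ∫⁻ s : ℝ, ENNReal.ofReal ((1 + |s|) ^ (-(6/5*γ))) with hI1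
  set I2 : ℝ≥0∞ := ∫⁻ u : ℝ, ENNReal.ofReal ((1 + |u|) ^ (-(2:ℝ))) with hI2
  refine ⟨I1 ^ (5/6 : ℝ) * (ENNReal.ofReal |b⁻¹| * I2) ^ (1/6 : ℝ), ?_, ?_⟩
  · apply ENNReal.mul_lt_top
    · exact ENNReal.rpow_lt_top_of_nonneg (by norm_num) (lintA (by linarith)).ne
    · exact ENNReal.rpow_lt_top_of_nonneg (by norm_num)
        (ENNReal.mul_lt_top ENNReal.ofReal_lt_top (lintA (by norm_num))).ne
  intro t
  have hpq : (6/5 : ℝ).HolderConjugate 6 := ⟨by norm_num, by norm_num, by norm_num⟩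
  have hf6 : ∀ s : ℝ, (ENNReal.ofReal ((1 + |s|) ^ (-γ))) ^ (6/5 : ℝ)
      = ENNReal.ofReal ((1 + |s|) ^ (-(6/5*γ))) := by
    intro s
    rw [ENNReal.ofReal_rpow_of_nonneg (by positivity) (by norm_num),
      ← Real.rpow_mul (by positivity)]
    congr 1; ring
  have hg6 : ∀ s : ℝ, (ENNReal.ofReal ((1 + |b * s + t|) ^ (-(1/3) : ℝ))) ^ (6 : ℝ)
      = ENNReal.ofReal ((1 + |b * s + t|) ^ (-(2:ℝ))) := by
    intro s
    rw [ENNReal.ofReal_rpow_of_nonneg (by positivity) (by norm_num),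
      ← Real.rpow_mul (by positivity)]
    norm_num
  have key := ENNReal.lintegral_mul_le_Lp_mul_Lq volume hpq
    (f := fun s : ℝ => ENNReal.ofReal ((1 + |s|) ^ (-γ)))
    (g := fun s : ℝ => ENNReal.ofReal ((1 + |b * s + t|) ^ (-(1/3) : ℝ)))
    (meas_aux continuous_id _).aemeasurable (meas_aux (by fun_prop) _).aemeasurable
  simp only [Pi.mul_apply, hf6, hg6] at key
  have hB : ∫⁻ s : ℝ, ENNReal.ofReal ((1 + |b * s + t|) ^ (-(2:ℝ)))
      = ENNReal.ofReal |b⁻¹| * I2 := by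
    rw [hI2]
    exact lintB (fun u => ENNReal.ofReal ((1 + |u|) ^ (-(2:ℝ)))) (meas_aux continuous_id _) hb t
  rw [hB] at key
  calc ∫⁻ s : ℝ, ENNReal.ofReal ((1 + |s|) ^ (-γ) * (1 + |b * s + t|) ^ (-(1/3) : ℝ))
      = ∫⁻ s : ℝ, ENNReal.ofReal ((1 + |s|) ^ (-γ)) * ENNReal.ofReal ((1 + |b * s + t|) ^ (-(1/3) : ℝ)) := by
        exact lintegral_congr fun s => ENNReal.ofReal_mul (by positivity)
    _ ≤ I1 ^ (1/(6/5) : ℝ) * (ENNReal.ofReal |b⁻¹| * I2) ^ (1/(6:ℝ)) := key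
    _ = I1 ^ (5/6 : ℝ) * (ENNReal.ofReal |b⁻¹| * I2) ^ (1/6 : ℝ) := by norm_num

private lemma lintD {N : ℕ} (c : Fin (N+1) → ℝ) (i0 : Fin (N+1)) (hc : c i0 ≠ 0)
    (E : Fin (N+1) → ℝ) (hE0 : E i0 < -(5/6)) (hE : ∀ k, k ≠ i0 → E k < -1) :
    ∫⁻ x : Fin (N+1) → ℝ,
      ENNReal.ofReal ((∏ k, (1 + |x k|) ^ E k) * (1 + |∑ k, c k * x k|) ^ (-(1/3):ℝ)) < ∞ := by
  obtain ⟨C, hCfin, hC⟩ := lintC (γ := -(E i0)) (by linarith) hc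
  set W : (Fin N → ℝ) → ℝ := fun y => ∏ j, (1 + |y j|) ^ (E (i0.succAbove j)) with hW
  set T : (Fin N → ℝ) → ℝ := fun y => ∑ j, c (i0.succAbove j) * y j with hT
  have hWpos : ∀ y, 0 ≤ W y := fun y => Finset.prod_nonneg fun j _ => by positivity
  have contF : Continuous fun x : Fin (N+1) → ℝ =>
      (∏ k, (1 + |x k|) ^ E k) * (1 + |∑ k, c k * x k|) ^ (-(1/3):ℝ) := by
    apply Continuous.mul
    · exact continuous_finset_prod _ fun k _ => cont_aux (continuous_apply k) _
    · exact cont_aux (by fun_prop) _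
  have hF : Measurable fun x : Fin (N+1) → ℝ =>
      ENNReal.ofReal ((∏ k, (1 + |x k|) ^ E k) * (1 + |∑ k, c k * x k|) ^ (-(1/3):ℝ)) :=
    contF.measurable.ennreal_ofReal
  have mp := (MeasureTheory.volume_preserving_piFinSuccAbove (fun _ : Fin (N+1) => ℝ) i0).symm
  rw [← mp.lintegral_comp hF]
  have hFz : ∀ z : ℝ × (Fin N → ℝ),
      ENNReal.ofReal ((∏ k, (1 + |((MeasurableEquiv.piFinSuccAbove (fun _ : Fin (N+1) => ℝ) i0).symm z) k|) ^ E k) *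
        (1 + |∑ k, c k * ((MeasurableEquiv.piFinSuccAbove (fun _ : Fin (N+1) => ℝ) i0).symm z) k|) ^ (-(1/3):ℝ))
      = ENNReal.ofReal (W z.2 *
          ((1 + |z.1|) ^ (-(-(E i0))) * (1 + |c i0 * z.1 + T z.2|) ^ (-(1/3):ℝ))) := by
    rintro ⟨s, y⟩
    have hx : ((MeasurableEquiv.piFinSuccAbove (fun _ : Fin (N+1) => ℝ) i0).symm (s, y))
        = i0.insertNth s y := rfl
    rw [hx]
    have hprod : (∏ k, (1 + |i0.insertNth s y k|) ^ E k)
        = (1 + |s|) ^ E i0 * ∏ j, (1 + |y j|) ^ E (i0.succAbove j) := by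
      rw [Fin.prod_univ_succAbove (fun k => (1 + |Fin.insertNth (α := fun _ => ℝ) i0 s y k|) ^ E k) i0]
      simp
    have hsum : (∑ k, c k * Fin.insertNth (α := fun _ => ℝ) i0 s y k) = c i0 * s + ∑ j, c (i0.succAbove j) * y j := by
      rw [Fin.sum_univ_succAbove (fun k => c k * Fin.insertNth (α := fun _ => ℝ) i0 s y k) i0]
      simp
    rw [hprod, hsum]
    congr 1
    simp only [neg_neg, hW, hT]
    ring
  calc ∫⁻ z : ℝ × (Fin N → ℝ), ENNReal.ofReal
        ((∏ k, (1 + |((MeasurableEquiv.piFinSuccAbove (fun _ : Fin (N+1) => ℝ) i0).symm z) k|) ^ E k) *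
        (1 + |∑ k, c k * ((MeasurableEquiv.piFinSuccAbove (fun _ : Fin (N+1) => ℝ) i0).symm z) k|) ^ (-(1/3):ℝ))
      = ∫⁻ z : ℝ × (Fin N → ℝ), ENNReal.ofReal (W z.2 *
          ((1 + |z.1|) ^ (-(-(E i0))) * (1 + |c i0 * z.1 + T z.2|) ^ (-(1/3):ℝ))) :=
        lintegral_congr hFz
    _ = ∫⁻ y : Fin N → ℝ, ∫⁻ s : ℝ, ENNReal.ofReal (W y *
          ((1 + |s|) ^ (-(-(E i0))) * (1 + |c i0 * s + T y|) ^ (-(1/3):ℝ))) := by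
        rw [MeasureTheory.Measure.volume_eq_prod ℝ (Fin N → ℝ)]
        apply lintegral_prod_symm
        apply Measurable.aemeasurable
        apply Measurable.ennreal_ofReal
        apply Continuous.measurable
        apply Continuous.mul
        · exact (continuous_finset_prod _ fun j _ =>
            cont_aux ((continuous_apply j).comp continuous_snd) _)
        · exact Continuous.mul (cont_aux continuous_fst _) (cont_aux (by fun_prop) _)
    _ ≤ ∫⁻ y : Fin N → ℝ, ENNReal.ofReal (W y) * C := by
        have hinner : ∀ y : Fin N → ℝ, (∫⁻ s : ℝ, ENNReal.ofReal (W y *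
            ((1 + |s|) ^ (-(-(E i0))) * (1 + |c i0 * s + T y|) ^ (-(1/3):ℝ))))
            ≤ ENNReal.ofReal (W y) * C := by
          intro y
          rw [lintegral_congr (fun s : ℝ => ENNReal.ofReal_mul (q := (1 + |s|) ^ (-(-(E i0))) *
              (1 + |c i0 * s + T y|) ^ (-(1/3):ℝ)) (hWpos y)),
            lintegral_const_mul' _ _ ENNReal.ofReal_ne_top]
          exact mul_le_mul_right (hC (T y)) _
        exact lintegral_mono hinner
    _ = (∫⁻ y : Fin N → ℝ, ENNReal.ofReal (W y)) * C :=
        lintegral_mul_const' C _ hCfin.ne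
    _ < ∞ := by
        apply ENNReal.mul_lt_top _ hCfin
        have hInt : Integrable (fun y : Fin N → ℝ => ∏ j, (1 + |y j|) ^ (E (i0.succAbove j))) := by
          apply Integrable.fintype_prod (f := fun j (t : ℝ) => (1 + |t|) ^ (E (i0.succAbove j)))
          intro j
          have h1 : (1 : ℝ) < -(E (i0.succAbove j)) := by
            have := hE _ (Fin.succAbove_ne i0 j); linarith
          have := integrable_one_add_norm (E := ℝ) (μ := volume)
            (r := -(E (i0.succAbove j))) (by simpa using h1)
          simpa [Real.norm_eq_abs] using this
        exact hInt.lintegral_lt_top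

private lemma pointwise_bound {m N : ℕ} (a : Fin m → Fin (N+1) → ℝ) (jv : Fin (N+1) → Fin m)
    (Ex : Fin (N+1) → Fin (N+1) → ℝ)
    (hEx : ∀ k, ∑ i, Ex i k = 1/8 - ((N+1 : ℕ) : ℝ))
    (x : Fin (N+1) → ℝ) :
    (∏ k, (1 + |x k|) ^ ((1 / (8 * ((N+1 : ℕ) : ℝ))) - 1)) *
      ∏ jj, (1 + |∑ k, a jj k * x k|) ^ (-(1 / 3) : ℝ)
    ≤ ∏ i, ((∏ k, (1 + |x k|) ^ Ex i k) *
        (1 + |∑ k, a (jv i) k * x k|) ^ (-(1 / 3) : ℝ)) ^ (1 / ((N+1:ℕ) : ℝ)) := by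
  set nn : ℝ := ((N+1 : ℕ) : ℝ) with hnn
  have hnn0 : (0:ℝ) < nn := by rw [hnn]; positivity
  set u : Fin (N+1) → ℝ := fun k => 1 + |x k| with hu
  set A : Fin m → ℝ := fun jj => 1 + |∑ k, a jj k * x k| with hA
  have hu1 : ∀ k, (1:ℝ) ≤ u k := fun k => by rw [hu]; simpa using abs_nonneg (x k)
  have hA1 : ∀ jj, (1:ℝ) ≤ A jj := fun jj => by rw [hA]; simpa using abs_nonneg _
  have hu0 : ∀ k, (0:ℝ) < u k := fun k => lt_of_lt_of_le one_pos (hu1 k)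
  have hc0 : (0:ℝ) < ∏ jj, A jj := Finset.prod_pos fun jj _ => lt_of_lt_of_le one_pos (hA1 jj)
  have hz : (-(1/3) : ℝ) * (1/nn) ≤ 0 :=
    mul_nonpos_of_nonpos_of_nonneg (by norm_num) (by positivity)
  have step1 : ∀ i : Fin (N+1), ((∏ k, u k ^ Ex i k) * A (jv i) ^ (-(1/3):ℝ)) ^ (1/nn)
      = (∏ k, u k ^ (Ex i k * (1/nn))) * A (jv i) ^ ((-(1/3):ℝ) * (1/nn)) := by
    intro i
    rw [Real.mul_rpow (Finset.prod_nonneg fun k _ => by positivity) (by positivity),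
      ← Real.finset_prod_rpow _ _ (fun k _ => by positivity) _,
      ← Real.rpow_mul (by positivity)]
    congr 1
    exact Finset.prod_congr rfl fun k _ => by rw [← Real.rpow_mul (hu0 k).le]
  have hRHS : (∏ i, ((∏ k, u k ^ Ex i k) * A (jv i) ^ (-(1/3):ℝ)) ^ (1/nn))
      = (∏ k, u k ^ ((1 / (8 * nn)) - 1)) * ∏ i, A (jv i) ^ ((-(1/3):ℝ) * (1/nn)) := by
    rw [Finset.prod_congr rfl (fun i _ => step1 i), Finset.prod_mul_distrib]
    congr 1
    rw [Finset.prod_comm]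
    refine Finset.prod_congr rfl fun k _ => ?_
    rw [← Real.rpow_sum_of_pos (hu0 k), ← Finset.sum_mul, hEx k]
    congr 1
    field_simp
  have hconst : (∏ i : Fin (N+1), (∏ jj, A jj) ^ ((-(1/3):ℝ) * (1/nn)))
      = (∏ jj, A jj) ^ (-(1/3) : ℝ) := by
    rw [Finset.prod_const, Finset.card_univ, Fintype.card_fin,
      ← Real.rpow_natCast ((∏ jj, A jj) ^ ((-(1/3):ℝ) * (1/nn))) (N+1),
      ← Real.rpow_mul hc0.le]
    congr 1
    push_cast [← hnn]
    field_simp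
  have hsingle : ∀ i : Fin (N+1), A (jv i) ≤ ∏ jj, A jj := by
    intro i
    have h1 : (1:ℝ) ≤ ∏ jj ∈ Finset.univ.erase (jv i), A jj := by
      have := Finset.prod_le_prod (s := Finset.univ.erase (jv i)) (f := fun _ => (1:ℝ))
        (g := A) (fun _ _ => zero_le_one) (fun jj _ => hA1 jj)
      simpa using this
    calc A (jv i) = A (jv i) * 1 := (mul_one _).symm
      _ ≤ A (jv i) * ∏ jj ∈ Finset.univ.erase (jv i), A jj :=
          mul_le_mul_of_nonneg_left h1 (by linarith [hA1 (jv i)])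
      _ = ∏ jj, A jj := Finset.mul_prod_erase Finset.univ A (Finset.mem_univ (jv i))
  have Qbound : (∏ jj, A jj ^ (-(1/3) : ℝ)) ≤ ∏ i, A (jv i) ^ ((-(1/3):ℝ) * (1/nn)) := by
    rw [Real.finset_prod_rpow _ _ (fun jj _ => by positivity) _, ← hconst]
    refine Finset.prod_le_prod (fun i _ => by positivity) fun i _ => ?_
    exact Real.rpow_le_rpow_of_nonpos (lt_of_lt_of_le one_pos (hA1 _)) (hsingle i) hz
  rw [hRHS]
  exact mul_le_mul_of_nonneg_left Qbound (Finset.prod_nonneg fun k _ => by positivity)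


/-- Lemma 13: if each variable `x_i` appears with nonzero coefficient in at least one of the
linear forms `ℓ_j(x) = ∑ᵢ a j i * x i`, and `ν = 1/(8n)`, then
`x ↦ ∏ᵢ (1+|xᵢ|)^{ν-1} ∏ⱼ (1+|ℓⱼ(x)|)^{-1/3}` is integrable over `ℝⁿ`. -/
theorem linear_forms_integrable (m n : ℕ) (hm : 0 < m) (hn : 0 < n)
    (a : Fin m → Fin n → ℝ) (ha : ∀ i, ∃ j, a j i ≠ 0) :
    Integrable (fun x : Fin n → ℝ =>
      (∏ i, (1 + |x i|) ^ ((1 / (8 * (n : ℝ))) - 1)) *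
      ∏ j, (1 + |∑ i, a j i * x i|) ^ (-(1 / 3) : ℝ)) := by
  obtain ⟨N, rfl⟩ : ∃ N, n = N + 1 := ⟨n - 1, (Nat.succ_pred_eq_of_pos hn).symm⟩
  choose jv hjv using ha
  have hnn0 : (0:ℝ) < ((N + 1 : ℕ) : ℝ) := by positivity
  set nn : ℝ := ((N + 1 : ℕ) : ℝ) with hnn
  set ε : ℝ := 1 / (48 * nn) with hε
  have hε0 : 0 < ε := by rw [hε]; positivity
  set Ex : Fin (N+1) → Fin (N+1) → ℝ :=
    fun i k => if k = i then ((nn - 1) * ε - 7/8) else -(1+ε) with hExdef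
  have hEx : ∀ k, ∑ i, Ex i k = 1/8 - nn := by
    intro k
    have hsplit : ∀ i : Fin (N+1), Ex i k
        = -(1+ε) + (if k = i then ((nn - 1) * ε - 7/8) + (1+ε) else 0) := by
      intro i
      rw [hExdef]
      by_cases h : k = i <;> simp [h] <;> ring
    rw [Finset.sum_congr rfl fun i _ => hsplit i, Finset.sum_add_distrib,
      Finset.sum_const, Finset.sum_ite_eq Finset.univ k, Finset.card_univ, Fintype.card_fin]
    simp only [Finset.mem_univ, if_true, nsmul_eq_mul]
    rw [← hnn, hε]
    field_simp
    ring
  have hdiag : (nn - 1) * ε - 7/8 < -(5/6) := by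
    have hnn1 : (1:ℝ) ≤ nn := by
      rw [hnn]; exact_mod_cast Nat.one_le_iff_ne_zero.mpr (Nat.succ_ne_zero N)
    have h1 : (nn - 1) * ε ≤ nn * ε := by nlinarith
    have h2 : nn * ε = 1/48 := by rw [hε]; field_simp
    linarith
  constructor
  · apply Continuous.aestronglyMeasurable
    apply Continuous.mul
    · exact continuous_finset_prod _ fun k _ => cont_aux (continuous_apply k) _
    · exact continuous_finset_prod _ fun jj _ => cont_aux (by fun_prop) _
  · rw [hasFiniteIntegral_iff_ofReal (ae_of_all _ fun x => by positivity)]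
    have hG : ∀ i : Fin (N+1), ∫⁻ x : Fin (N+1) → ℝ, ENNReal.ofReal
        ((∏ k, (1 + |x k|) ^ Ex i k) * (1 + |∑ k, a (jv i) k * x k|) ^ (-(1/3):ℝ)) < ∞ := by
      intro i
      apply lintD (a (jv i)) i (hjv i) (Ex i)
      · simpa [hExdef] using hdiag
      · intro k hk
        rw [hExdef]
        simp only [hk, if_false]
        linarith
    have hGmeas : ∀ i : Fin (N+1), AEMeasurable (fun x : Fin (N+1) → ℝ => ENNReal.ofReal
        ((∏ k, (1 + |x k|) ^ Ex i k) * (1 + |∑ k, a (jv i) k * x k|) ^ (-(1/3):ℝ))) volume := by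
      intro i
      apply Measurable.aemeasurable
      apply Measurable.ennreal_ofReal
      apply Continuous.measurable
      apply Continuous.mul
      · exact continuous_finset_prod _ fun k _ => cont_aux (continuous_apply k) _
      · exact cont_aux (by fun_prop) _
    have hp : ∑ _i : Fin (N+1), (1/nn : ℝ) = 1 := by
      rw [Finset.sum_const, Finset.card_univ, Fintype.card_fin, nsmul_eq_mul, ← hnn]
      field_simp
    calc ∫⁻ x : Fin (N+1) → ℝ, ENNReal.ofReal
          ((∏ i, (1 + |x i|) ^ ((1 / (8 * nn)) - 1)) *
            ∏ j, (1 + |∑ i, a j i * x i|) ^ (-(1 / 3) : ℝ))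
        ≤ ∫⁻ x : Fin (N+1) → ℝ, ∏ i, (ENNReal.ofReal ((∏ k, (1 + |x k|) ^ Ex i k) *
            (1 + |∑ k, a (jv i) k * x k|) ^ (-(1/3):ℝ))) ^ (1/nn : ℝ) := by
          apply lintegral_mono
          intro x
          have hb := pointwise_bound a jv Ex hEx x
          calc ENNReal.ofReal ((∏ i, (1 + |x i|) ^ ((1 / (8 * nn)) - 1)) *
                ∏ j, (1 + |∑ i, a j i * x i|) ^ (-(1 / 3) : ℝ))
              ≤ ENNReal.ofReal (∏ i, ((∏ k, (1 + |x k|) ^ Ex i k) *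
                  (1 + |∑ k, a (jv i) k * x k|) ^ (-(1 / 3) : ℝ)) ^ (1 / nn)) :=
                ENNReal.ofReal_le_ofReal hb
            _ = ∏ i, (ENNReal.ofReal ((∏ k, (1 + |x k|) ^ Ex i k) *
                  (1 + |∑ k, a (jv i) k * x k|) ^ (-(1/3):ℝ))) ^ (1/nn : ℝ) := by
                rw [ENNReal.ofReal_prod_of_nonneg fun i _ => by positivity]
                refine Finset.prod_congr rfl fun i _ => ?_
                rw [ENNReal.ofReal_rpow_of_nonneg (by positivity) (by positivity)]
      _ ≤ ∏ i : Fin (N+1), (∫⁻ x : Fin (N+1) → ℝ, ENNReal.ofReal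
            ((∏ k, (1 + |x k|) ^ Ex i k) *
              (1 + |∑ k, a (jv i) k * x k|) ^ (-(1/3):ℝ))) ^ (1/nn : ℝ) :=
          ENNReal.lintegral_prod_norm_pow_le Finset.univ (fun i _ => hGmeas i) hp
            (fun i _ => by positivity)
      _ < ∞ := ENNReal.prod_lt_top fun i _ =>
          ENNReal.rpow_lt_top_of_nonneg (by positivity) (hG i).ne
end

section
/- Let (x_1,x_2,x_3,y_1,y_2,y_3) be an integer solution of x_1 y_2 y_3 + x_2 y_1 y_3 + x_3 y_1 y_2 = 0 with y_1 y_2 y_3 ≠ 0 and |x_j| ≤ P, |y_j| ≤ P for all j. Write y_1 = u u_2 u_3 w_1, y_2 = u u_1 u_3 w_2, y_3 = u u_1 u_2 w_3 and x_j = w_j v_j with v_1 = u_2 r_3 - u_3 r_2, v_2 = u_3 r_1 - u_1 r_3, v_3 = u_1 r_2 - u_2 r_1 as in the torsor parametrization, with 1 ≤ r_1 ≤ 2u_1. If moreover |w_1 u_2 u_3| ≤ 2 min(|w_2 u_1 u_3|, |w_3 u_1 u_2|), then |r_1 u_2 w_3| ≤ 2P, |r_1 u_3 w_2| ≤ 2P,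 |r_2 u_1 w_3| ≤ 3P, |r_3 u_1 w_2| ≤ 3P, |r_2 u_3 w_1| ≤ 7P, and |r_3 u_2 w_1| ≤ 7P. -/
/-- Lemma 2A: size bounds in the torsor parametrization. Assuming
`u u₁ u₂ |w₃| ≤ P`, `u u₂ u₃ |w₁| ≤ P`, `u u₁ u₃ |w₂| ≤ P`,
`|u₂r₃ - u₃r₂||w₁| ≤ P`, `|u₃r₁ - u₁r₃||w₂| ≤ P`, `|u₁r₂ - u₂r₁||w₃| ≤ P`,
`1 ≤ r₁ ≤ 2u₁`, and `|w₁u₂u₃| ≤ 2·min(|w₂u₁u₃|, |w₃u₁u₂|)`, one has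
`|r₁u₂w₃| ≤ 2P`, `|r₁u₃w₂| ≤ 2P`, `|r₂u₁w₃| ≤ 3P`, `|r₃u₁w₂| ≤ 3P`,
`|r₂u₃w₁| ≤ 7P`, `|r₃u₂w₁| ≤ 7P`. -/
theorem torsor_size_bounds
    (P : ℝ) (u u₁ u₂ u₃ : ℤ) (w₁ w₂ w₃ r₁ r₂ r₃ : ℤ)
    (hu : 0 < u) (hu₁ : 0 < u₁) (hu₂ : 0 < u₂) (hu₃ : 0 < u₃)
    (hw₁ : w₁ ≠ 0) (hw₂ : w₂ ≠ 0) (hw₃ : w₃ ≠ 0)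
    (hr₁ : 1 ≤ r₁) (hr₁' : r₁ ≤ 2 * u₁)
    (hy₁ : ((u * u₂ * u₃ * |w₁| : ℤ) : ℝ) ≤ P)
    (hy₂ : ((u * u₁ * u₃ * |w₂| : ℤ) : ℝ) ≤ P)
    (hy₃ : ((u * u₁ * u₂ * |w₃| : ℤ) : ℝ) ≤ P)
    (hx₁ : ((|u₂ * r₃ - u₃ * r₂| * |w₁| : ℤ) : ℝ) ≤ P)
    (hx₂ : ((|u₃ * r₁ - u₁ * r₃| * |w₂| : ℤ) : ℝ) ≤ P)
    (hx₃ : ((|u₁ * r₂ - u₂ * r₁| * |w₃| : ℤ) : ℝ) ≤ P)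
    (hmin : |w₁ * u₂ * u₃| ≤ 2 * min |w₂ * u₁ * u₃| |w₃ * u₁ * u₂|) :
    ((|r₁ * u₂ * w₃| : ℤ) : ℝ) ≤ 2 * P ∧
    ((|r₁ * u₃ * w₂| : ℤ) : ℝ) ≤ 2 * P ∧
    ((|r₂ * u₁ * w₃| : ℤ) : ℝ) ≤ 3 * P ∧
    ((|r₃ * u₁ * w₂| : ℤ) : ℝ) ≤ 3 * P ∧
    ((|r₂ * u₃ * w₁| : ℤ) : ℝ) ≤ 7 * P ∧
    ((|r₃ * u₂ * w₁| : ℤ) : ℝ) ≤ 7 * P := by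
  have au₁ : |u₁| = u₁ := abs_of_pos hu₁
  have au₂ : |u₂| = u₂ := abs_of_pos hu₂
  have au₃ : |u₃| = u₃ := abs_of_pos hu₃
  have hP : (0:ℝ) ≤ P := le_trans (by positivity) hy₁
  have hw3n : (0:ℤ) ≤ |w₃| := abs_nonneg w₃
  have hw2n : (0:ℤ) ≤ |w₂| := abs_nonneg w₂
  -- key integer bound 1: |r₁ u₂ w₃| ≤ 2 (u u₁ u₂ |w₃|)
  have h1 : |r₁ * u₂ * w₃| ≤ 2 * (u * u₁ * u₂ * |w₃|) := by
    rw [abs_mul, abs_mul, abs_of_pos (by omega : (0:ℤ) < r₁), au₂]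
    nlinarith [mul_nonneg (mul_nonneg (sub_nonneg.mpr hr₁') hu₂.le) hw3n,
      mul_nonneg (mul_nonneg (mul_nonneg (by omega : (0:ℤ) ≤ u - 1) hu₁.le) hu₂.le) hw3n]
  have h2 : |r₁ * u₃ * w₂| ≤ 2 * (u * u₁ * u₃ * |w₂|) := by
    rw [abs_mul, abs_mul, abs_of_pos (by omega : (0:ℤ) < r₁), au₃]
    nlinarith [mul_nonneg (mul_nonneg (sub_nonneg.mpr hr₁') hu₃.le) hw2n,
      mul_nonneg (mul_nonneg (mul_nonneg (by omega : (0:ℤ) ≤ u - 1) hu₁.le) hu₃.le) hw2n]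
  -- triangle inequalities
  have h3 : |r₂ * u₁ * w₃| ≤ |u₁ * r₂ - u₂ * r₁| * |w₃| + |r₁ * u₂ * w₃| := by
    calc |r₂ * u₁ * w₃| = |(u₁ * r₂ - u₂ * r₁) * w₃ + r₁ * u₂ * w₃| := by ring_nf
      _ ≤ |(u₁ * r₂ - u₂ * r₁) * w₃| + |r₁ * u₂ * w₃| := abs_add_le _ _
      _ = |u₁ * r₂ - u₂ * r₁| * |w₃| + |r₁ * u₂ * w₃| := by rw [abs_mul]
  have h4 : |r₃ * u₁ * w₂| ≤ |u₃ * r₁ - u₁ * r₃| * |w₂| + |r₁ * u₃ * w₂| := by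
    calc |r₃ * u₁ * w₂| = |-((u₃ * r₁ - u₁ * r₃) * w₂) + r₁ * u₃ * w₂| := by ring_nf
      _ ≤ |-((u₃ * r₁ - u₁ * r₃) * w₂)| + |r₁ * u₃ * w₂| := abs_add_le _ _
      _ = |u₃ * r₁ - u₁ * r₃| * |w₂| + |r₁ * u₃ * w₂| := by rw [abs_neg, abs_mul]
  -- hmin consequences
  have hmin₃ : |w₁ * u₂ * u₃| ≤ 2 * |w₃ * u₁ * u₂| :=
    hmin.trans (by linarith [min_le_right |w₂ * u₁ * u₃| |w₃ * u₁ * u₂|])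
  have hmin₂ : |w₁ * u₂ * u₃| ≤ 2 * |w₂ * u₁ * u₃| :=
    hmin.trans (by linarith [min_le_left |w₂ * u₁ * u₃| |w₃ * u₁ * u₂|])
  have hm₃' : |w₁ * u₃| ≤ 2 * |w₃ * u₁| := by
    have h : |w₁ * u₃| * u₂ ≤ 2 * |w₃ * u₁| * u₂ := by
      have e₁ : |w₁ * u₃| * u₂ = |w₁ * u₂ * u₃| := by
        simp only [abs_mul, au₂, au₃]; ring
      have e₂ : 2 * |w₃ * u₁| * u₂ = 2 * |w₃ * u₁ * u₂| := by
        simp only [abs_mul, au₁, au₂]; ring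
      rw [e₁, e₂]; exact hmin₃
    exact le_of_mul_le_mul_right h hu₂
  have hm₂' : |w₁ * u₂| ≤ 2 * |w₂ * u₁| := by
    have h : |w₁ * u₂| * u₃ ≤ 2 * |w₂ * u₁| * u₃ := by
      have e₁ : |w₁ * u₂| * u₃ = |w₁ * u₂ * u₃| := by
        simp only [abs_mul, au₂, au₃]
      have e₂ : 2 * |w₂ * u₁| * u₃ = 2 * |w₂ * u₁ * u₃| := by
        simp only [abs_mul, au₁, au₃]; ring
      rw [e₁, e₂]; exact hmin₂
    exact le_of_mul_le_mul_right h hu₃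
  have h5 : |r₂ * u₃ * w₁| ≤ 2 * |r₂ * u₁ * w₃| := by
    have e1 : |r₂ * u₃ * w₁| = |r₂| * |w₁ * u₃| := by
      rw [show r₂ * u₃ * w₁ = r₂ * (w₁ * u₃) by ring, abs_mul]
    have e2 : |r₂ * u₁ * w₃| = |r₂| * |w₃ * u₁| := by
      rw [show r₂ * u₁ * w₃ = r₂ * (w₃ * u₁) by ring, abs_mul]
    rw [e1, e2]
    nlinarith [abs_nonneg r₂]
  have h6 : |r₃ * u₂ * w₁| ≤ 2 * |r₃ * u₁ * w₂| := by
    have e1 : |r₃ * u₂ * w₁| = |r₃| * |w₁ * u₂| := by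
      rw [show r₃ * u₂ * w₁ = r₃ * (w₁ * u₂) by ring, abs_mul]
    have e2 : |r₃ * u₁ * w₂| = |r₃| * |w₂ * u₁| := by
      rw [show r₃ * u₁ * w₂ = r₃ * (w₂ * u₁) by ring, abs_mul]
    rw [e1, e2]
    nlinarith [abs_nonneg r₃]
  have c1 : ((|r₁ * u₂ * w₃| : ℤ) : ℝ) ≤ 2 * P := by
    have h1' : ((|r₁ * u₂ * w₃| : ℤ) : ℝ) ≤ 2 * ((u * u₁ * u₂ * |w₃| : ℤ) : ℝ) := by
      exact_mod_cast h1
    linarith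
  have c2 : ((|r₁ * u₃ * w₂| : ℤ) : ℝ) ≤ 2 * P := by
    have h2' : ((|r₁ * u₃ * w₂| : ℤ) : ℝ) ≤ 2 * ((u * u₁ * u₃ * |w₂| : ℤ) : ℝ) := by
      exact_mod_cast h2
    linarith
  have c3 : ((|r₂ * u₁ * w₃| : ℤ) : ℝ) ≤ 3 * P := by
    have h3' : ((|r₂ * u₁ * w₃| : ℤ) : ℝ) ≤
        ((|u₁ * r₂ - u₂ * r₁| * |w₃| : ℤ) : ℝ) + ((|r₁ * u₂ * w₃| : ℤ) : ℝ) := by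
      exact_mod_cast h3
    linarith
  have c4 : ((|r₃ * u₁ * w₂| : ℤ) : ℝ) ≤ 3 * P := by
    have h4' : ((|r₃ * u₁ * w₂| : ℤ) : ℝ) ≤
        ((|u₃ * r₁ - u₁ * r₃| * |w₂| : ℤ) : ℝ) + ((|r₁ * u₃ * w₂| : ℤ) : ℝ) := by
      exact_mod_cast h4
    linarith
  have c5 : ((|r₂ * u₃ * w₁| : ℤ) : ℝ) ≤ 7 * P := by
    have h5' : ((|r₂ * u₃ * w₁| : ℤ) : ℝ) ≤ 2 * ((|r₂ * u₁ * w₃| : ℤ) : ℝ) := by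
      exact_mod_cast h5
    linarith
  have c6 : ((|r₃ * u₂ * w₁| : ℤ) : ℝ) ≤ 7 * P := by
    have h6' : ((|r₃ * u₂ * w₁| : ℤ) : ℝ) ≤ 2 * ((|r₃ * u₁ * w₂| : ℤ) : ℝ) := by
      exact_mod_cast h6
    linarith
  exact ⟨c1, c2, c3, c4, c5, c6⟩
end
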